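/- arXiv:2006.00353 — 7 statements merged into one kernel-verified Lean document; each statement's English description precedes it below -/
import Mathlib

section
/- If a group G acts regularly on the vertices of a graph Γ (by graph automorphisms), and for a fixed vertex α we set Δ = {g ∈ G : α^g ~ α} ∪ {1}, then for any nontrivial x ∈ G, the number d₁(x) of vertices sent to adjacent vertices by x equals |x^G ∩ Δ| · |C_G(x)|, where x^G is the conjugacy class of x and C_G(x) its centralizer. -/
/-- If a group `G` acts regularly on the vertices of a graph `Γ` by graph automorphisms,
`α` is a fixed vertex, and `Δ = {g : Γ.Adj (g • α) α} ∪ {1}`, then for any nontrivial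
`x ∈ G` the number of vertices sent to adjacent vertices by `x` equals
`|x^G ∩ Δ| ⬝ |C_G(x)|`. -/
theorem regular_action_d1 {V G : Type*} [Fintype V] [Group G] [Fintype G]
    (Γ : SimpleGraph V) [MulAction G V]
    (hpres : ∀ (g : G) (a b : V), Γ.Adj a b ↔ Γ.Adj (g • a) (g • b))
    (htrans : ∀ a b : V, ∃ g : G, g • a = b)
    (hfree : ∀ (g : G) (a : V), g • a = a → g = 1)
    (α : V) (x : G) (hx : x ≠ 1) :
    Set.ncard {β : V | Γ.Adj (x • β) β} =
      Set.ncard ({y : G | ∃ g : G, g * x * g⁻¹ = y} ∩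
          ({g : G | Γ.Adj (g • α) α} ∪ {1})) *
        Nat.card ↥(Subgroup.centralizer ({x} : Set G)) := by
  classical
  set Δ' : Set G := {g : G | Γ.Adj (g • α) α} with hΔ'def
  set T : Set G := {y : G | ∃ g : G, g * x * g⁻¹ = y} ∩ Δ' with hTdef
  -- 1 is not conjugate to x
  have hone : (1 : G) ∉ {y : G | ∃ g : G, g * x * g⁻¹ = y} := by
    rintro ⟨g, hg⟩
    exact hx (by simpa [mul_assoc] using congrArg (fun z => g⁻¹ * z * g) hg)
  have hTset : {y : G | ∃ g : G, g * x * g⁻¹ = y} ∩ (Δ' ∪ {1}) = T := by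
    rw [hTdef, Set.inter_union_distrib_left]
    have h0 : {y : G | ∃ g : G, g * x * g⁻¹ = y} ∩ ({1} : Set G) = ∅ := by
      ext y
      simp only [Set.mem_inter_iff, Set.mem_singleton_iff, Set.mem_empty_iff_false, iff_false,
        not_and]
      rintro hy rfl
      exact hone hy
    rw [h0, Set.union_empty]
  -- the orbit map g ↦ g • α is a bijection
  have hinj : Function.Injective (fun g : G => g • α) := by
    intro g1 g2 h
    simp only at h
    have h2 : (g2⁻¹ * g1) • α = α := by
      rw [mul_smul, h, ← mul_smul, inv_mul_cancel, one_smul]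
    have := hfree _ _ h2
    exact (inv_mul_eq_one.mp this).symm
  let e : G ≃ V := Equiv.ofBijective (fun g => g • α) ⟨hinj, fun v => htrans α v⟩
  -- the centralizer, characterization
  set C := Subgroup.centralizer ({x} : Set G) with hCdef
  have hcent : ∀ c : G, c ∈ C ↔ c⁻¹ * x * c = x := by
    intro c
    rw [hCdef, Subgroup.mem_centralizer_singleton_iff]
    constructor
    · intro h
      rw [mul_assoc, ← h, inv_mul_cancel_left]
    · intro h
      calc c * x = c * (c⁻¹ * x * c) := by rw [h]
        _ = x * c := by group
  -- choose representatives for elements of T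
  have hs_exists : ∀ y : T, ∃ g : G, g⁻¹ * x * g = (y : G) := by
    rintro ⟨y, ⟨g, hg⟩, -⟩
    exact ⟨g⁻¹, by simpa using hg⟩
  choose s hs using hs_exists
  -- the equivalence C × T ≃ {g | g⁻¹xg ∈ T}
  have hmem : ∀ p : ↥C × ↥T, ((p.1 : G) * s p.2)⁻¹ * x * ((p.1 : G) * s p.2) = (p.2 : G) := by
    rintro ⟨c, y⟩
    have hc : (c : G)⁻¹ * x * c = x := (hcent c).mp c.2
    calc ((c : G) * s y)⁻¹ * x * ((c : G) * s y)
        = (s y)⁻¹ * ((c : G)⁻¹ * x * c) * s y := by group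
      _ = (s y)⁻¹ * x * s y := by rw [hc]
      _ = y := hs y
  let ψ : ↥C × ↥T → {g : G | g⁻¹ * x * g ∈ T} :=
    fun p => ⟨(p.1 : G) * s p.2, by
      show (((p.1 : G) * s p.2)⁻¹ * x * ((p.1 : G) * s p.2)) ∈ T
      rw [hmem p]; exact p.2.2⟩
  have hψbij : Function.Bijective ψ := by
    constructor
    · intro p q h
      have h' : (p.1 : G) * s p.2 = (q.1 : G) * s q.2 := congrArg Subtype.val h
      have hy : (p.2 : G) = (q.2 : G) := by rw [← hmem p, ← hmem q, h']
      have hy2 : p.2 = q.2 := Subtype.ext hy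
      have hc : (p.1 : G) = q.1 := by
        rw [hy2] at h'
        exact mul_right_cancel h'
      exact Prod.ext (Subtype.ext hc) hy2
    · rintro ⟨g, hg⟩
      have hg' : g⁻¹ * x * g ∈ T := hg
      refine ⟨(⟨g * (s ⟨g⁻¹ * x * g, hg'⟩)⁻¹, ?_⟩, ⟨g⁻¹ * x * g, hg'⟩), ?_⟩
      · rw [hcent]
        have ht : (s ⟨g⁻¹ * x * g, hg'⟩)⁻¹ * x * s ⟨g⁻¹ * x * g, hg'⟩ = g⁻¹ * x * g :=
          hs ⟨g⁻¹ * x * g, hg'⟩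
        set t := s ⟨g⁻¹ * x * g, hg'⟩ with htdef
        calc (g * t⁻¹)⁻¹ * x * (g * t⁻¹)
            = t * (g⁻¹ * x * g) * t⁻¹ := by group
          _ = t * (t⁻¹ * x * t) * t⁻¹ := by rw [ht]
          _ = x := by group
      · apply Subtype.ext
        show g * (s ⟨g⁻¹ * x * g, hg'⟩)⁻¹ * s ⟨g⁻¹ * x * g, hg'⟩ = g
        rw [inv_mul_cancel_right]
  -- the equivalence {g | g⁻¹xg ∈ T} ≃ {β | Adj (x•β) β}
  have E1prop : ∀ g : G, (g⁻¹ * x * g ∈ T) ↔ Γ.Adj (x • (g • α)) (g • α) := by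
    intro g
    have h1 : g⁻¹ * x * g ∈ T ↔ Γ.Adj ((g⁻¹ * x * g) • α) α := by
      constructor
      · exact fun h => h.2
      · exact fun h => ⟨⟨g⁻¹, by rw [inv_inv]⟩, h⟩
    rw [h1, hpres g]
    simp [smul_smul, mul_assoc]
  have E1 : {g : G | g⁻¹ * x * g ∈ T} ≃ {β : V | Γ.Adj (x • β) β} :=
    Equiv.subtypeEquiv e (fun g => by exact E1prop g)
  rw [hTset]
  calc Set.ncard {β : V | Γ.Adj (x • β) β}
      = Nat.card {β : V | Γ.Adj (x • β) β} := (Nat.card_coe_set_eq _).symm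
    _ = Nat.card {g : G | g⁻¹ * x * g ∈ T} := Nat.card_congr E1.symm
    _ = Nat.card (↥C × ↥T) := Nat.card_congr (Equiv.ofBijective ψ hψbij).symm
    _ = Nat.card ↥C * Nat.card ↥T := Nat.card_prod _ _
    _ = Set.ncard T * Nat.card ↥C := by
        rw [Nat.card_coe_set_eq, Nat.mul_comm]
end

section
/- Let Γ be a (v,k,λ,μ)-strongly regular graph whose adjacency matrix has integer eigenvalues k, ν₂, ν₃ with ν₂ > ν₃, and suppose a group G acts regularly on the vertices of Γ. Fix a vertex α and let Δ = {g ∈ G : α^g ~ α} ∪ {1}. Then for every nontrivial x ∈ G there is an integer u_x such that |x^G ∩ Δ|·|C_G(x)| = k − ν₃ + u_x(ν₂ − ν₃). -/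
open Matrix Polynomial in
theorem aux_trace_dvd {n : Type*} [Fintype n] [DecidableEq n]
    (N : Matrix n n ℤ) (c : ℤ) (hc : c ≠ 0) (r : ℕ) (hr : 1 ≤ r)
    (hN : N ^ (r + 1) = c ^ r • N) : c ∣ N.trace := by
  set N' : Matrix n n ℂ := N.map (Int.cast : ℤ → ℂ) with hN'def
  have hcC : (c : ℂ) ≠ 0 := Int.cast_ne_zero.mpr hc
  -- map the relation to ℂ
  have hmap : N' ^ (r + 1) = (c : ℂ) ^ r • N' := by
    have h1 : ((Int.castRingHom ℂ).mapMatrix N) ^ (r + 1)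
        = (Int.castRingHom ℂ).mapMatrix (c ^ r • N) := by rw [← map_pow, hN]
    have h2 : (Int.castRingHom ℂ).mapMatrix N = N' := rfl
    rw [h2] at h1
    rw [h1]
    ext i j
    simp only [RingHom.mapMatrix_apply, Matrix.map_apply, Matrix.smul_apply, smul_eq_mul,
      Int.coe_castRingHom, hN'def]
    push_cast
    ring
  -- every root of the charpoly of N' satisfies t^(r+1) = c^r * t
  have key : ∀ t ∈ N'.charpoly.roots, t ^ (r + 1) = (c : ℂ) ^ r * t := by
    intro t ht
    have hroot : N'.charpoly.eval t = 0 := Polynomial.isRoot_of_mem_roots ht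
    have hdet : (t • (1 : Matrix n n ℂ) - N').det = 0 := by
      have h3 : ((Polynomial.evalRingHom t).mapMatrix (charmatrix N')).det = 0 := by
        rw [← RingHom.map_det]
        exact hroot
      convert h3 using 2
      ext i j
      by_cases hij : i = j
      · subst hij
        simp [RingHom.mapMatrix_apply, charmatrix_apply_eq, Matrix.smul_apply, Matrix.one_apply]
      · simp [RingHom.mapMatrix_apply, charmatrix_apply_ne _ _ _ hij, Matrix.smul_apply,
          Matrix.one_apply_ne hij]
    obtain ⟨w, hw0, hw⟩ := (Matrix.exists_mulVec_eq_zero_iff).mpr hdet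
    have heig : N' *ᵥ w = t • w := by
      rw [Matrix.sub_mulVec, Matrix.smul_mulVec, Matrix.one_mulVec, sub_eq_zero] at hw
      exact hw.symm
    have hpow : ∀ j : ℕ, N' ^ j *ᵥ w = t ^ j • w := by
      intro j
      induction j with
      | zero => simp
      | succ j ih =>
          rw [pow_succ', ← Matrix.mulVec_mulVec, ih, Matrix.mulVec_smul, heig, smul_smul,
            ← pow_succ]
    have h4 : (t ^ (r + 1)) • w = ((c : ℂ) ^ r * t) • w := by
      rw [← hpow, hmap, Matrix.smul_mulVec, heig, smul_smul]
    obtain ⟨i, hi⟩ := Function.ne_iff.mp hw0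
    have := congrFun h4 i
    simp only [Pi.smul_apply, smul_eq_mul] at this
    exact mul_right_cancel₀ hi this
  -- each (root / c) is an algebraic integer
  have hint : ∀ t ∈ N'.charpoly.roots, IsIntegral ℤ (t * (c : ℂ)⁻¹) := by
    intro t ht
    refine ⟨X ^ (r + 1) - X, Polynomial.monic_X_pow_sub ?_, ?_⟩
    · rw [Polynomial.degree_X]
      exact_mod_cast Nat.lt_succ_of_le hr
    · have : (t * (c : ℂ)⁻¹) ^ (r + 1) = t * (c : ℂ)⁻¹ := by
        rw [mul_pow, key t ht, inv_pow, pow_succ, mul_inv]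
        rw [mul_comm ((c:ℂ)^r) t, mul_assoc, ← mul_assoc ((c:ℂ)^r), mul_inv_cancel₀ (pow_ne_zero _ hcC),
          one_mul]
      simp [Polynomial.eval₂_sub, this]
  -- trace of N' is the sum of the roots
  have htr : (N.trace : ℂ) = N'.charpoly.roots.sum := by
    rw [← Matrix.trace_eq_sum_roots_charpoly]
    simp [Matrix.trace, Matrix.diag, hN'def, Matrix.map_apply]
  have hsum : IsIntegral ℤ ((N.trace : ℂ) * (c : ℂ)⁻¹) := by
    have : (N.trace : ℂ) * (c : ℂ)⁻¹ = (N'.charpoly.roots.map (fun t => t * (c : ℂ)⁻¹)).sum := by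
      rw [htr]
      induction N'.charpoly.roots using Multiset.induction_on with
      | empty => simp
      | cons a s ih => simp [add_mul, *]
    rw [this]
    have hmem : (N'.charpoly.roots.map (fun t => t * (c : ℂ)⁻¹)).sum ∈ integralClosure ℤ ℂ := by
      refine Subalgebra.multiset_sum_mem _ ?_
      intro y hy
      obtain ⟨t, ht, rfl⟩ := Multiset.mem_map.mp hy
      exact (mem_integralClosure_iff ℤ ℂ).mpr (hint t ht)
    exact (mem_integralClosure_iff ℤ ℂ).mp hmem
  -- descend to ℚ and conclude
  have hq : IsIntegral ℤ ((N.trace : ℚ) / (c : ℚ)) := by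
    refine IsIntegral.tower_bot (A := ℚ) (B := ℂ) (RingHom.injective _) ?_
    have : (algebraMap ℚ ℂ) ((N.trace : ℚ) / (c : ℚ)) = (N.trace : ℂ) * (c : ℂ)⁻¹ := by
      rw [eq_ratCast]
      push_cast [div_eq_mul_inv]
      ring
    rw [this]
    exact hsum
  obtain ⟨y, hy⟩ := IsIntegrallyClosed.isIntegral_iff.mp hq
  refine ⟨y, ?_⟩
  have hcQ : (c : ℚ) ≠ 0 := Int.cast_ne_zero.mpr hc
  have h5 : (y : ℚ) = (N.trace : ℚ) / (c : ℚ) := by exact_mod_cast hy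
  have : (N.trace : ℚ) = (c : ℚ) * y := by
    rw [h5]
    field_simp
  exact_mod_cast this


theorem aux_pow {n : Type*} [Fintype n] [DecidableEq n]
    (M P : Matrix n n ℤ) (c : ℤ) (hMM : M * M = c • M) (hcomm : M * P = P * M)
    (r : ℕ) (hr : 1 ≤ r) (hP : P ^ r = 1) :
    (M * P) ^ (r + 1) = c ^ r • (M * P) := by
  have hMpow : ∀ j : ℕ, M ^ (j + 1) = c ^ j • M := by
    intro j
    induction j with
    | zero => simp
    | succ j ih =>
        rw [pow_succ, ih, Matrix.smul_mul, hMM, smul_smul, ← pow_succ]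
  have hcom : Commute M P := hcomm
  rw [hcom.mul_pow, hMpow r, pow_succ, hP, one_mul, Matrix.smul_mul]


open Finset Matrix in
/-- Let `Γ` be a `(v,k,λ,μ)`-strongly regular graph with integer eigenvalues
`k, ν₂ > ν₃`, and let `G` act regularly on the vertices of `Γ`.  Fix a vertex `α`
and let `Δ = {g : Γ.Adj (g • α) α} ∪ {1}`.  Then for every nontrivial `x ∈ G` there
is an integer `u` with `|x^G ∩ Δ|⬝|C_G(x)| = k - ν₃ + u(ν₂ - ν₃)`. -/
theorem regular_action_congruence {V G : Type*} [Fintype V] [Group G] [Fintype G]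
    (Γ : SimpleGraph V) [DecidableRel Γ.Adj] [MulAction G V]
    (v k l m : ℕ) (ν₂ ν₃ : ℤ)
    (h : Γ.IsSRGWith v k l m)
    (hν₂ : (ν₂ : ℝ) = ((l : ℝ) - m + Real.sqrt (((l : ℝ) - m) ^ 2 + 4 * ((k : ℝ) - m))) / 2)
    (hν₃ : (ν₃ : ℝ) = ((l : ℝ) - m - Real.sqrt (((l : ℝ) - m) ^ 2 + 4 * ((k : ℝ) - m))) / 2)
    (h23 : ν₂ > ν₃)
    (hpres : ∀ (g : G) (a b : V), Γ.Adj a b ↔ Γ.Adj (g • a) (g • b))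
    (htrans : ∀ a b : V, ∃ g : G, g • a = b)
    (hfree : ∀ (g : G) (a : V), g • a = a → g = 1)
    (α : V) (x : G) (hx : x ≠ 1) :
    ∃ u : ℤ,
      (Set.ncard ({y : G | ∃ g : G, g * x * g⁻¹ = y} ∩
          ({g : G | Γ.Adj (g • α) α} ∪ {1})) *
        Nat.card ↥(Subgroup.centralizer ({x} : Set G)) : ℤ)
        = (k : ℤ) - ν₃ + u * (ν₂ - ν₃) := by
  classical
  -- ## eigenvalue identities
  set s : ℝ := Real.sqrt (((l : ℝ) - m) ^ 2 + 4 * ((k : ℝ) - m)) with hs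
  have hsub : (ν₂ : ℝ) - ν₃ = s := by rw [hν₂, hν₃]; ring
  have hspos : 0 < s := by
    rw [← hsub]
    have : (ν₃ : ℝ) < ν₂ := by exact_mod_cast h23
    linarith
  have hsq : s ^ 2 = ((l : ℝ) - m) ^ 2 + 4 * ((k : ℝ) - m) :=
    Real.sq_sqrt (le_of_lt (Real.sqrt_pos.mp hspos))
  have hsumR : (ν₂ : ℝ) + ν₃ = (l : ℝ) - m := by rw [hν₂, hν₃]; ring
  have hprodR : (ν₂ : ℝ) * ν₃ = (m : ℝ) - k := by
    rw [hν₂, hν₃]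
    linear_combination (-1/4 : ℝ) * hsq
  have hsum : ν₂ + ν₃ = (l : ℤ) - m := by exact_mod_cast hsumR
  have hprod : ν₂ * ν₃ = (m : ℤ) - k := by exact_mod_cast hprodR
  have hvcard : Fintype.card V = v := h.card
  have hvpos : 0 < v := hvcard ▸ Fintype.card_pos_iff.mpr ⟨α⟩
  -- ## matrices
  set A : Matrix V V ℤ := Γ.adjMatrix ℤ with hA
  set J : Matrix V V ℤ := Matrix.of (fun _ _ => (1 : ℤ)) with hJ
  have hAJ : A * J = (k : ℤ) • J := by
    ext a b
    simp [hA, hJ, SimpleGraph.adjMatrix_mul_apply, h.regular a, Matrix.smul_apply]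
  have hJA : J * A = (k : ℤ) • J := by
    ext a b
    simp [hA, hJ, SimpleGraph.mul_adjMatrix_apply, h.regular b, Matrix.smul_apply]
  have hJJ : J * J = (v : ℤ) • J := by
    ext a b
    simp [hJ, Matrix.mul_apply, Matrix.smul_apply, hvcard]
  have hcompl : Γᶜ.adjMatrix ℤ = J - 1 - A := by
    ext a b
    by_cases hab : a = b
    · subst hab; simp [hA, hJ, Matrix.one_apply]
    · by_cases hadj : Γ.Adj a b
      · simp [hA, hJ, hadj, hab, Matrix.one_apply_ne hab]
      · simp [hA, hJ, hadj, hab, Matrix.one_apply_ne hab]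
  have hAA : A * A = ((k : ℤ) - m) • (1 : Matrix V V ℤ) + ((l : ℤ) - m) • A + (m : ℤ) • J := by
    have h2 := h.matrix_eq (α := ℤ)
    rw [hcompl, pow_two] at h2
    rw [h2]
    match_scalars <;> push_cast <;> ring
  -- feasibility identity
  have hk2 : (k : ℤ) * k = ((k : ℤ) - m) + ((l : ℤ) - m) * k + (m : ℤ) * v := by
    have e1 : (A * A) * J = ((k : ℤ) * k) • J := by
      rw [mul_assoc, hAJ, Matrix.mul_smul, hAJ, smul_smul]
    have e2 : (A * A) * J = (((k : ℤ) - m) + ((l : ℤ) - m) * k + (m : ℤ) * v) • J := by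
      rw [hAA, add_mul, add_mul, Matrix.smul_mul, Matrix.smul_mul, Matrix.smul_mul,
        one_mul, hAJ, hJJ, smul_smul, smul_smul]
      match_scalars <;> ring
    have := congrArg (fun M : Matrix V V ℤ => M α α) (e1.symm.trans e2)
    simpa [hJ, Matrix.smul_apply] using this
  have hfeas : (v : ℤ) * m = ((k : ℤ) - ν₂) * ((k : ℤ) - ν₃) := by
    linear_combination (-1 : ℤ) * hk2 + (k : ℤ) * hsum - hprod
  -- ## the auxiliary matrix C and the permutation matrix P
  set C : Matrix V V ℤ :=
    (v : ℤ) • A - ((v : ℤ) * ν₃) • (1 : Matrix V V ℤ) - ((k : ℤ) - ν₃) • J with hC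
  have hCC : C * C = ((ν₂ - ν₃) * v) • C := by
    rw [hC]
    simp only [sub_mul, mul_sub, Matrix.smul_mul, Matrix.mul_smul, one_mul, mul_one,
      hAA, hAJ, hJA, hJJ]
    match_scalars
    · linear_combination ((v : ℤ))^2 * hprod
    · linear_combination (-(v : ℤ)^2) * hsum
    · linear_combination ((v : ℤ)) * hfeas
  -- permutation matrices
  set Pm : G → Matrix V V ℤ := fun g => Matrix.of (fun a b => if g • b = a then 1 else 0)
    with hPm
  have hPmul : ∀ g g' : G, Pm g * Pm g' = Pm (g * g') := by
    intro g g'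
    ext a b
    simp only [hPm, Matrix.mul_apply, Matrix.of_apply, mul_ite, mul_one, mul_zero,
      ite_mul, zero_mul, one_mul]
    rw [Finset.sum_ite_eq Finset.univ]
    simp [mul_smul]
  have hP1 : Pm 1 = 1 := by
    ext a b
    simp [hPm, Matrix.one_apply, eq_comm]
  have hPpow : ∀ j : ℕ, (Pm x) ^ j = Pm (x ^ j) := by
    intro j
    induction j with
    | zero => simp [hP1]
    | succ j ih => rw [pow_succ, ih, hPmul, ← pow_succ]
  set P : Matrix V V ℤ := Pm x with hP
  have hPord : P ^ (orderOf x) = 1 := by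
    rw [hP, hPpow, pow_orderOf_eq_one, hP1]
  have hmulP : ∀ (M : Matrix V V ℤ) (a b : V), (M * P) a b = M a (x • b) := by
    intro M a b
    simp only [hP, hPm, Matrix.mul_apply, Matrix.of_apply, mul_ite, mul_one, mul_zero]
    rw [Finset.sum_ite_eq Finset.univ]
    simp
  have hPmul' : ∀ (M : Matrix V V ℤ) (a b : V), (P * M) a b = M (x⁻¹ • a) b := by
    intro M a b
    rw [hP, Matrix.mul_apply]
    have hiff : ∀ c : V, (x • c = a) ↔ (c = x⁻¹ • a) := by
      intro c
      constructor
      · rintro rfl; simp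
      · rintro rfl; simp
    simp only [hPm, Matrix.of_apply]
    calc (∑ c : V, (if x • c = a then (1:ℤ) else 0) * M c b)
        = ∑ c : V, (if c = x⁻¹ • a then (1:ℤ) else 0) * M c b := by
          refine Finset.sum_congr rfl fun c _ => ?_
          rw [hiff c]
      _ = M (x⁻¹ • a) b := by
          simp only [ite_mul, one_mul, zero_mul]
          rw [Finset.sum_ite_eq' Finset.univ]
          simp
  have hAP : A * P = P * A := by
    ext a b
    rw [hmulP, hPmul']
    simp only [hA, SimpleGraph.adjMatrix_apply]
    congr 1
    rw [eq_iff_iff]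
    rw [hpres x⁻¹ a (x • b)]
    simp
  have hJP : J * P = P * J := by
    ext a b
    rw [hmulP, hPmul']
    simp [hJ]
  have hIP : (1 : Matrix V V ℤ) * P = P * 1 := by rw [one_mul, mul_one]
  have hCP : C * P = P * C := by
    rw [hC]
    simp only [sub_mul, mul_sub, Matrix.smul_mul, Matrix.mul_smul, hAP, hJP, one_mul, mul_one]
  -- ## powers and trace
  set r : ℕ := orderOf x with hrdef
  have hrpos : 1 ≤ r := orderOf_pos x
  have hn0 : (ν₂ - ν₃) ≠ 0 := by omega
  have hv0 : (v : ℤ) ≠ 0 := by exact_mod_cast hvpos.ne'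
  have hc0 : (ν₂ - ν₃) * (v : ℤ) ≠ 0 := mul_ne_zero hn0 hv0
  have hMpow : (C * P) ^ (r + 1) = ((ν₂ - ν₃) * (v : ℤ)) ^ r • (C * P) :=
    aux_pow C P _ hCC hCP r hrpos hPord
  have hdvd : ((ν₂ - ν₃) * (v : ℤ)) ∣ (C * P).trace :=
    aux_trace_dvd (C * P) _ hc0 r hrpos hMpow
  have hfix : ∀ a : V, a ≠ x • a := by
    intro a ha
    exact hx (hfree x a ha.symm)
  set D : ℕ := (Finset.univ.filter (fun a : V => Γ.Adj a (x • a))).card with hD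
  have htr : (C * P).trace = (v : ℤ) * ((D : ℤ) - ((k : ℤ) - ν₃)) := by
    have hent : ∀ a : V,
        (C * P) a a = (v : ℤ) * (if Γ.Adj a (x • a) then 1 else 0) - ((k : ℤ) - ν₃) := by
      intro a
      rw [hmulP, hC]
      simp only [Matrix.sub_apply, Matrix.smul_apply, hA, hJ, SimpleGraph.adjMatrix_apply,
        Matrix.one_apply_ne (hfix a), Matrix.of_apply, smul_eq_mul]
      ring
    rw [Matrix.trace]
    calc ∑ a : V, (C * P).diag a = ∑ a : V, ((v : ℤ) * (if Γ.Adj a (x • a) then 1 else 0)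
          - ((k : ℤ) - ν₃)) := Finset.sum_congr rfl fun a _ => hent a
      _ = (v : ℤ) * ((D : ℤ) - ((k : ℤ) - ν₃)) := by
          rw [Finset.sum_sub_distrib, ← Finset.mul_sum, Finset.sum_boole, Finset.sum_const,
            Finset.card_univ, hvcard, ← hD]
          push_cast
          ring
  have hdvd2 : (ν₂ - ν₃) ∣ ((D : ℤ) - ((k : ℤ) - ν₃)) := by
    rw [htr] at hdvd
    rw [mul_comm ((ν₂ - ν₃)) ((v : ℤ))] at hdvd
    exact (mul_dvd_mul_iff_left hv0).mp hdvd
  obtain ⟨u, hu⟩ := hdvd2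
  refine ⟨u, ?_⟩
  -- ## counting
  set Sfin : Finset G := Finset.univ.filter
      (fun y : G => (∃ g : G, g * x * g⁻¹ = y) ∧ Γ.Adj (y • α) α) with hSfin
  have hSset : ({y : G | ∃ g : G, g * x * g⁻¹ = y} ∩
      ({g : G | Γ.Adj (g • α) α} ∪ {1})) = ↑Sfin := by
    ext y
    simp only [hSfin, Set.mem_inter_iff, Set.mem_setOf_eq, Set.mem_union,
      Set.mem_singleton_iff, Finset.coe_filter, Finset.mem_univ, true_and]
    constructor
    · rintro ⟨⟨g, rfl⟩, hmem⟩
      refine ⟨⟨g, rfl⟩, ?_⟩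
      rcases hmem with h1 | h1
      · exact h1
      · exfalso
        apply hx
        have h2 := congrArg (fun z => g⁻¹ * z * g) h1
        simpa [mul_assoc] using h2
    · rintro ⟨hg, hadj⟩
      exact ⟨hg, Or.inl hadj⟩
  set Cfin : Finset G := Finset.univ.filter (fun c : G => c * x = x * c) with hCfin
  have hCcard : Nat.card ↥(Subgroup.centralizer ({x} : Set G)) = Cfin.card := by
    have hcset : ((Subgroup.centralizer ({x} : Set G) : Subgroup G) : Set G) = ↑Cfin := by
      ext c
      simp [hCfin, Subgroup.mem_centralizer_singleton_iff]
    rw [← SetLike.coe_sort_coe, Nat.card_coe_set_eq, hcset, Set.ncard_coe_finset]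
  set T : Finset G := Finset.univ.filter (fun g : G => Γ.Adj ((g * x * g⁻¹) • α) α) with hT
  have hfib : ∀ y ∈ Sfin, (T.filter (fun g => g * x * g⁻¹ = y)).card = Cfin.card := by
    intro y hy
    rw [hSfin] at hy
    simp only [Finset.mem_filter, Finset.mem_univ, true_and] at hy
    obtain ⟨⟨g₀, hg₀⟩, hadj⟩ := hy
    have hTf : T.filter (fun g => g * x * g⁻¹ = y)
        = Finset.univ.filter (fun g => g * x * g⁻¹ = y) := by
      ext g
      simp only [hT, Finset.filter_filter, Finset.mem_filter, Finset.mem_univ, true_and]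
      constructor
      · rintro ⟨-, h2⟩; exact h2
      · intro h2; exact ⟨by rw [h2]; exact hadj, h2⟩
    rw [hTf]
    apply Finset.card_bij (fun (g : G) _ => g₀⁻¹ * g)
    · intro g hg
      simp only [Finset.mem_filter, Finset.mem_univ, true_and] at hg
      rw [hCfin]
      simp only [Finset.mem_filter, Finset.mem_univ, true_and]
      have hcc : (g₀⁻¹ * g) * x * (g₀⁻¹ * g)⁻¹ = x := by
        have hid : (g₀⁻¹ * g) * x * (g₀⁻¹ * g)⁻¹ = g₀⁻¹ * (g * x * g⁻¹) * g₀ := by group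
        rw [hid, hg, ← hg₀]
        group
      calc (g₀⁻¹ * g) * x = ((g₀⁻¹ * g) * x * (g₀⁻¹ * g)⁻¹) * (g₀⁻¹ * g) := by group
        _ = x * (g₀⁻¹ * g) := by rw [hcc]
    · intro g₁ h₁ g₂ h₂ hgg
      exact mul_left_cancel hgg
    · intro c hc
      rw [hCfin] at hc
      simp only [Finset.mem_filter, Finset.mem_univ, true_and] at hc
      have hcx : c * x * c⁻¹ = x := by rw [hc]; group
      refine ⟨g₀ * c, ?_, by group⟩
      simp only [Finset.mem_filter, Finset.mem_univ, true_and]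
      have hid2 : (g₀ * c) * x * (g₀ * c)⁻¹ = g₀ * (c * x * c⁻¹) * g₀⁻¹ := by group
      rw [hid2, hcx, hg₀]
  have hTcard : T.card = Sfin.card * Cfin.card := by
    rw [Finset.card_eq_sum_card_fiberwise (f := fun g => g * x * g⁻¹) (t := Sfin) ?_]
    · rw [Finset.sum_congr rfl hfib, Finset.sum_const, smul_eq_mul]
    · intro g hg
      rw [hT] at hg
      simp only [Finset.coe_filter, Finset.mem_coe, Finset.mem_filter, Finset.mem_univ, true_and,
        Set.mem_setOf_eq] at hg
      rw [hSfin]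
      simp only [Finset.mem_coe, Finset.mem_filter, Finset.mem_univ, true_and]
      exact ⟨⟨g, rfl⟩, hg⟩
  have hiff2 : ∀ g : G, Γ.Adj ((g * x * g⁻¹) • α) α ↔ Γ.Adj (g⁻¹ • α) (x • (g⁻¹ • α)) := by
    intro g
    rw [hpres g⁻¹ ((g * x * g⁻¹) • α) α, Γ.adj_comm]
    rw [smul_smul, show g⁻¹ * (g * x * g⁻¹) = x * g⁻¹ by group, mul_smul]
  have hTD : T.card = D := by
    rw [hD]
    apply Finset.card_bij (fun (g : G) _ => g⁻¹ • α)
    · intro g hg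
      rw [hT] at hg
      simp only [Finset.mem_filter, Finset.mem_univ, true_and] at hg ⊢
      exact (hiff2 g).mp hg
    · intro g₁ h₁ g₂ h₂ hgg
      have h7 : (g₂ * g₁⁻¹) • α = α := by
        rw [mul_smul, hgg, smul_inv_smul]
      have h8 := hfree _ _ h7
      have := mul_inv_eq_one.mp h8
      exact this.symm
    · intro a ha
      simp only [Finset.mem_filter, Finset.mem_univ, true_and] at ha
      obtain ⟨g, hg⟩ := htrans α a
      refine ⟨g⁻¹, ?_, by simpa using hg⟩
      rw [hT]
      simp only [Finset.mem_filter, Finset.mem_univ, true_and]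
      rw [hiff2 g⁻¹]
      simpa [hg] using ha
  have hDeq : (D : ℤ) = (Sfin.card : ℤ) * (Cfin.card : ℤ) := by
    rw [← hTD, hTcard]
    push_cast
    ring
  rw [hSset, Set.ncard_coe_finset, hCcard]
  push_cast
  linear_combination hu - hDeq
end

section
/- Let Γ be a (v,k,λ,μ)-strongly regular graph with integer eigenvalues k, ν₂ > ν₃ and μ > 0, and let G act regularly on the vertices of Γ. Fix a vertex α, let Δ = {g ∈ G : α^g ~ α} ∪ {1} and Δᶜ = G \ Δ. Then for every nontrivial x ∈ G there is an integer u_x with |x^G ∩ Δᶜ|·|C_G(x)| = ν₂ν₃(ν₂+1)(ν₃+1)/μ − ν₂(ν₃+1) − u_x(ν₂ − ν₃). -/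
open Polynomial Matrix Finset

lemma aux_root_int {N : Type*} [Fintype N] [DecidableEq N] (M : Matrix N N ℂ)
    (s : ℕ) (hs : 2 ≤ s) (hM : M ^ s = M) {z : ℂ} (hz : z ∈ M.charpoly.roots) :
    IsIntegral ℤ z := by
  have hroot : M.charpoly.eval z = 0 := Polynomial.isRoot_of_mem_roots hz
  have hdet : (z • (1 : Matrix N N ℂ) - M).det = 0 := by
    have hmap : (charmatrix M).map (evalRingHom z) = z • (1 : Matrix N N ℂ) - M := by
      ext i j
      by_cases hij : i = j <;>
        simp [charmatrix_apply, Matrix.diagonal_apply, hij, Matrix.one_apply,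
          Matrix.smul_apply, Matrix.sub_apply]
    have := (evalRingHom z).map_det (charmatrix M)
    rw [RingHom.mapMatrix_apply, hmap] at this
    rw [← this]
    simpa [Matrix.charpoly] using hroot
  obtain ⟨w, hw0, hww⟩ := Matrix.exists_mulVec_eq_zero_iff.mpr hdet
  have hev : M.mulVec w = z • w := by
    have h0 : (z • (1 : Matrix N N ℂ)).mulVec w - M.mulVec w = 0 := by
      rw [← Matrix.sub_mulVec, hww]
    have h1 : (z • (1 : Matrix N N ℂ)).mulVec w = z • w := by
      rw [Matrix.smul_mulVec, Matrix.one_mulVec]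
    rw [h1] at h0
    exact (sub_eq_zero.mp h0).symm
  have hpow : ∀ j : ℕ, (M ^ j).mulVec w = z ^ j • w := by
    intro j
    induction j with
    | zero => simp
    | succ j ih =>
        rw [pow_succ, ← Matrix.mulVec_mulVec, hev, Matrix.mulVec_smul, ih,
          smul_smul, pow_succ]
        ring_nf
  have hzz : z ^ s = z := by
    obtain ⟨i, hi⟩ := Function.ne_iff.mp hw0
    have := congrFun (by rw [← hpow s, hM, hev] : z ^ s • w = z • w) i
    simp only [Pi.smul_apply, smul_eq_mul] at this
    exact mul_right_cancel₀ (by simpa using hi) this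
  refine ⟨X ^ s - X, Polynomial.monic_X_pow_sub ?_, by simp [hzz]⟩
  rw [Polynomial.degree_X]
  exact_mod_cast lt_of_lt_of_le one_lt_two (by exact_mod_cast hs)

lemma aux_trace_int {N : Type*} [Fintype N] [DecidableEq N] (M : Matrix N N ℚ)
    (s : ℕ) (hs : 2 ≤ s) (hM : M ^ s = M) : ∃ t : ℤ, M.trace = (t : ℚ) := by
  set f : ℚ →+* ℂ := algebraMap ℚ ℂ
  have hMc : (f.mapMatrix M) ^ s = f.mapMatrix M := by
    rw [← map_pow, hM]
  have htr : (f.mapMatrix M).trace = f M.trace := by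
    simp [Matrix.trace, Matrix.diag, RingHom.mapMatrix_apply, Matrix.map_apply]
  have hint : IsIntegral ℤ ((f.mapMatrix M).trace) := by
    rw [Matrix.trace_eq_sum_roots_charpoly]
    have : ∀ z ∈ (f.mapMatrix M).charpoly.roots, IsIntegral ℤ z :=
      fun z hz => aux_root_int _ s hs hMc hz
    revert this
    generalize (f.mapMatrix M).charpoly.roots = R
    refine Multiset.induction_on R (by simp [isIntegral_zero]) ?_
    intro a R ih hall
    rw [Multiset.sum_cons]
    exact (hall a (Multiset.mem_cons_self a R)).add
      (ih fun z hz => hall z (Multiset.mem_cons_of_mem hz))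
  rw [htr] at hint
  have : IsIntegral ℤ M.trace :=
    (isIntegral_algHom_iff f.toIntAlgHom (fun a b hab => f.injective hab)).mp hint
  obtain ⟨t, ht⟩ := IsIntegrallyClosed.isIntegral_iff.mp this
  exact ⟨t, ht.symm⟩

set_option maxHeartbeats 2000000 in
/-- Let `Γ` be a `(v,k,λ,μ)`-strongly regular graph with integer eigenvalues
`k, ν₂ > ν₃` and `μ > 0`, and let `G` act regularly on the vertices of `Γ`.  Fix a
vertex `α`, let `Δ = {g : Γ.Adj (g • α) α} ∪ {1}` and `Δᶜ = G \ Δ`.  Then for every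
nontrivial `x ∈ G` there is an integer `u` with
`|x^G ∩ Δᶜ|⬝|C_G(x)| = ν₂ν₃(ν₂+1)(ν₃+1)/μ - ν₂(ν₃+1) - u(ν₂-ν₃)`. -/
theorem regular_action_complement_count {V G : Type*} [Fintype V] [Group G] [Fintype G]
    (Γ : SimpleGraph V) [DecidableRel Γ.Adj] [MulAction G V]
    (v k l m : ℕ) (ν₂ ν₃ : ℤ)
    (h : Γ.IsSRGWith v k l m) (hm : 0 < m)
    (hν₂ : (ν₂ : ℝ) = ((l : ℝ) - m + Real.sqrt (((l : ℝ) - m) ^ 2 + 4 * ((k : ℝ) - m))) / 2)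
    (hν₃ : (ν₃ : ℝ) = ((l : ℝ) - m - Real.sqrt (((l : ℝ) - m) ^ 2 + 4 * ((k : ℝ) - m))) / 2)
    (h23 : ν₂ > ν₃)
    (hpres : ∀ (g : G) (a b : V), Γ.Adj a b ↔ Γ.Adj (g • a) (g • b))
    (htrans : ∀ a b : V, ∃ g : G, g • a = b)
    (hfree : ∀ (g : G) (a : V), g • a = a → g = 1)
    (α : V) (x : G) (hx : x ≠ 1) :
    ∃ u : ℤ,
      ((Set.ncard ({y : G | ∃ g : G, g * x * g⁻¹ = y} ∩
          (({g : G | Γ.Adj (g • α) α} ∪ {1}) : Set G)ᶜ) *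
        Nat.card ↥(Subgroup.centralizer ({x} : Set G)) : ℕ) : ℝ)
        = ((ν₂ : ℝ) * ν₃ * (ν₂ + 1) * (ν₃ + 1)) / m
            - (ν₂ : ℝ) * (ν₃ + 1) - (u : ℝ) * ((ν₂ : ℝ) - ν₃) := by
  classical
  -- ## Scalar facts
  have hcardV : Fintype.card V = v := h.card
  have hv0 : 0 < v := hcardV ▸ Fintype.card_pos_iff.mpr ⟨α⟩
  have hsR : (ν₂ : ℝ) - ν₃ = Real.sqrt (((l : ℝ) - m) ^ 2 + 4 * ((k : ℝ) - m)) := by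
    rw [hν₂, hν₃]; ring
  have hnR : (0:ℝ) < (ν₂ : ℝ) - ν₃ := by exact_mod_cast sub_pos.mpr h23
  have hrad : ((ν₂:ℝ) - ν₃)^2 = ((l : ℝ) - m) ^ 2 + 4 * ((k : ℝ) - m) := by
    rw [hsR]
    apply Real.sq_sqrt
    by_contra hcon
    push_neg at hcon
    rw [hsR] at hnR
    rw [Real.sqrt_eq_zero_of_nonpos hcon.le] at hnR
    exact lt_irrefl 0 hnR
  have hsumR : (ν₂ : ℝ) + ν₃ = (l : ℝ) - m := by rw [hν₂, hν₃]; ring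
  have hprodR : (ν₂ : ℝ) * ν₃ = (m : ℝ) - k := by nlinarith [hrad, hsumR]
  have hsumZ : ν₂ + ν₃ = (l : ℤ) - m := by exact_mod_cast hsumR
  have hprodZ : ν₂ * ν₃ = (m : ℤ) - k := by exact_mod_cast hprodR
  have hsQ : (ν₂ : ℚ) + ν₃ = (l : ℚ) - m := by exact_mod_cast hsumZ
  have hpQ : (ν₂ : ℚ) * ν₃ = (m : ℚ) - k := by exact_mod_cast hprodZ
  have hnQ : ((ν₂ : ℚ) - ν₃) ≠ 0 :=
    sub_ne_zero.mpr (fun hc => h23.ne' (by exact_mod_cast hc))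
  have hvQ : ((v:ℚ)) ≠ 0 := Nat.cast_ne_zero.mpr hv0.ne'
  have hmQ : ((m:ℚ)) ≠ 0 := Nat.cast_ne_zero.mpr hm.ne'
  -- ## Matrices over ℚ
  set A : Matrix V V ℚ := Γ.adjMatrix ℚ with hA
  set J : Matrix V V ℚ := Matrix.of (fun _ _ => (1:ℚ)) with hJ
  have hcompl : (Γᶜ).adjMatrix ℚ = J - 1 - A := by
    ext i j
    by_cases hij : i = j
    · simp [hij, hJ, Matrix.one_apply, hA]
    · by_cases hadj : Γ.Adj i j <;>
        simp [hij, hadj, hJ, Matrix.one_apply, hA, SimpleGraph.compl_adj]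
  have hA2 : A * A = ((ν₂:ℚ) + ν₃) • A + ((k:ℚ) - m) • 1 + (m:ℚ) • J := by
    have h1 := h.matrix_eq (α := ℚ)
    rw [pow_two, hcompl] at h1
    rw [h1]
    match_scalars <;> push_cast <;> linarith [hsQ]
  have hAJ : A * J = (k:ℚ) • J := by
    ext a b
    rw [hA, SimpleGraph.adjMatrix_mul_apply]
    simp only [hJ, Matrix.of_apply, Matrix.smul_apply, smul_eq_mul, mul_one, Finset.sum_const,
      nsmul_eq_mul, SimpleGraph.card_neighborFinset_eq_degree, h.regular a]
  have hJA : J * A = (k:ℚ) • J := by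
    ext a b
    rw [hA, SimpleGraph.mul_adjMatrix_apply]
    simp only [hJ, Matrix.of_apply, Matrix.smul_apply, smul_eq_mul, mul_one, Finset.sum_const,
      nsmul_eq_mul, SimpleGraph.card_neighborFinset_eq_degree, h.regular b]
  have hJJ : J * J = (v:ℚ) • J := by
    ext a b
    simp [Matrix.mul_apply, hJ, Matrix.smul_apply, hcardV]
  -- the key parameter identity
  have hkQ : (m:ℚ) * v = ((k:ℚ) - ν₂) * ((k:ℚ) - ν₃) := by
    have e1 : (A * A) * J = (((ν₂:ℚ) + ν₃) * k) • J + ((k:ℚ) - m) • J + ((m:ℚ) * v) • J := by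
      rw [hA2, add_mul, add_mul, Matrix.smul_mul, Matrix.smul_mul, Matrix.smul_mul,
        hAJ, Matrix.one_mul, hJJ, smul_smul, smul_smul]
    have e2 : (A * A) * J = ((k:ℚ) * k) • J := by
      rw [Matrix.mul_assoc, hAJ, Matrix.mul_smul, hAJ, smul_smul]
    have e3 := Matrix.ext_iff.mpr (e2.symm.trans e1) α α
    simp only [Matrix.add_apply, Matrix.smul_apply, hJ, Matrix.of_apply, smul_eq_mul,
      mul_one] at e3
    linear_combination -e3 - hpQ

  -- ## permutation matrix
  set P : Matrix V V ℚ := Matrix.of (fun a b => if x • b = a then (1:ℚ) else 0) with hP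
  have hPmul : ∀ (Mm : Matrix V V ℚ) (a b : V), (P * Mm) a b = Mm (x⁻¹ • a) b := by
    intro Mm a b
    rw [Matrix.mul_apply, Finset.sum_eq_single (x⁻¹ • a)]
    · rw [hP]; simp [smul_inv_smul]
    · intro c _ hne
      rw [hP]
      simp only [Matrix.of_apply]
      rw [if_neg (fun hc => hne (by rw [← hc, inv_smul_smul])), zero_mul]
    · exact fun hmem => absurd (Finset.mem_univ _) hmem
  have hmulP : ∀ (Mm : Matrix V V ℚ) (a b : V), (Mm * P) a b = Mm a (x • b) := by
    intro Mm a b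
    rw [Matrix.mul_apply, Finset.sum_eq_single (x • b)]
    · rw [hP]; simp
    · intro c _ hne
      rw [hP]
      simp only [Matrix.of_apply]
      rw [if_neg (fun hc => hne hc.symm), mul_zero]
    · exact fun hmem => absurd (Finset.mem_univ _) hmem
  have hPA : P * A = A * P := by
    ext a b
    rw [hPmul, hmulP, hA]
    simp only [SimpleGraph.adjMatrix_apply]
    have hiff : Γ.Adj (x⁻¹ • a) b ↔ Γ.Adj a (x • b) := by
      rw [hpres x, smul_inv_smul]
    simp [hiff]
  have hPJ : P * J = J := by
    ext a b
    rw [hPmul, hJ]; simp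
  have hJP : J * P = J := by
    ext a b
    rw [hmulP, hJ]; simp
  have hPpow : ∀ j : ℕ, P ^ (j+1) = Matrix.of (fun a b => if x ^ (j+1) • b = a then (1:ℚ) else 0) := by
    intro j
    induction j with
    | zero => ext a b; simp [hP]
    | succ j ih =>
        ext a b
        rw [pow_succ, hmulP, ih]
        simp only [Matrix.of_apply]
        rw [smul_smul, ← pow_succ]
  have hPr : P ^ (orderOf x) = 1 := by
    obtain ⟨j, hj⟩ : ∃ j, orderOf x = j + 1 :=
      ⟨orderOf x - 1, (Nat.succ_pred_eq_of_pos (orderOf_pos x)).symm⟩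
    rw [hj, hPpow, ← hj]
    ext a b
    rw [pow_orderOf_eq_one x]
    simp [Matrix.one_apply, eq_comm]
  have htrP : P.trace = 0 := by
    rw [Matrix.trace]
    apply Finset.sum_eq_zero
    intro a _
    rw [Matrix.diag]
    rw [hP]
    simp only [Matrix.of_apply]
    rw [if_neg (fun hc => hx (hfree x a hc))]
  -- ## the projection-type matrix
  set d : ℕ := (univ.filter fun a : V => Γ.Adj (x • a) a).card with hd
  have htrPA : (P * A).trace = (d : ℚ) := by
    have : ∀ a : V, (P * A) a a = A (x⁻¹ • a) a := fun a => hPmul A a a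
    rw [Matrix.trace]
    calc ∑ a, (P * A).diag a = ∑ a, A (x⁻¹ • a) a := by
          apply Finset.sum_congr rfl; intro a _; rw [Matrix.diag, this a]
      _ = ∑ b, A (x⁻¹ • ((MulAction.toPerm x) b)) ((MulAction.toPerm x) b) :=
          (Equiv.sum_comp (MulAction.toPerm x) (fun a => A (x⁻¹ • a) a)).symm
      _ = ∑ b, A b (x • b) := by
          apply Finset.sum_congr rfl
          intro b _
          have hb : (MulAction.toPerm x) b = x • b := rfl
          rw [hb, inv_smul_smul]
      _ = (d : ℚ) := by
          rw [hd, hA]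
          simp only [SimpleGraph.adjMatrix_apply]
          rw [Finset.sum_boole]
          congr 2
          apply Finset.filter_congr
          intro a _
          exact Γ.adj_comm a (x • a)

  -- ## idempotent E and its trace
  set C : Matrix V V ℚ := A - (ν₃:ℚ) • 1 with hCdef
  set cc : ℚ := ((k:ℚ) - ν₃) / v with hccdef
  set B : Matrix V V ℚ := C - cc • J with hBdef
  have hC2 : C * C = ((ν₂:ℚ) - ν₃) • C + (m:ℚ) • J := by
    rw [hCdef]
    simp only [sub_mul, mul_sub, smul_mul_assoc, mul_smul_comm, Matrix.one_mul,
      Matrix.mul_one, hA2]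
    match_scalars
    all_goals try ring
    all_goals push_cast
    all_goals linear_combination hpQ
  have hCJ : C * J = ((k:ℚ) - ν₃) • J := by
    rw [hCdef]
    simp only [sub_mul, smul_mul_assoc, Matrix.one_mul, hAJ]
    match_scalars <;> ring
  have hJC : J * C = ((k:ℚ) - ν₃) • J := by
    rw [hCdef]
    simp only [mul_sub, mul_smul_comm, Matrix.mul_one, hJA]
    match_scalars <;> ring
  have hB2 : B * B = ((ν₂:ℚ) - ν₃) • B := by
    rw [hBdef]
    simp only [sub_mul, mul_sub, smul_mul_assoc, mul_smul_comm, hC2, hCJ, hJC, hJJ]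
    match_scalars
    all_goals try ring
    all_goals try rw [hccdef]
    all_goals try field_simp
    all_goals ring_nf
    all_goals linear_combination hkQ
  set E : Matrix V V ℚ := ((ν₂:ℚ) - ν₃)⁻¹ • B with hEdef
  have hEE : E * E = E := by
    rw [hEdef]
    simp only [smul_mul_assoc, mul_smul_comm, hB2, smul_smul]
    congr 1
    field_simp
  have hPC : P * C = C * P := by
    rw [hCdef]
    simp only [mul_sub, sub_mul, mul_smul_comm, smul_mul_assoc, Matrix.mul_one,
      Matrix.one_mul, hPA]
  have hPB : P * B = B * P := by
    rw [hBdef]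
    simp only [mul_sub, sub_mul, mul_smul_comm, smul_mul_assoc, hPC, hPJ, hJP]
  have hPE : P * E = E * P := by
    rw [hEdef]
    simp only [mul_smul_comm, smul_mul_assoc, hPB]
  set M : Matrix V V ℚ := P * E with hMdef
  have hMj : ∀ j : ℕ, M ^ (j+1) = P ^ (j+1) * E := by
    intro j
    induction j with
    | zero => rw [pow_one, pow_one]
    | succ j ih =>
        calc M ^ (j+2) = M ^ (j+1) * M := by rw [pow_succ]
          _ = (P ^ (j+1) * E) * (P * E) := by rw [ih, hMdef]
          _ = P ^ (j+1) * ((E * P) * E) := by rw [Matrix.mul_assoc, Matrix.mul_assoc]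
          _ = P ^ (j+1) * (P * (E * E)) := by rw [← hPE, Matrix.mul_assoc]
          _ = (P ^ (j+1) * P) * E := by rw [hEE, Matrix.mul_assoc]
          _ = P ^ (j+2) * E := by rw [← pow_succ]
  have hMs : M ^ (orderOf x + 1) = M := by
    obtain ⟨j, hj⟩ : ∃ j, orderOf x = j + 1 :=
      ⟨orderOf x - 1, (Nat.succ_pred_eq_of_pos (orderOf_pos x)).symm⟩
    rw [hMj (orderOf x), pow_succ, hPr, Matrix.one_mul, hMdef]
  -- trace computations
  have htrJ : J.trace = (v:ℚ) := by
    rw [Matrix.trace]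
    simp [hJ, Matrix.diag, hcardV]
  have htrC : (P * C).trace = (d:ℚ) := by
    rw [hCdef]
    simp only [mul_sub, mul_smul_comm, Matrix.mul_one, Matrix.trace_sub,
      Matrix.trace_smul, htrPA, htrP]
    simp
  have htrB : (P * B).trace = (d:ℚ) - ((k:ℚ) - ν₃) := by
    rw [hBdef]
    simp only [mul_sub, mul_smul_comm, hPJ, Matrix.trace_sub, Matrix.trace_smul,
      htrC, htrJ]
    rw [hccdef, smul_eq_mul, div_mul_cancel₀ _ hvQ]
  have htrM : M.trace = ((ν₂:ℚ) - ν₃)⁻¹ * ((d:ℚ) - ((k:ℚ) - ν₃)) := by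
    rw [hMdef, hEdef]
    simp only [mul_smul_comm, Matrix.trace_smul, htrB, smul_eq_mul]
  -- integrality of the trace
  obtain ⟨t, ht⟩ := aux_trace_int M (orderOf x + 1)
    (by have := orderOf_pos x; omega) hMs
  have hdQ : (d:ℚ) = ((k:ℚ) - ν₃) + t * ((ν₂:ℚ) - ν₃) := by
    rw [htrM] at ht
    field_simp at ht
    linarith [ht]
  have hdZ : (d:ℤ) = ((k:ℤ) - ν₃) + t * (ν₂ - ν₃) := by exact_mod_cast hdQ

  -- ## counting
  set c : ℕ := Nat.card ↥(Subgroup.centralizer ({x} : Set G)) with hcdef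
  have hfiber : ∀ g₀ : G, (univ.filter fun g : G => g * x * g⁻¹ = g₀ * x * g₀⁻¹).card = c := by
    intro g₀
    have hcent : c = (univ.filter fun g : G => g ∈ Subgroup.centralizer ({x} : Set G)).card := by
      rw [hcdef, Nat.card_eq_fintype_card, Fintype.card_subtype]
    rw [hcent]
    apply (Finset.card_bij (fun (g : G) _ => g₀ * g) ?_ ?_ ?_).symm
    · intro g hg
      simp only [Finset.mem_filter, Finset.mem_univ, true_and] at hg ⊢
      have hgx : g * x = x * g := Subgroup.mem_centralizer_singleton_iff.mp hg
      have hfix : g * x * g⁻¹ = x := by rw [hgx, mul_assoc, mul_inv_cancel, mul_one]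
      have hre : g₀ * g * x * (g₀ * g)⁻¹ = g₀ * (g * x * g⁻¹) * g₀⁻¹ := by group
      rw [hre, hfix]
    · intro a _ b _ hab
      exact mul_left_cancel hab
    · intro g' hg'
      simp only [Finset.mem_filter, Finset.mem_univ, true_and] at hg'
      refine ⟨g₀⁻¹ * g', ?_, by group⟩
      simp only [Finset.mem_filter, Finset.mem_univ, true_and]
      rw [Subgroup.mem_centralizer_singleton_iff]
      have h1 : (g₀⁻¹ * g') * x * (g₀⁻¹ * g')⁻¹ = g₀⁻¹ * (g' * x * g'⁻¹) * g₀ := by group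
      rw [hg'] at h1
      have h2 : g₀⁻¹ * (g₀ * x * g₀⁻¹) * g₀ = x := by group
      rw [h2] at h1
      calc (g₀⁻¹ * g') * x = ((g₀⁻¹ * g') * x * (g₀⁻¹ * g')⁻¹) * (g₀⁻¹ * g') := by group
        _ = x * (g₀⁻¹ * g') := by rw [h1]
  have hGv : Fintype.card G = v := by
    rw [← hcardV]
    exact Fintype.card_of_bijective (f := fun g : G => g • α)
      ⟨fun g g' hgg => by
        have hgg' : g • α = g' • α := hgg
        have h1 : (g'⁻¹ * g) • α = α := by rw [mul_smul, hgg', inv_smul_smul]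
        have h2 := hfree _ _ h1
        rw [inv_mul_eq_one] at h2
        exact h2.symm,
      fun b => htrans α b⟩
  set CCfin : Finset G := univ.filter (fun y : G => ∃ g : G, g * x * g⁻¹ = y) with hCC
  set Dfin : Finset G := CCfin.filter (fun y => Γ.Adj (y • α) α) with hDf
  set Dfin' : Finset G := CCfin.filter (fun y => ¬ Γ.Adj (y • α) α) with hDf'
  have hsplit : Dfin.card + Dfin'.card = CCfin.card := by
    rw [hDf, hDf']
    exact Finset.card_filter_add_card_filter_not _
  have hGcount : CCfin.card * c = v := by
    have hstep : (univ : Finset G).card =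
        ∑ y ∈ CCfin, ((univ : Finset G).filter fun g : G => g * x * g⁻¹ = y).card :=
      Finset.card_eq_sum_card_fiberwise (fun g _ => by
        rw [hCC]
        simp only [Finset.coe_filter, Set.mem_setOf_eq, Finset.mem_univ, true_and]
        exact ⟨g, rfl⟩)
    have hconst : ∀ y ∈ CCfin, ((univ : Finset G).filter fun g : G => g * x * g⁻¹ = y).card = c := by
      intro y hy
      rw [hCC] at hy
      simp only [Finset.mem_filter, Finset.mem_univ, true_and] at hy
      obtain ⟨g₀, rfl⟩ := hy
      exact hfiber g₀
    rw [Finset.sum_congr rfl hconst, Finset.sum_const, smul_eq_mul] at hstep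
    rw [← hstep, Finset.card_univ, hGv]

  set T : Finset G := univ.filter (fun g : G => Γ.Adj ((g * x * g⁻¹) • α) α) with hT
  have hT1 : T.card = Dfin.card * c := by
    have hstep : T.card = ∑ y ∈ Dfin, (T.filter fun g : G => g * x * g⁻¹ = y).card :=
      Finset.card_eq_sum_card_fiberwise (fun g hg => by
        rw [hT] at hg
        simp only [Finset.coe_filter, Set.mem_setOf_eq, Finset.mem_filter, Finset.mem_univ, true_and] at hg
        rw [hDf, hCC]
        simp only [Finset.coe_filter, Finset.mem_filter, Set.mem_setOf_eq, Finset.mem_univ, true_and]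
        exact ⟨⟨g, rfl⟩, hg⟩)
    have hconst : ∀ y ∈ Dfin, (T.filter fun g : G => g * x * g⁻¹ = y).card = c := by
      intro y hy
      rw [hDf] at hy
      simp only [Finset.mem_filter] at hy
      obtain ⟨hyC, hyA⟩ := hy
      rw [hCC] at hyC
      simp only [Finset.mem_filter, Finset.mem_univ, true_and] at hyC
      have hTy : T.filter (fun g : G => g * x * g⁻¹ = y)
          = univ.filter (fun g : G => g * x * g⁻¹ = y) := by
        ext g
        rw [hT]
        simp only [Finset.mem_filter, Finset.mem_univ, true_and, and_iff_right_iff_imp]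
        intro hgy
        rw [hgy]
        exact hyA
      rw [hTy]
      obtain ⟨g₀, rfl⟩ := hyC
      exact hfiber g₀
    rw [Finset.sum_congr rfl hconst, Finset.sum_const, smul_eq_mul] at hstep
    exact hstep
  have hT2 : T.card = d := by
    rw [hT, hd]
    apply Finset.card_bij (fun (g : G) _ => g⁻¹ • α)
    · intro g hg
      simp only [Finset.mem_filter, Finset.mem_univ, true_and] at hg ⊢
      have h1 := (hpres g⁻¹ ((g * x * g⁻¹) • α) α).mp hg
      have h2 : g⁻¹ • ((g * x * g⁻¹) • α) = x • (g⁻¹ • α) := by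
        rw [← mul_smul, ← mul_smul]
        congr 1
        group
      rwa [h2] at h1
    · intro a ha b hb hab
      have h1 : (b * a⁻¹) • α = α := by
        rw [mul_smul, hab, ← mul_smul, mul_inv_cancel, one_smul]
      have h2 := hfree _ _ h1
      rw [mul_inv_eq_one] at h2
      exact h2.symm
    · intro a ha
      simp only [Finset.mem_filter, Finset.mem_univ, true_and] at ha
      obtain ⟨g₁, hg₁⟩ := htrans α a
      refine ⟨g₁⁻¹, ?_, by rw [inv_inv, hg₁]⟩
      simp only [Finset.mem_filter, Finset.mem_univ, true_and]
      have h1 := (hpres g₁⁻¹ (x • a) a).mp ha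
      have h2 : g₁⁻¹ • (x • a) = (g₁⁻¹ * x * (g₁⁻¹)⁻¹) • α := by
        rw [inv_inv, ← hg₁, ← mul_smul, ← mul_smul]
      have h3 : g₁⁻¹ • a = α := by rw [← hg₁, inv_smul_smul]
      rwa [h2, h3] at h1
  have hNset : ({y : G | ∃ g : G, g * x * g⁻¹ = y} ∩
      (({g : G | Γ.Adj (g • α) α} ∪ {1}) : Set G)ᶜ) = (↑Dfin' : Set G) := by
    ext y
    rw [hDf', hCC]
    simp only [Set.mem_inter_iff, Set.mem_setOf_eq, Set.mem_compl_iff, Set.mem_union,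
      Set.mem_singleton_iff, Finset.coe_filter, Finset.mem_filter, Finset.mem_univ,
      true_and, Set.mem_setOf_eq, not_or]
    constructor
    · rintro ⟨hex, hna, -⟩
      exact ⟨hex, hna⟩
    · rintro ⟨hex, hna⟩
      refine ⟨hex, hna, ?_⟩
      rintro rfl
      obtain ⟨g, hg⟩ := hex
      apply hx
      have hx1 : x = g⁻¹ * (g * x * g⁻¹) * g := by group
      rw [hg] at hx1
      simpa using hx1
  refine ⟨t, ?_⟩
  rw [hNset, Set.ncard_coe_finset]
  have h2 : Dfin.card * c = d := hT1.symm.trans hT2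
  have h3 : Dfin'.card * c + d = v := by
    rw [← h2, ← hGcount, ← Nat.add_mul, Nat.add_comm (Dfin'.card), hsplit]
  obtain ⟨N, hN⟩ : ∃ N, Dfin'.card * c = N := ⟨_, rfl⟩
  rw [hN] at h3 ⊢
  have hNZ : (N : ℤ) = (v:ℤ) - ((k:ℤ) - ν₃) - t * (ν₂ - ν₃) := by
    have h3Z : (N:ℤ) + d = v := by exact_mod_cast h3
    linarith [hdZ]
  have hNR : (N : ℝ) = (v:ℝ) - ((k:ℝ) - ν₃) - t * ((ν₂:ℝ) - ν₃) := by exact_mod_cast hNZ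
  have hkZ : (m:ℤ) * v = ((k:ℤ) - ν₂) * ((k:ℤ) - ν₃) := by exact_mod_cast hkQ
  have hkR : (m:ℝ) * v = ((k:ℝ) - ν₂) * ((k:ℝ) - ν₃) := by exact_mod_cast hkZ
  have hmR : (m:ℝ) ≠ 0 := Nat.cast_ne_zero.mpr hm.ne'
  rw [hNR]
  field_simp
  linear_combination hkR + ((k:ℝ) - ν₂*ν₃ - ν₂ - ν₃) * hprodR
end

section
/- Let Γ be a (v,k,λ,μ)-strongly regular graph with integer eigenvalues k, ν₂ > ν₃, and let G act regularly on the vertices of Γ; fix a vertex α and let Δ = {g ∈ G : α^g ~ α} ∪ {1}. If ν₂ − ν₃ does not divide μ − ν₃(ν₂ + 1), then for every nontrivial x ∈ G, the conjugacy class x^G intersects Δ nontrivially: x^G ∩ Δ ≠ ∅. -/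
open Matrix

private lemma aux_trace_toLin' {n : Type*} [Fintype n] [DecidableEq n] (M : Matrix n n ℚ) :
    LinearMap.trace ℚ (n → ℚ) (Matrix.toLin' M) = M.trace := by
  rw [LinearMap.trace_eq_matrix_trace ℚ (Pi.basisFun ℚ n), LinearMap.toMatrix_eq_toMatrix',
    LinearMap.toMatrix'_toLin']

private lemma aux_den_mul (q : ℚ) : (q.den : ℚ) * q = (q.num : ℚ) := by
  have hden : ((q.den : ℚ)) ≠ 0 := by exact_mod_cast q.den_nz
  have h : (q.num : ℚ) / (q.den : ℚ) = q := Rat.num_div_den q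
  rw [div_eq_iff hden] at h
  rw [mul_comm, h]

private lemma aux_int_clear (q : ℚ) (N : ℕ) (h : q.den ∣ N) : ∃ z : ℤ, (N : ℚ) * q = z := by
  obtain ⟨c, hc⟩ := h
  refine ⟨c * q.num, ?_⟩
  have : (N : ℚ) = (q.den : ℚ) * (c : ℚ) := by rw [hc]; push_cast; ring
  rw [this, mul_comm ((q.den : ℚ)) (c : ℚ), mul_assoc, aux_den_mul]
  push_cast; ring

open Matrix

private noncomputable def castMap (n : Type*) [Fintype n] : (n → ℤ) →ₗ[ℤ] (n → ℚ) where
  toFun := fun f a => ((f a : ℤ) : ℚ)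
  map_add' := by intro f g; funext a; push_cast; simp
  map_smul' := by
    intro z f; funext a
    simp only [Pi.smul_apply, smul_eq_mul, RingHom.id_apply, zsmul_eq_mul]
    push_cast; ring

private lemma exists_int_trace_restrict {n : Type*} [Fintype n] [DecidableEq n]
    (Pz : Matrix n n ℤ) (U : Submodule ℚ (n → ℚ))
    (hPU : ∀ f ∈ U, (Matrix.toLin' (Pz.map (fun z : ℤ => (z : ℚ)))) f ∈ U) :
    ∃ t : ℤ, LinearMap.trace ℚ U ((Matrix.toLin' (Pz.map (fun z : ℤ => (z : ℚ)))).restrict hPU)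
      = (t : ℚ) := by
  classical
  set P : Matrix n n ℚ := Pz.map (fun z : ℤ => (z : ℚ)) with hPdef
  set c : (n → ℤ) →ₗ[ℤ] (n → ℚ) := castMap n with hcdef
  have hc_apply : ∀ (f : n → ℤ) (a : n), c f a = ((f a : ℤ) : ℚ) := fun f a => rfl
  have hcinj : Function.Injective c := by
    intro f g hfg
    funext a
    have := congrFun hfg a
    rw [hc_apply, hc_apply] at this
    exact_mod_cast this
  have hczsmul : ∀ (z : ℤ) (v : n → ℤ), c (z • v) = (z : ℚ) • c v := by
    intro z v; funext a
    rw [hc_apply]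
    simp only [Pi.smul_apply, smul_eq_mul]
    rw [hc_apply v a]
    push_cast; ring
  have hcompat : ∀ f : n → ℤ, c (Pz.mulVec f) = P.mulVec (c f) := by
    intro f; funext a
    rw [hc_apply]
    simp only [Matrix.mulVec, dotProduct, Matrix.map_apply, hPdef]
    push_cast
    rfl
  set Λ : Submodule ℤ (n → ℤ) := (U.restrictScalars ℤ).comap c with hΛdef
  have hΛmem : ∀ y : n → ℤ, y ∈ Λ ↔ c y ∈ U := fun y => Iff.rfl
  obtain ⟨N, bΛ⟩ := Submodule.basisOfPid (Pi.basisFun ℤ n) Λ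
  have hψmem : ∀ y : n → ℤ, y ∈ Λ → Pz.mulVec y ∈ Λ := by
    intro y hy
    rw [hΛmem, hcompat]
    have := hPU (c y) ((hΛmem y).mp hy)
    rwa [Matrix.toLin'_apply] at this
  -- the family in U
  set W : Fin N → U := fun i => ⟨c (bΛ i).1, (hΛmem _).mp (bΛ i).2⟩ with hWdef
  -- linear independence
  have hindepZ : LinearIndependent ℤ (fun i => c ((bΛ i) : n → ℤ)) := by
    have h1 : LinearIndependent ℤ (fun i => ((bΛ i) : n → ℤ)) :=
      bΛ.linearIndependent.map' Λ.subtype (Submodule.ker_subtype Λ)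
    exact h1.map' c (LinearMap.ker_eq_bot.mpr hcinj)
  have hindepQ : LinearIndependent ℚ (fun i => c ((bΛ i) : n → ℤ)) :=
    (LinearIndependent.iff_fractionRing ℤ ℚ).mp hindepZ
  have hindepW : LinearIndependent ℚ W := by
    apply LinearIndependent.of_comp U.subtype
    exact hindepQ
  -- spanning
  have hkey : ∀ y : n → ℤ, y ∈ Λ →
      c y ∈ Submodule.span ℚ (Set.range (fun i => c ((bΛ i) : n → ℤ))) := by
    intro y hy
    have hrepr := bΛ.sum_repr ⟨y, hy⟩
    have hval : y = ∑ i, bΛ.repr ⟨y, hy⟩ i • ((bΛ i) : n → ℤ) := by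
      conv_lhs => rw [show y = ((⟨y, hy⟩ : Λ) : n → ℤ) from rfl, ← hrepr]
      simp only [Submodule.coe_sum, Submodule.coe_smul]
    rw [hval]
    rw [map_sum]
    apply Submodule.sum_mem
    intro i _
    rw [hczsmul]
    exact Submodule.smul_mem _ _ (Submodule.subset_span ⟨i, rfl⟩)
  have hspanW : ⊤ ≤ Submodule.span ℚ (Set.range W) := by
    intro u _
    -- clear denominators
    set q : n → ℚ := (u : n → ℚ) with hqdef
    set Nd : ℕ := ∏ a : n, (q a).den with hNddef
    have hNdne : (Nd : ℚ) ≠ 0 := by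
      have : Nd ≠ 0 := Finset.prod_ne_zero_iff.mpr (fun a _ => (q a).den_nz)
      exact_mod_cast this
    have hz : ∀ a : n, ∃ z : ℤ, (Nd : ℚ) * q a = z := by
      intro a
      exact aux_int_clear (q a) Nd (Finset.dvd_prod_of_mem _ (Finset.mem_univ a))
    choose f hf using hz
    have hcf : c f = (Nd : ℚ) • q := by
      funext a
      rw [hc_apply, ← hf a]
      simp
    have hfΛ : f ∈ Λ := by
      rw [hΛmem, hcf]
      exact U.smul_mem _ u.2
    have h1 : c f ∈ Submodule.span ℚ (Set.range (fun i => c ((bΛ i) : n → ℤ))) :=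
      hkey f hfΛ
    have h2 : q ∈ Submodule.span ℚ (Set.range (fun i => c ((bΛ i) : n → ℤ))) := by
      have : q = (Nd : ℚ)⁻¹ • ((Nd : ℚ) • q) := by
        rw [smul_smul, inv_mul_cancel₀ hNdne, one_smul]
      rw [this, ← hcf]
      exact Submodule.smul_mem _ _ h1
    -- pull back to the subtype
    have h3 : (u : n → ℚ) ∈ Submodule.map U.subtype (Submodule.span ℚ (Set.range W)) := by
      rw [Submodule.map_span]
      have himg : U.subtype '' (Set.range W) = Set.range (fun i => c ((bΛ i) : n → ℤ)) := by
        rw [← Set.range_comp]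
        rfl
      rw [himg]
      exact h2
    obtain ⟨u', hu', hval⟩ := h3
    have : u' = u := Subtype.ext hval
    rwa [← this]
  set bE : Module.Basis (Fin N) ℚ U := Module.Basis.mk hindepW hspanW with hbEdef
  -- the integer matrix
  set a : Matrix (Fin N) (Fin N) ℤ :=
    Matrix.of (fun i j => bΛ.repr ⟨Pz.mulVec ((bΛ j) : n → ℤ), hψmem _ (bΛ j).2⟩ i) with hadef
  set φ := (Matrix.toLin' P).restrict hPU with hφdef
  have hφapp : ∀ j, φ (bE j) = ∑ i, ((a i j : ℤ) : ℚ) • bE i := by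
    intro j
    apply Subtype.ext
    have hbEj : ∀ i, bE i = W i := fun i => by rw [hbEdef, Module.Basis.mk_apply]
    rw [hbEj]
    have hlhs : ((φ (W j)) : n → ℚ) = c (Pz.mulVec ((bΛ j) : n → ℤ)) := by
      rw [hφdef]
      have : ((Matrix.toLin' P).restrict hPU (W j) : n → ℚ) = Matrix.toLin' P (W j : n → ℚ) := rfl
      rw [this, Matrix.toLin'_apply, hWdef]
      exact (hcompat _).symm
    rw [hlhs]
    -- expand in the basis bΛ
    have hrepr := bΛ.sum_repr ⟨Pz.mulVec ((bΛ j) : n → ℤ), hψmem _ (bΛ j).2⟩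
    have hval : Pz.mulVec ((bΛ j) : n → ℤ) = ∑ i, a i j • ((bΛ i) : n → ℤ) := by
      conv_lhs => rw [show Pz.mulVec ((bΛ j) : n → ℤ)
        = ((⟨Pz.mulVec ((bΛ j) : n → ℤ), hψmem _ (bΛ j).2⟩ : Λ) : n → ℤ) from rfl, ← hrepr]
      simp only [Submodule.coe_sum, Submodule.coe_smul, hadef, Matrix.of_apply]
    rw [hval, map_sum]
    have hrhs : ((∑ i, ((a i j : ℤ) : ℚ) • bE i : U) : n → ℚ)
        = ∑ i, ((a i j : ℤ) : ℚ) • (c ((bΛ i) : n → ℤ)) := by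
      simp only [Submodule.coe_sum, SetLike.val_smul, hbEj, hWdef]
    rw [hrhs]
    congr 1
    funext i
    rw [hczsmul]
  refine ⟨a.trace, ?_⟩
  rw [LinearMap.trace_eq_matrix_trace ℚ bE φ]
  have hmat : LinearMap.toMatrix bE bE φ = a.map (fun z : ℤ => (z : ℚ)) := by
    ext i j
    rw [LinearMap.toMatrix_apply, hφapp j]
    have := congrFun (bE.repr_sum_self (fun i => ((a i j : ℤ) : ℚ))) i
    rw [this]
    rfl
  rw [hmat]
  rw [Matrix.trace, Matrix.trace]
  push_cast
  rfl



/-- Let `Γ` be a `(v,k,λ,μ)`-strongly regular graph with integer eigenvalues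
`k, ν₂ > ν₃`, and let `G` act regularly on the vertices of `Γ`; fix a vertex `α` and
let `Δ = {g : Γ.Adj (g • α) α} ∪ {1}`.  If `ν₂ - ν₃` does not divide `μ - ν₃(ν₂ + 1)`,
then for every nontrivial `x ∈ G` we have `x^G ∩ Δ ≠ ∅`. -/
theorem regular_action_class_meets_delta {V G : Type*} [Fintype V] [Group G] [Fintype G]
    (Γ : SimpleGraph V) [DecidableRel Γ.Adj] [MulAction G V]
    (v k l m : ℕ) (ν₂ ν₃ : ℤ)
    (h : Γ.IsSRGWith v k l m)
    (hν₂ : (ν₂ : ℝ) = ((l : ℝ) - m + Real.sqrt (((l : ℝ) - m) ^ 2 + 4 * ((k : ℝ) - m))) / 2)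
    (hν₃ : (ν₃ : ℝ) = ((l : ℝ) - m - Real.sqrt (((l : ℝ) - m) ^ 2 + 4 * ((k : ℝ) - m))) / 2)
    (h23 : ν₂ > ν₃)
    (hdvd : ¬ (ν₂ - ν₃ ∣ (m : ℤ) - ν₃ * (ν₂ + 1)))
    (hpres : ∀ (g : G) (a b : V), Γ.Adj a b ↔ Γ.Adj (g • a) (g • b))
    (htrans : ∀ a b : V, ∃ g : G, g • a = b)
    (hfree : ∀ (g : G) (a : V), g • a = a → g = 1)
    (α : V) (x : G) (hx : x ≠ 1) :
    ({y : G | ∃ g : G, g * x * g⁻¹ = y} ∩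
      ({g : G | Γ.Adj (g • α) α} ∪ {1})).Nonempty := by
  classical
  by_contra hcon
  rw [Set.not_nonempty_iff_eq_empty] at hcon
  have hS : ∀ g : G, ¬ Γ.Adj ((g * x * g⁻¹) • α) α := by
    intro g hadj
    have : (g * x * g⁻¹) ∈ ({y : G | ∃ g : G, g * x * g⁻¹ = y} ∩
        ({g : G | Γ.Adj (g • α) α} ∪ {1})) := ⟨⟨g, rfl⟩, Or.inl hadj⟩
    rw [hcon] at this
    exact this
  -- eigenvalue arithmetic
  have hsubR : (ν₂ : ℝ) - ν₃ = Real.sqrt (((l : ℝ) - m) ^ 2 + 4 * ((k : ℝ) - m)) := by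
    rw [hν₂, hν₃]; ring
  have hposR : (0 : ℝ) < (ν₂ : ℝ) - ν₃ := by
    have : (ν₃ : ℝ) < (ν₂ : ℝ) := by exact_mod_cast h23
    linarith
  have hDpos : (0 : ℝ) < ((l : ℝ) - m) ^ 2 + 4 * ((k : ℝ) - m) :=
    Real.sqrt_pos.mp (hsubR ▸ hposR)
  have hsq : Real.sqrt (((l : ℝ) - m) ^ 2 + 4 * ((k : ℝ) - m)) ^ 2
      = ((l : ℝ) - m) ^ 2 + 4 * ((k : ℝ) - m) := Real.sq_sqrt hDpos.le
  have hsumR : (ν₂ : ℝ) + ν₃ = (l : ℝ) - m := by rw [hν₂, hν₃]; ring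
  have hprodR : (ν₂ : ℝ) * ν₃ = (m : ℝ) - k := by
    rw [hν₂, hν₃]
    have expand : ((l : ℝ) - m + Real.sqrt (((l : ℝ) - m) ^ 2 + 4 * ((k : ℝ) - m))) / 2 *
        (((l : ℝ) - m - Real.sqrt (((l : ℝ) - m) ^ 2 + 4 * ((k : ℝ) - m))) / 2)
        = (((l : ℝ) - m) ^ 2 - Real.sqrt (((l : ℝ) - m) ^ 2 + 4 * ((k : ℝ) - m)) ^ 2) / 4 := by
      ring
    rw [expand, hsq]; ring
  have hsum : ν₂ + ν₃ = (l : ℤ) - m := by exact_mod_cast hsumR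
  have hprod : ν₂ * ν₃ = (m : ℤ) - k := by exact_mod_cast hprodR
  have hdvd' : ¬ (ν₂ - ν₃ ∣ (k : ℤ) - ν₃) := by
    intro hd
    apply hdvd
    have : (m : ℤ) - ν₃ * (ν₂ + 1) = (k : ℤ) - ν₃ := by linear_combination - hprod
    rwa [this]
  have hd0 : (0 : ℤ) < ν₂ - ν₃ := by omega
  -- matrices
  set A : Matrix V V ℚ := Γ.adjMatrix ℚ with hAdef
  set Jm : Matrix V V ℚ := Matrix.of (fun _ _ => (1 : ℚ)) with hJdef
  set PxZ : Matrix V V ℤ := Matrix.of (fun a b => if a = x • b then 1 else 0) with hPxZdef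
  set Px : Matrix V V ℚ := PxZ.map (fun z : ℤ => (z : ℚ)) with hPxdef
  have hPx_apply : ∀ a b, Px a b = if a = x • b then (1 : ℚ) else 0 := by
    intro a b
    rw [hPxdef, Matrix.map_apply, hPxZdef]
    simp [Matrix.of_apply, apply_ite]
  -- multiplication with the permutation matrix
  have hPxM : ∀ (M : Matrix V V ℚ) (a b : V), (Px * M) a b = M (x⁻¹ • a) b := by
    intro M a b
    rw [Matrix.mul_apply]
    have : ∀ c : V, Px a c * M c b = if c = x⁻¹ • a then M c b else 0 := by
      intro c
      rw [hPx_apply]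
      by_cases hc : a = x • c
      · have hc2 : c = x⁻¹ • a := by rw [hc, inv_smul_smul]
        rw [if_pos hc, if_pos hc2, one_mul]
      · have hc2 : ¬ (c = x⁻¹ • a) := by
          intro hc'
          apply hc
          rw [hc', smul_inv_smul]
        rw [if_neg hc, if_neg hc2, zero_mul]
    rw [Finset.sum_congr rfl (fun c _ => this c)]
    simp
  have hMPx : ∀ (M : Matrix V V ℚ) (a b : V), (M * Px) a b = M a (x • b) := by
    intro M a b
    rw [Matrix.mul_apply]
    have : ∀ c : V, M a c * Px c b = if c = x • b then M a c else 0 := by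
      intro c
      rw [hPx_apply]
      by_cases hc : c = x • b
      · rw [if_pos hc, if_pos hc, mul_one]
      · rw [if_neg hc, if_neg (fun hc' => hc hc'), mul_zero]
    rw [Finset.sum_congr rfl (fun c _ => this c)]
    simp
  have hcommA : Px * A = A * Px := by
    ext a b
    rw [hPxM, hMPx]
    rw [hAdef]
    simp only [SimpleGraph.adjMatrix_apply]
    congr 1
    rw [eq_iff_iff]
    constructor
    · intro hadj
      have := (hpres x _ _).mp hadj
      rwa [smul_inv_smul] at this
    · intro hadj
      have := (hpres x⁻¹ _ _).mp hadj
      rwa [inv_smul_smul] at this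
  -- row sums
  have hAJ : A * Jm = (k : ℚ) • Jm := by
    ext a b
    rw [Matrix.mul_apply, Matrix.smul_apply]
    have h1 : ∀ c : V, A a c * Jm c b = A a c := by
      intro c; rw [hJdef]; exact mul_one _
    rw [Finset.sum_congr rfl (fun c _ => h1 c)]
    rw [hAdef]
    show ∑ c, (if Γ.Adj a c then (1 : ℚ) else 0) = _
    rw [Finset.sum_boole]
    rw [hJdef]
    have h2 : Finset.filter (fun c => Γ.Adj a c) Finset.univ = Γ.neighborFinset a := by
      rw [SimpleGraph.neighborFinset_eq_filter]
    rw [h2, SimpleGraph.card_neighborFinset_eq_degree, h.regular a]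
    simp
  have hJA : Jm * A = (k : ℚ) • Jm := by
    ext a b
    rw [Matrix.mul_apply, Matrix.smul_apply]
    have h1 : ∀ c : V, Jm a c * A c b = A b c := by
      intro c
      rw [hJdef, hAdef]
      simp only [SimpleGraph.adjMatrix_apply, Matrix.of_apply]
      rw [one_mul]
      congr 1
      rw [eq_iff_iff]
      exact ⟨fun hh => hh.symm, fun hh => hh.symm⟩
    rw [Finset.sum_congr rfl (fun c _ => h1 c)]
    rw [hAdef]
    show ∑ c, (if Γ.Adj b c then (1 : ℚ) else 0) = _
    rw [Finset.sum_boole]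
    rw [hJdef]
    have h2 : Finset.filter (fun c => Γ.Adj b c) Finset.univ = Γ.neighborFinset b := by
      rw [SimpleGraph.neighborFinset_eq_filter]
    rw [h2, SimpleGraph.card_neighborFinset_eq_degree, h.regular b]
    simp
  have hJJ : Jm * Jm = (Fintype.card V : ℚ) • Jm := by
    ext a b
    rw [Matrix.mul_apply, Matrix.smul_apply]
    rw [hJdef]
    simp [Finset.card_univ]
  -- complement adjacency matrix
  have hCompl : Γᶜ.adjMatrix ℚ = Jm - 1 - A := by
    ext a b
    simp only [SimpleGraph.adjMatrix_apply, Matrix.sub_apply, Matrix.one_apply, hJdef, hAdef,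
      Matrix.of_apply, SimpleGraph.compl_adj]
    by_cases hab : a = b
    · rw [if_neg (by tauto), if_pos hab, if_neg (by subst hab; exact Γ.irrefl)]
      ring
    · by_cases hadj : Γ.Adj a b
      · rw [if_neg (by tauto), if_neg hab, if_pos hadj]
        ring
      · rw [if_pos ⟨hab, hadj⟩, if_neg hab, if_neg hadj]
        ring
  have hA2 : A * A = (k : ℚ) • 1 + (l : ℚ) • A + (m : ℚ) • (Jm - 1 - A) := by
    have hme := h.matrix_eq (α := ℚ)
    rw [pow_two, hCompl] at hme
    rw [hAdef, hme, ← Nat.cast_smul_eq_nsmul ℚ k, ← Nat.cast_smul_eq_nsmul ℚ l,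
      ← Nat.cast_smul_eq_nsmul ℚ m]
  -- quadratic expansion
  have hexp : ∀ (a b : ℚ), (A - a • 1) * (A - b • 1)
      = A * A - (a + b) • A + (a * b) • (1 : Matrix V V ℚ) := by
    intro a b
    have h1 : A * (b • (1 : Matrix V V ℚ)) = b • A := by rw [mul_smul_comm, mul_one]
    have h2 : (a • (1 : Matrix V V ℚ)) * A = a • A := by rw [smul_mul_assoc, one_mul]
    have h3 : (a • (1 : Matrix V V ℚ)) * (b • (1 : Matrix V V ℚ))
        = (a * b) • (1 : Matrix V V ℚ) := by
      rw [smul_mul_assoc, mul_smul_comm, mul_one, smul_smul]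
    rw [sub_mul, mul_sub, mul_sub, h1, h2, h3, add_smul]
    abel
  have hquad : (A - (ν₂ : ℚ) • 1) * (A - (ν₃ : ℚ) • 1) = (m : ℚ) • Jm := by
    rw [hexp, hA2]
    have h1 : ((ν₂ : ℚ) + ν₃) = (l : ℚ) - m := by exact_mod_cast hsum
    have h2 : ((ν₂ : ℚ) * ν₃) = (m : ℚ) - k := by exact_mod_cast hprod
    rw [h1, h2]
    rw [smul_sub, smul_sub, sub_smul, sub_smul]
    abel
  -- traces
  have htr0 : Px.trace = 0 := by
    rw [Matrix.trace]
    apply Finset.sum_eq_zero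
    intro a _
    rw [Matrix.diag_apply, hPx_apply]
    rw [if_neg]
    intro hxa
    exact hx (hfree x a hxa.symm)
  have htrA : (Px * A).trace = 0 := by
    rw [Matrix.trace]
    apply Finset.sum_eq_zero
    intro a _
    rw [Matrix.diag_apply, hPxM]
    obtain ⟨g, hg⟩ := htrans α a
    have hnot : ¬ Γ.Adj (x⁻¹ • a) a := by
      intro hadj
      rw [← hg] at hadj
      have h1 := (hpres (g⁻¹ * x) _ _).mp hadj
      have e1 : (g⁻¹ * x) • x⁻¹ • g • α = α := by
        rw [smul_smul x⁻¹ g, smul_smul (g⁻¹ * x) (x⁻¹ * g),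
          show (g⁻¹ * x) * (x⁻¹ * g) = 1 from by group, one_smul]
      have e2 : (g⁻¹ * x) • g • α = (g⁻¹ * x * g) • α := smul_smul _ _ _
      rw [e1, e2] at h1
      exact hS g⁻¹ (by rw [show g⁻¹ * x * (g⁻¹)⁻¹ = g⁻¹ * x * g from by group]; exact h1.symm)
    rw [hAdef]
    simp [SimpleGraph.adjMatrix_apply, hnot]
  have htrJ : (Px * Jm).trace = (Fintype.card V : ℚ) := by
    rw [Matrix.trace]
    have h1 : ∀ a : V, (Px * Jm).diag a = 1 := by
      intro a
      rw [Matrix.diag_apply, hPxM, hJdef]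
      rfl
    rw [Finset.sum_congr rfl (fun a _ => h1 a)]
    simp [Finset.card_univ]
  -- scalar identity (k - nu2)(k - nu3) = m * |V|
  have hstep1 : ∀ b : ℚ, (A - b • 1) * Jm = ((k : ℚ) - b) • Jm := by
    intro b
    rw [sub_mul, hAJ, smul_mul_assoc, one_mul, sub_smul]
  have hkkQ : ((k : ℚ) - ν₂) * ((k : ℚ) - ν₃) = (m : ℚ) * (Fintype.card V : ℚ) := by
    have h1 : ((A - (ν₂ : ℚ) • 1) * (A - (ν₃ : ℚ) • 1)) * Jm
        = (((k : ℚ) - ν₂) * ((k : ℚ) - ν₃)) • Jm := by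
      rw [mul_assoc, hstep1, Matrix.mul_smul, hstep1, smul_smul,
        mul_comm ((k : ℚ) - ν₃) ((k : ℚ) - ν₂)]
    have h2 : ((A - (ν₂ : ℚ) • 1) * (A - (ν₃ : ℚ) • 1)) * Jm
        = ((m : ℚ) * (Fintype.card V : ℚ)) • Jm := by
      rw [hquad, Matrix.smul_mul, hJJ, smul_smul]
    rw [h1] at h2
    have h3 := congrFun (congrFun h2 α) α
    simp only [Matrix.smul_apply, hJdef, Matrix.of_apply, smul_eq_mul, mul_one] at h3
    exact h3
  have hkkZ : ((k : ℤ) - ν₂) * ((k : ℤ) - ν₃) = (m : ℤ) * (Fintype.card V : ℤ) := by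
    exact_mod_cast hkkQ
  have hV : 0 < Fintype.card V := Fintype.card_pos_iff.mpr ⟨α⟩
  by_cases hm : m = 0
  · -- degenerate case: k is nu2 or nu3
    rw [hm] at hkkZ
    simp only [Nat.cast_zero, zero_mul] at hkkZ
    rcases mul_eq_zero.mp hkkZ with h0 | h0
    · apply hdvd'
      have : (k : ℤ) - ν₃ = ν₂ - ν₃ := by omega
      rw [this]
    · apply hdvd'
      rw [sub_eq_zero] at h0
      rw [h0]
      simp
  · -- main case
    have hmQ : (m : ℚ) ≠ 0 := Nat.cast_ne_zero.mpr hm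
    have hVQ : (Fintype.card V : ℚ) ≠ 0 := Nat.cast_ne_zero.mpr hV.ne'
    have hne2 : (k : ℚ) - ν₂ ≠ 0 := by
      intro h0
      rw [h0, zero_mul] at hkkQ
      exact hmQ (by
        rcases mul_eq_zero.mp hkkQ.symm with h1 | h1
        · exact h1
        · exact absurd h1 hVQ)
    set U : Submodule ℚ (V → ℚ) := LinearMap.ker (Matrix.toLin' (A - (ν₂ : ℚ) • 1)) with hUdef
    have hcomm' : Px * (A - (ν₂ : ℚ) • 1) = (A - (ν₂ : ℚ) • 1) * Px := by
      rw [mul_sub, sub_mul, hcommA, mul_smul_comm, mul_one, smul_mul_assoc, one_mul]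
    have hPxU : ∀ f ∈ U, Matrix.toLin' Px f ∈ U := by
      intro f hf
      rw [hUdef, LinearMap.mem_ker, Matrix.toLin'_apply] at hf ⊢
      rw [Matrix.toLin'_apply, Matrix.mulVec_mulVec, ← hcomm', ← Matrix.mulVec_mulVec, hf,
        Matrix.mulVec_zero]
    obtain ⟨t, ht⟩ := exists_int_trace_restrict PxZ U hPxU
    -- the matrix Q
    set Q : Matrix V V ℚ := (A - (k : ℚ) • 1) * (A - (ν₃ : ℚ) • 1) with hQdef
    have hswap : ∀ a b : ℚ, (A - a • 1) * (A - b • 1) = (A - b • 1) * (A - a • 1) := by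
      intro a b
      rw [hexp, hexp, add_comm b a, mul_comm b a]
    have hAQ : (A - (ν₂ : ℚ) • 1) * Q = 0 := by
      rw [hQdef, ← mul_assoc, hswap (ν₂ : ℚ) (k : ℚ), mul_assoc, hquad, mul_smul_comm,
        hstep1, sub_self, zero_smul, smul_zero]
    -- trace of Px * Q
    have htrAA : (Px * (A * A)).trace = (m : ℚ) * (Fintype.card V : ℚ) := by
      rw [hA2, mul_add, mul_add, mul_smul_comm, mul_smul_comm, mul_smul_comm, mul_one,
        mul_sub, mul_sub, mul_one]
      rw [Matrix.trace_add, Matrix.trace_add, Matrix.trace_smul, Matrix.trace_smul,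
        Matrix.trace_smul, Matrix.trace_sub, Matrix.trace_sub, htr0, htrA, htrJ]
      simp
    have htrQ : (Px * Q).trace = (m : ℚ) * (Fintype.card V : ℚ) := by
      rw [hQdef, hexp, mul_add, mul_sub, mul_smul_comm, mul_smul_comm, mul_one]
      rw [Matrix.trace_add, Matrix.trace_sub, Matrix.trace_smul, Matrix.trace_smul,
        htrAA, htr0, htrA]
      simp
    -- Px * Q maps everything into U
    have hQmem : ∀ f : V → ℚ, Matrix.toLin' (Px * Q) f ∈ U := by
      intro f
      rw [hUdef, LinearMap.mem_ker, Matrix.toLin'_apply, Matrix.toLin'_apply,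
        Matrix.mulVec_mulVec, ← mul_assoc, ← hcomm', mul_assoc, hAQ, mul_zero,
        Matrix.zero_mulVec]
    have htrace_full : LinearMap.trace ℚ (V → ℚ) (Matrix.toLin' (Px * Q)) = (Px * Q).trace :=
      aux_trace_toLin' _
    have htrace_restr := LinearMap.trace_restrict_eq_of_forall_mem U (Matrix.toLin' (Px * Q))
      hQmem (fun f _ => hQmem f)
    -- identify the restriction
    have hres : (Matrix.toLin' (Px * Q)).restrict (fun f _ => hQmem f)
        = (((ν₂ : ℚ) - ν₃) * ((ν₂ : ℚ) - k)) • ((Matrix.toLin' Px).restrict hPxU) := by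
      apply LinearMap.ext
      intro u
      apply Subtype.ext
      have hu : (A - (ν₂ : ℚ) • 1).mulVec (u : V → ℚ) = 0 := by
        have h0 := LinearMap.mem_ker.mp (Submodule.coe_mem u)
        rwa [Matrix.toLin'_apply] at h0
      have hAu : A.mulVec (u : V → ℚ) = (ν₂ : ℚ) • (u : V → ℚ) := by
        rw [Matrix.sub_mulVec, Matrix.smul_mulVec, Matrix.one_mulVec] at hu
        rw [sub_eq_zero] at hu
        exact hu
      have h3 : (A - (ν₃ : ℚ) • 1).mulVec (u : V → ℚ)
          = ((ν₂ : ℚ) - ν₃) • (u : V → ℚ) := by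
        rw [Matrix.sub_mulVec, Matrix.smul_mulVec, Matrix.one_mulVec, hAu, sub_smul]
      have h4 : Q.mulVec (u : V → ℚ)
          = (((ν₂ : ℚ) - ν₃) * ((ν₂ : ℚ) - k)) • (u : V → ℚ) := by
        rw [hQdef, ← Matrix.mulVec_mulVec, h3, Matrix.mulVec_smul, Matrix.sub_mulVec,
          Matrix.smul_mulVec, Matrix.one_mulVec, hAu, ← sub_smul, smul_smul]
      show (Px * Q).mulVec (u : V → ℚ)
          = ((((ν₂ : ℚ) - ν₃) * ((ν₂ : ℚ) - k)) • ((Matrix.toLin' Px).restrict hPxU) u : V → ℚ)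
      rw [← Matrix.mulVec_mulVec, h4, Matrix.mulVec_smul]
      rfl
    -- put it together
    have hfinal : (m : ℚ) * (Fintype.card V : ℚ)
        = (((ν₂ : ℚ) - ν₃) * ((ν₂ : ℚ) - k)) * (t : ℚ) := by
      rw [← htrQ, ← htrace_full, ← htrace_restr, hres, _root_.map_smul, smul_eq_mul, ht]
    rw [← hkkQ] at hfinal
    have hcancel : ((ν₂ : ℚ) - ν₃) * (t : ℚ) = -((k : ℚ) - ν₃) := by
      have h9 : ((k : ℚ) - ν₂) * (((ν₂ : ℚ) - ν₃) * (t : ℚ))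
          = ((k : ℚ) - ν₂) * (-((k : ℚ) - ν₃)) := by
        linear_combination hfinal
      exact mul_left_cancel₀ hne2 h9
    have hZ : (ν₂ - ν₃) * t = -((k : ℤ) - ν₃) := by exact_mod_cast hcancel
    exact hdvd' ⟨-t, by linarith⟩
end

section
/- Let Γ be a (v,k,λ,μ)-strongly regular graph with integer eigenvalues k, ν₂ > ν₃ and μ > 0, let G act regularly on the vertices of Γ, fix a vertex α, and let Δ = {g ∈ G : α^g ~ α} ∪ {1}. Set r = gcd(ν₂(ν₃+1), ν₃(ν₂+1)) and assume gcd(r, μ) = 1. Then: (1) if r > 1, then x^G ∩ Δ ≠ ∅ for every nontrivial x ∈ G; (2) |x^G ∩ Δᶜ| is a multiple of r for every nontrivial x ∈ G, where Δᶜ = G \ Δ. -/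
set_option synthInstance.maxHeartbeats 1000000 in
open Polynomial Matrix in
lemma trace_int_of_ann {n : Type*} [Fintype n] [DecidableEq n] [Nonempty n] (Q : Matrix n n ℚ)
    {p : ℤ[X]} (hp : p.Monic) (hQ : Polynomial.aeval Q p = 0) :
    ∃ z : ℤ, Matrix.trace Q = z := by
  set Q' : Matrix n n ℂ := Q.map (algebraMap ℚ ℂ) with hQ'def
  have htr : Matrix.trace Q' = algebraMap ℚ ℂ (Matrix.trace Q) := by
    simp [Matrix.trace, Q', map_sum, Matrix.map_apply]
  -- annihilation transfers
  have hQ'ann : Polynomial.aeval Q' p = 0 := by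
    have := Polynomial.aeval_algHom_apply ((algebraMap ℚ ℂ).mapMatrix.toIntAlgHom) Q p
    rw [hQ] at this
    rw [hQ'def]
    rw [map_zero] at this
    exact this
  have hroots : ∀ t ∈ Q'.charpoly.roots, IsIntegral ℤ t := by
    intro t ht
    have hroot : Q'.charpoly.IsRoot t := isRoot_of_mem_roots ht
    have hdet : (Matrix.scalar n t - Q').det = 0 := by
      have : Q'.charpoly.eval t = (Matrix.scalar n t - Q').det := by
        rw [Matrix.charpoly, eval_det, matPolyEquiv_charmatrix]
        simp
      rw [← this]; exact hroot
    obtain ⟨v, hv0, hv⟩ := (Matrix.exists_mulVec_eq_zero_iff).2 hdet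
    have hev : Q' *ᵥ v = t • v := by
      have := hv
      rw [Matrix.sub_mulVec] at this
      have h1 : (Matrix.scalar n t) *ᵥ v = t • v := by
        have hs : (Matrix.scalar n t) = t • (1 : Matrix n n ℂ) := by
          ext i j
          by_cases hij : i = j <;>
            simp [hij, Matrix.scalar_apply, Matrix.smul_apply, Matrix.one_apply,
              Matrix.diagonal_apply]
        rw [hs, Matrix.smul_mulVec, Matrix.one_mulVec]
      rw [h1, sub_eq_zero] at this
      exact this.symm
    -- endomorphism
    set f : Module.End ℂ (n → ℂ) := Matrix.mulVecLin Q' with hfdef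
    have hfe : Module.End.HasEigenvalue f t := by
      refine Module.End.hasEigenvalue_of_hasEigenvector ⟨?_, hv0⟩
      rw [Module.End.mem_eigenspace_iff]
      simpa [f, Matrix.mulVecLin] using hev
    have hfann : Polynomial.aeval f p = 0 := by
      have := Polynomial.aeval_algHom_apply
        ((Matrix.toLinAlgEquiv' : Matrix n n ℂ ≃ₐ[ℂ] _).toAlgHom.toRingHom.toIntAlgHom) Q' p
      rw [hQ'ann] at this
      rw [hfdef]
      rw [map_zero] at this
      exact this
    haveI : Inhabited n := Classical.inhabited_of_nonempty ‹Nonempty n›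
    haveI : Nontrivial (n → ℂ) := Pi.nontrivial
    have hmindvd : minpoly ℂ f ∣ p.map (algebraMap ℤ ℂ) := by
      apply minpoly.dvd
      rw [Polynomial.aeval_map_algebraMap]
      exact hfann
    have hmroot : (minpoly ℂ f).IsRoot t := Module.End.isRoot_of_hasEigenvalue hfe
    refine ⟨p, hp, ?_⟩
    obtain ⟨c, hc⟩ := hmindvd
    have : (p.map (algebraMap ℤ ℂ)).eval t = 0 := by
      rw [hc, Polynomial.eval_mul, hmroot, zero_mul]
    rwa [Polynomial.eval_map, ← Polynomial.aeval_def] at this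
  have hsum : IsIntegral ℤ (Matrix.trace Q') := by
    rw [Matrix.trace_eq_sum_roots_charpoly]
    exact IsIntegral.multiset_sum hroots
  rw [htr] at hsum
  have : IsIntegral ℤ (Matrix.trace Q) := (isIntegral_algebraMap_iff
    (algebraMap ℚ ℂ).injective).1 hsum
  obtain ⟨z, hz⟩ := IsIntegrallyClosed.isIntegral_iff.1 this
  exact ⟨z, by rw [← hz]; simp⟩

open Finset Matrix in
lemma key_identity {V G : Type*} [Fintype V] [Group G] [Fintype G] [DecidableEq G]
    (Γ : SimpleGraph V) [DecidableRel Γ.Adj] [MulAction G V]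
    (v k l m : ℕ) (ν₂ ν₃ : ℤ) (h : Γ.IsSRGWith v k l m)
    (hsum : ν₂ + ν₃ = (l : ℤ) - m) (hprod : ν₂ * ν₃ = (m : ℤ) - k)
    (h23 : ν₂ ≠ ν₃) (hm : 0 < m)
    (hpres : ∀ (g : G) (a b : V), Γ.Adj a b ↔ Γ.Adj (g • a) (g • b))
    (htrans : ∀ a b : V, ∃ g : G, g • a = b)
    (hfree : ∀ (g : G) (a : V), g • a = a → g = 1)
    (α : V) (x : G) (hx : x ≠ 1) :
    (m : ℤ) * v = ((k : ℤ) - ν₂) * ((k : ℤ) - ν₃) ∧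
    ∃ t : ℤ, ((Finset.univ.filter (fun g : G => Γ.Adj ((g⁻¹ * x * g) • α) α)).card : ℤ)
      = ((k : ℤ) - ν₃) + t * (ν₂ - ν₃) := by
  classical
  -- the equivalence G ≃ V
  have hinj : Function.Injective (fun g : G => g • α) := by
    intro a b hab
    simp only at hab
    have h1 : (b⁻¹ * a) • α = α := by rw [mul_smul, hab, inv_smul_smul]
    have h2 := hfree _ _ h1
    rwa [inv_mul_eq_one, eq_comm] at h2
  have hsurj : Function.Surjective (fun g : G => g • α) := fun b => htrans α b
  let e : G ≃ V := Equiv.ofBijective _ ⟨hinj, hsurj⟩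
  have he : ∀ g : G, e g = g • α := fun g => rfl
  have hcardG : Fintype.card G = v := by
    rw [Fintype.card_congr e]; exact h.card
  have hv0 : 0 < v := by
    rw [← h.card]; exact Fintype.card_pos_iff.mpr ⟨α⟩
  -- matrices
  set A : Matrix V V ℚ := Γ.adjMatrix ℚ with hAdef
  set B : Matrix G G ℚ := A.submatrix e e with hBdef
  set J : Matrix G G ℚ := Matrix.of (fun _ _ => 1) with hJdef
  have hBapp : ∀ g h' : G, B g h' = if Γ.Adj (g • α) (h' • α) then 1 else 0 := by
    intro g h'; simp [hBdef, hAdef, Matrix.submatrix_apply, he]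
  -- SRG matrix identity transported
  have hcompl : Γᶜ.adjMatrix ℚ = (Matrix.of (fun _ _ => 1) : Matrix V V ℚ) - 1 - A := by
    ext i j
    by_cases hij : i = j
    · subst hij; simp [hAdef]
    · by_cases hadj : Γ.Adj i j
      · simp [hij, hadj, hAdef, Matrix.one_apply, SimpleGraph.compl_adj]
      · simp [hij, hadj, hAdef, Matrix.one_apply, SimpleGraph.compl_adj]
  have hA2 : A * A = (k : ℚ) • 1 + (l : ℚ) • A +
      (m : ℚ) • ((Matrix.of (fun _ _ => 1) : Matrix V V ℚ) - 1 - A) := by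
    have := h.matrix_eq (α := ℚ)
    rw [pow_two] at this
    rw [hAdef, this, hcompl]
    simp [Nat.cast_smul_eq_nsmul]
    rfl
  have hB2 : B * B = (k : ℚ) • 1 + (l : ℚ) • B + (m : ℚ) • (J - 1 - B) := by
    rw [hBdef, Matrix.submatrix_mul_equiv, hA2]
    ext g h'
    simp only [Matrix.add_apply, Matrix.smul_apply, Matrix.sub_apply, Matrix.submatrix_apply,
      Matrix.one_apply, Matrix.of_apply, EmbeddingLike.apply_eq_iff_eq, hJdef]
  -- row and column sums
  have hrowsum : ∀ g : G, (∑ i : G, B g i) = (k : ℚ) := by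
    intro g
    have : (∑ i : G, B g i) = ∑ w : V, (if Γ.Adj (g • α) w then (1:ℚ) else 0) := by
      rw [← Equiv.sum_comp e (fun w => if Γ.Adj (g • α) w then (1:ℚ) else 0)]
      exact Finset.sum_congr rfl (fun i _ => by rw [hBapp, he])
    rw [this, Finset.sum_boole]
    have hreg := h.regular (g • α)
    rw [← SimpleGraph.neighborFinset_eq_filter]
    rw [show (Γ.neighborFinset (g • α)).card = Γ.degree (g • α) from rfl, hreg]
  have hcolsum : ∀ g : G, (∑ i : G, B i g) = (k : ℚ) := by
    intro g
    have : ∀ i : G, B i g = B g i := by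
      intro i; rw [hBapp, hBapp]; simp [SimpleGraph.adj_comm]
    rw [Finset.sum_congr rfl (fun i _ => this i)]
    exact hrowsum g
  have hBJ : B * J = (k : ℚ) • J := by
    ext g h'
    simp only [Matrix.mul_apply, hJdef, Matrix.of_apply, mul_one, Matrix.smul_apply,
      smul_eq_mul]
    rw [hrowsum g]; try ring
  have hJB : J * B = (k : ℚ) • J := by
    ext g h'
    simp only [Matrix.mul_apply, hJdef, Matrix.of_apply, one_mul, Matrix.smul_apply,
      smul_eq_mul]
    rw [hcolsum h']; try ring
  have hJJ : J * J = (v : ℚ) • J := by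
    ext g h'
    simp only [Matrix.mul_apply, hJdef, Matrix.of_apply, mul_one, Matrix.smul_apply,
      smul_eq_mul, Finset.sum_const, Finset.card_univ, hcardG, nsmul_eq_mul]
  -- scalar abbreviations
  set ν₂' : ℚ := (ν₂ : ℚ) with hv2'
  set ν₃' : ℚ := (ν₃ : ℚ) with hv3'
  set k' : ℚ := (k : ℚ) with hk'
  have hsum' : ν₂' + ν₃' = (l : ℚ) - m := by
    rw [hv2', hv3']; exact_mod_cast congrArg (fun z : ℤ => (z : ℚ)) hsum
  have hprod' : ν₂' * ν₃' = (m : ℚ) - k := by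
    rw [hv2', hv3']; exact_mod_cast congrArg (fun z : ℤ => (z : ℚ)) hprod
  -- quadratic identity
  have hquad : (B - ν₂' • 1) * (B - ν₃' • 1) = (m : ℚ) • J := by
    have expand : (B - ν₂' • 1) * (B - ν₃' • 1)
        = B * B - (ν₂' + ν₃') • B + (ν₂' * ν₃') • 1 := by
      simp only [sub_mul, mul_sub, Matrix.smul_mul, Matrix.mul_smul, Matrix.one_mul,
        Matrix.mul_one, smul_smul, add_smul]
      module
    rw [expand, hB2, hsum', hprod']
    module
  -- B*B rewritten
  have hB2' : B * B = (ν₂' + ν₃') • B - (ν₂' * ν₃') • 1 + (m : ℚ) • J := by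
    have expand : (B - ν₂' • 1) * (B - ν₃' • 1)
        = B * B - (ν₂' + ν₃') • B + (ν₂' * ν₃') • 1 := by
      simp only [sub_mul, mul_sub, Matrix.smul_mul, Matrix.mul_smul, Matrix.one_mul,
        Matrix.mul_one, smul_smul, add_smul]
      module
    have h2 := hquad
    rw [expand] at h2
    calc B * B = (B * B - (ν₂' + ν₃') • B + (ν₂' * ν₃') • 1)
          + (ν₂' + ν₃') • B - (ν₂' * ν₃') • 1 := by module
      _ = (ν₂' + ν₃') • B - (ν₂' * ν₃') • 1 + (m : ℚ) • J := by rw [h2]; module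
  -- the m*v identity
  have hmv' : (m : ℚ) * v = (k' - ν₂') * (k' - ν₃') := by
    have h1 : ((B - ν₂' • 1) * (B - ν₃' • 1)) * J = ((m : ℚ) * v) • J := by
      rw [hquad, Matrix.smul_mul, hJJ, smul_smul]
    have h2 : ((B - ν₂' • 1) * (B - ν₃' • 1)) * J = ((k' - ν₂') * (k' - ν₃')) • J := by
      have expand : ((B - ν₂' • 1) * (B - ν₃' • 1)) * J
          = B * (B * J) - (ν₂' + ν₃') • (B * J) + (ν₂' * ν₃') • J := by
        simp only [sub_mul, mul_sub, Matrix.smul_mul, Matrix.mul_smul, Matrix.one_mul,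
          Matrix.mul_one, smul_smul, add_smul, Matrix.mul_assoc]
        module
      rw [expand, hBJ, Matrix.mul_smul, hBJ, smul_smul]
      module
    have h3 := h1.symm.trans h2
    have h4 := congrFun (congrFun (congrArg (fun M => M) h3) 1) 1
    simp only [Matrix.smul_apply, hJdef, Matrix.of_apply, smul_eq_mul, mul_one] at h4
    exact h4
  have hmv : (m : ℤ) * v = ((k : ℤ) - ν₂) * ((k : ℤ) - ν₃) := by
    rw [hk', hv2', hv3'] at hmv'
    exact_mod_cast hmv'
  refine ⟨hmv, ?_⟩
  have hne23 : ν₂' - ν₃' ≠ 0 := by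
    rw [hv2', hv3']
    intro hc
    exact h23 (by exact_mod_cast sub_eq_zero.mp hc)
  have hnek2 : ν₂' - k' ≠ 0 := by
    intro hc
    have hk2 : k' = ν₂' := (sub_eq_zero.mp hc).symm
    rw [hk2] at hmv'
    simp only [sub_self, zero_mul] at hmv'
    have : (m : ℚ) * v ≠ 0 := by
      have hm' : (m : ℚ) ≠ 0 := by exact_mod_cast hm.ne'
      have hv' : (v : ℚ) ≠ 0 := by exact_mod_cast hv0.ne'
      exact mul_ne_zero hm' hv'
    exact this hmv'
  -- permutation matrices for left translation
  set lam : G → Matrix G G ℚ := fun y => Matrix.of (fun g h' => if h' = y * g then 1 else 0)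
    with hlamdef
  have hlam_mul : ∀ y z : G, lam y * lam z = lam (z * y) := by
    intro y z
    ext g h'
    simp only [hlamdef, Matrix.mul_apply, Matrix.of_apply, mul_ite, ite_mul, one_mul, mul_one,
      mul_zero, zero_mul]
    have hsw : ∀ i : G, (if h' = z * i then (if i = y * g then (1:ℚ) else 0) else 0)
        = (if i = y * g then (if h' = z * i then (1:ℚ) else 0) else 0) := by
      intro i; by_cases h1 : h' = z * i <;> by_cases h2 : i = y * g <;> simp [h1, h2]
    rw [Finset.sum_congr rfl (fun i _ => hsw i)]
    rw [Finset.sum_ite_eq' (Finset.univ : Finset G) (y * g)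
      (fun i => if h' = z * i then (1:ℚ) else 0)]
    simp [mul_assoc]
  have hlam_one : lam 1 = 1 := by
    ext g h'
    simp only [hlamdef, Matrix.of_apply, one_mul, Matrix.one_apply]
    by_cases hgh : g = h' <;> simp [hgh, eq_comm]
  set Λ : Matrix G G ℚ := lam x with hLdef
  have hlam_pow : ∀ j : ℕ, Λ ^ j = lam (x ^ j) := by
    intro j
    induction j with
    | zero => simp [hlam_one]
    | succ n ih =>
      rw [pow_succ, ih, hlam_mul, ← pow_succ']
  -- Λ commutes with B and J
  have hLB : Λ * B = B * Λ := by
    ext g h'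
    simp only [hLdef, hlamdef, Matrix.mul_apply, Matrix.of_apply, mul_ite, ite_mul, one_mul,
      mul_one, mul_zero, zero_mul]
    rw [show (∑ i : G, if i = x * g then B i h' else 0) = B (x * g) h' by
      rw [Finset.sum_ite_eq' (Finset.univ : Finset G) (x * g) (fun i => B i h')]
      simp]
    have hcond : ∀ i : G, (if h' = x * i then B g i else 0)
        = (if i = x⁻¹ * h' then B g i else 0) := by
      intro i
      congr 1
      rw [eq_iff_iff]
      constructor
      · intro hh; rw [hh]; group
      · intro hh; rw [hh]; group
    rw [Finset.sum_congr rfl (fun i _ => hcond i)]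
    rw [Finset.sum_ite_eq' (Finset.univ : Finset G) (x⁻¹ * h') (fun i => B g i)]
    simp only [Finset.mem_univ, if_true]
    rw [hBapp, hBapp]
    have := hpres x (g • α) ((x⁻¹ * h') • α)
    rw [← mul_smul, ← mul_smul] at this
    have hxx : x * (x⁻¹ * h') = h' := by group
    rw [hxx] at this
    by_cases hadj : Γ.Adj ((x * g) • α) (h' • α)
    · rw [if_pos hadj, if_pos (by rw [this]; exact hadj)]
    · rw [if_neg hadj, if_neg (by rw [this]; exact hadj)]
  have hLJ : Λ * J = J := by
    ext g h'
    simp only [hLdef, hlamdef, hJdef, Matrix.mul_apply, Matrix.of_apply, mul_ite, ite_mul,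
      one_mul, mul_one, mul_zero, zero_mul]
    simp
  -- traces
  set N₁ : ℕ := (Finset.univ.filter (fun g : G => Γ.Adj ((g⁻¹ * x * g) • α) α)).card with hN1def
  have htrL : Matrix.trace Λ = 0 := by
    simp only [Matrix.trace, Matrix.diag, hLdef, hlamdef, Matrix.of_apply]
    have : ∀ g : G, (if g = x * g then (1:ℚ) else 0) = 0 := by
      intro g
      rw [if_neg]
      intro hc
      exact hx (by have := hc.symm; rwa [mul_eq_right] at this)
    rw [Finset.sum_congr rfl (fun g _ => this g)]
    simp
  have htrLB : Matrix.trace (Λ * B) = (N₁ : ℚ) := by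
    simp only [Matrix.trace, Matrix.diag, hLdef, hlamdef, Matrix.mul_apply, Matrix.of_apply,
      ite_mul, one_mul, zero_mul]
    have hstep : ∀ g : G, (∑ i : G, if i = x * g then B i g else 0)
        = if Γ.Adj ((g⁻¹ * x * g) • α) α then (1:ℚ) else 0 := by
      intro g
      rw [Finset.sum_ite_eq' (Finset.univ : Finset G) (x * g) (fun i => B i g)]
      simp only [Finset.mem_univ, if_true]
      rw [hBapp]
      have := hpres g⁻¹ ((x * g) • α) (g • α)
      rw [← mul_smul, ← mul_smul] at this
      have h1 : g⁻¹ * (x * g) = g⁻¹ * x * g := by group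
      have h2 : g⁻¹ * g = 1 := by group
      rw [h1, h2, one_smul] at this
      by_cases hadj : Γ.Adj ((g⁻¹ * x * g) • α) α
      · rw [if_pos (this.mpr hadj), if_pos hadj]
      · rw [if_neg (fun hc => hadj (this.mp hc)), if_neg hadj]
    rw [Finset.sum_congr rfl (fun g _ => hstep g)]
    rw [Finset.sum_boole, hN1def]
  have htrLJ : Matrix.trace (Λ * J) = (v : ℚ) := by
    rw [hLJ]
    simp only [Matrix.trace, Matrix.diag, hJdef, Matrix.of_apply]
    simp [Finset.card_univ, hcardG]
  -- projection matrix
  set P : Matrix G G ℚ := (B - ν₃' • 1) * (B - k' • 1) with hPdef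
  have hcomm_smul : ∀ (a : ℚ) (M : Matrix G G ℚ), Commute (a • (1 : Matrix G G ℚ)) M := by
    intro a M
    exact (Commute.one_left M).smul_left a
  have hcommB2 : Commute (B - ν₂' • 1) (B - ν₃' • 1) := by
    exact ((Commute.refl B).sub_left (hcomm_smul ν₂' B)).sub_right
      ((hcomm_smul ν₃' B).symm.sub_left ((hcomm_smul ν₃' (ν₂' • 1)).symm))
  have hcommBk : Commute (B - ν₂' • 1) (B - k' • 1) := by
    exact ((Commute.refl B).sub_left (hcomm_smul ν₂' B)).sub_right
      ((hcomm_smul k' B).symm.sub_left ((hcomm_smul k' (ν₂' • 1)).symm))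
  have hcommP : Commute (B - ν₂' • 1) P := hcommB2.mul_right hcommBk
  -- cubic identity
  have hcube : (B - ν₂' • 1) * P = 0 := by
    rw [hPdef, ← Matrix.mul_assoc, hquad]
    rw [Matrix.smul_mul, mul_sub, hJB, Matrix.mul_smul, Matrix.mul_one]
    rw [smul_sub]
    simp
  have hPB2 : P * (B - ν₂' • 1) = 0 := by rw [← hcommP.eq]; exact hcube
  -- P is essentially idempotent
  have hdecomp1 : P = (B - ν₂' • 1) * (B - k' • 1) + (ν₂' - ν₃') • (B - k' • 1) := by
    rw [hPdef]
    have : B - ν₃' • 1 = (B - ν₂' • 1) + (ν₂' - ν₃') • 1 := by module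
    rw [this, add_mul, Matrix.smul_mul, Matrix.one_mul]
  have hdecomp2 : B - k' • 1 = (B - ν₂' • 1) + (ν₂' - k') • 1 := by module
  have hPBk : P * (B - k' • 1) = (ν₂' - k') • P := by
    rw [hdecomp2, mul_add, hPB2, Matrix.mul_smul, Matrix.mul_one, zero_add]
  have hP2 : P * P = ((ν₂' - ν₃') * (ν₂' - k')) • P := by
    conv_lhs => rw [show P * P = P * ((B - ν₃' • 1) * (B - k' • 1)) from rfl]
    have : B - ν₃' • 1 = (B - ν₂' • 1) + (ν₂' - ν₃') • 1 := by module
    rw [this, add_mul, Matrix.smul_mul, Matrix.one_mul, mul_add, ← Matrix.mul_assoc, hPB2,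
      Matrix.zero_mul, zero_add, Matrix.mul_smul, hPBk, smul_smul]
  set c : ℚ := ((ν₂' - ν₃') * (ν₂' - k'))⁻¹ with hcdef
  have hcne : (ν₂' - ν₃') * (ν₂' - k') ≠ 0 := mul_ne_zero hne23 hnek2
  set E : Matrix G G ℚ := c • P with hEdef
  have hEE : E * E = E := by
    rw [hEdef, Matrix.smul_mul, Matrix.mul_smul, hP2, smul_smul, smul_smul]
    congr 1
    rw [hcdef]
    field_simp [hcdef]
  -- Q and its annihilating polynomial
  have hcommLB : Commute Λ B := hLB
  have hcommLP : Commute Λ P :=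
    (hcommLB.sub_right (hcomm_smul ν₃' Λ).symm).mul_right
      (hcommLB.sub_right (hcomm_smul k' Λ).symm)
  have hcommLE : Commute Λ E := hcommLP.smul_right c
  set Q : Matrix G G ℚ := Λ * E with hQdef
  set N : ℕ := orderOf x with hNdef
  have hN1 : 1 ≤ N := orderOf_pos x
  have hEpow : ∀ j : ℕ, E ^ (j + 1) = E := by
    intro j
    induction j with
    | zero => simp
    | succ nn ih => rw [pow_succ, ih, hEE]
  have hQpow : Q ^ (N + 1) = Q := by
    rw [hQdef, hcommLE.mul_pow, hEpow N, hlam_pow, pow_succ, hNdef, pow_orderOf_eq_one,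
      one_mul, hLdef]
  have hmonic : (Polynomial.X ^ (N + 1) - Polynomial.X : Polynomial ℤ).Monic := by
    apply Polynomial.monic_X_pow_sub
    rw [Polynomial.degree_X]
    norm_cast
    omega
  have hann : Polynomial.aeval Q (Polynomial.X ^ (N + 1) - Polynomial.X : Polynomial ℤ) = 0 := by
    rw [map_sub, Polynomial.aeval_X_pow, Polynomial.aeval_X, hQpow, sub_self]
  obtain ⟨t, ht⟩ := trace_int_of_ann Q hmonic hann
  refine ⟨t, ?_⟩
  -- compute the trace of Q
  have hexpandP : P = B * B - (ν₃' + k') • B + (ν₃' * k') • 1 := by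
    rw [hPdef]
    simp only [sub_mul, mul_sub, Matrix.smul_mul, Matrix.mul_smul, Matrix.one_mul,
      Matrix.mul_one, smul_smul, add_smul]
    module
  have htrLBB : Matrix.trace (Λ * (B * B)) = (ν₂' + ν₃') * N₁ + (m : ℚ) * v := by
    rw [hB2']
    rw [mul_add, mul_sub, Matrix.mul_smul, Matrix.mul_smul, Matrix.mul_smul, Matrix.mul_one]
    rw [Matrix.trace_add, Matrix.trace_sub, Matrix.trace_smul, Matrix.trace_smul,
      Matrix.trace_smul, htrLB, htrL, htrLJ]
    simp
  have htrQ : Matrix.trace Q = c * ((ν₂' - k') * N₁ + (m : ℚ) * v) := by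
    rw [hQdef, hEdef, Matrix.mul_smul, Matrix.trace_smul, hexpandP]
    rw [mul_add, mul_sub, Matrix.mul_smul, Matrix.mul_smul, ← Matrix.mul_assoc, Matrix.mul_one]
    rw [Matrix.trace_add, Matrix.trace_sub, Matrix.trace_smul, Matrix.trace_smul,
      htrLB, htrL, Matrix.mul_assoc, htrLBB]
    simp only [smul_eq_mul, mul_zero]
    ring
  -- conclude
  have hfinal : (N₁ : ℚ) = (k' - ν₃') + (t : ℚ) * (ν₂' - ν₃') := by
    rw [ht] at htrQ
    rw [hmv'] at htrQ
    have h2 : (t : ℚ) * ((ν₂' - ν₃') * (ν₂' - k')) = (ν₂' - k') * N₁ + (k' - ν₂') * (k' - ν₃') := by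
      rw [htrQ, hcdef]
      field_simp
    have h3 : (ν₂' - k') * ((t : ℚ) * (ν₂' - ν₃')) = (ν₂' - k') * (N₁ - (k' - ν₃')) := by
      ring_nf
      ring_nf at h2
      linarith [h2]
    have h4 := mul_left_cancel₀ hnek2 h3
    linarith [h4]
  rw [hv2', hv3', hk'] at hfinal
  exact_mod_cast hfinal


open Finset in
lemma conj_count {G : Type*} [Group G] [Fintype G] [DecidableEq G] (x : G) (T : Set G)
    [DecidablePred (· ∈ T)] :
    (Finset.univ.filter (fun g : G => g⁻¹ * x * g ∈ T)).card
      = (Finset.univ.filter (fun g : G => g⁻¹ * x * g = x)).card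
        * Set.ncard ({y : G | ∃ g : G, g * x * g⁻¹ = y} ∩ T) := by
  classical
  set f : G → G := fun g => g⁻¹ * x * g with hfdef
  set Tgt : Finset G := Finset.univ.filter (fun y => (∃ g : G, g * x * g⁻¹ = y) ∧ y ∈ T)
    with hTgt
  have hset : ({y : G | ∃ g : G, g * x * g⁻¹ = y} ∩ T) = (↑Tgt : Set G) := by
    ext y
    simp [hTgt, Set.mem_inter_iff]
  rw [hset, Set.ncard_coe_finset]
  have hmem : ∀ g ∈ Finset.univ.filter (fun g : G => f g ∈ T), f g ∈ Tgt := by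
    intro g hg
    simp only [hTgt, Finset.mem_filter, Finset.mem_univ, true_and] at hg ⊢
    refine ⟨⟨g⁻¹, ?_⟩, hg⟩
    rw [hfdef]; group
  rw [Finset.card_eq_sum_card_fiberwise hmem]
  have hfib : ∀ y ∈ Tgt,
      ((Finset.univ.filter (fun g : G => f g ∈ T)).filter (fun g => f g = y)).card
        = (Finset.univ.filter (fun g : G => f g = x)).card := by
    intro y hy
    simp only [hTgt, Finset.mem_filter, Finset.mem_univ, true_and] at hy
    obtain ⟨⟨g₀, hg₀⟩, hyT⟩ := hy
    have hy0 : f g₀⁻¹ = y := by simp only [hfdef, ← hg₀]; group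
    have hstep : ((Finset.univ.filter (fun g : G => f g ∈ T)).filter (fun g => f g = y))
        = Finset.univ.filter (fun g : G => f g = y) := by
      ext g
      simp only [Finset.mem_filter, Finset.mem_univ, true_and]
      constructor
      · rintro ⟨-, h2⟩; exact h2
      · intro h2; exact ⟨by rw [h2]; exact hyT, h2⟩
    rw [hstep]
    apply Finset.card_bij' (fun g _ => g * g₀) (fun g _ => g * g₀⁻¹)
    · intro g hg
      simp only [hfdef, Finset.mem_filter, Finset.mem_univ, true_and] at hg ⊢
      have hexp : (g * g₀)⁻¹ * x * (g * g₀) = g₀⁻¹ * (g⁻¹ * x * g) * g₀ := by group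
      rw [hexp, hg, ← hg₀]
      group
    · intro g hg
      simp only [hfdef, Finset.mem_filter, Finset.mem_univ, true_and] at hg ⊢
      have hexp : (g * g₀⁻¹)⁻¹ * x * (g * g₀⁻¹) = g₀ * (g⁻¹ * x * g) * g₀⁻¹ := by group
      rw [hexp, hg, hg₀]
    · intro g hg; group
    · intro g hg; group
  rw [Finset.sum_congr rfl hfib, Finset.sum_const, smul_eq_mul, mul_comm]


section MainProof

theorem regular_action_gcd_restriction' {V G : Type*} [Fintype V] [Group G] [Fintype G]
    (Γ : SimpleGraph V) [DecidableRel Γ.Adj] [MulAction G V]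
    (v k l m : ℕ) (ν₂ ν₃ : ℤ) (r : ℕ)
    (h : Γ.IsSRGWith v k l m) (hm : 0 < m)
    (hν₂ : (ν₂ : ℝ) = ((l : ℝ) - m + Real.sqrt (((l : ℝ) - m) ^ 2 + 4 * ((k : ℝ) - m))) / 2)
    (hν₃ : (ν₃ : ℝ) = ((l : ℝ) - m - Real.sqrt (((l : ℝ) - m) ^ 2 + 4 * ((k : ℝ) - m))) / 2)
    (h23 : ν₂ > ν₃)
    (hr : r = Int.gcd (ν₂ * (ν₃ + 1)) (ν₃ * (ν₂ + 1)))
    (hcop : Nat.gcd r m = 1)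
    (hpres : ∀ (g : G) (a b : V), Γ.Adj a b ↔ Γ.Adj (g • a) (g • b))
    (htrans : ∀ a b : V, ∃ g : G, g • a = b)
    (hfree : ∀ (g : G) (a : V), g • a = a → g = 1)
    (α : V) :
    (1 < r → ∀ x : G, x ≠ 1 →
        ({y : G | ∃ g : G, g * x * g⁻¹ = y} ∩
          ({g : G | Γ.Adj (g • α) α} ∪ {1})).Nonempty) ∧
    (∀ x : G, x ≠ 1 →
        r ∣ Set.ncard ({y : G | ∃ g : G, g * x * g⁻¹ = y} ∩
          (({g : G | Γ.Adj (g • α) α} ∪ {1}) : Set G)ᶜ)) := by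
  classical
  -- eigenvalue arithmetic
  have hsub : (ν₂ : ℝ) - ν₃ = Real.sqrt (((l : ℝ) - m) ^ 2 + 4 * ((k : ℝ) - m)) := by
    rw [hν₂, hν₃]; ring
  have hspos : 0 < Real.sqrt (((l : ℝ) - m) ^ 2 + 4 * ((k : ℝ) - m)) := by
    have h1 : (ν₃ : ℝ) < ν₂ := by exact_mod_cast h23
    linarith [hsub]
  have hD0 : 0 ≤ ((l : ℝ) - m) ^ 2 + 4 * ((k : ℝ) - m) := by
    by_contra hneg
    push_neg at hneg
    have : Real.sqrt (((l : ℝ) - m) ^ 2 + 4 * ((k : ℝ) - m)) = 0 :=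
      Real.sqrt_eq_zero_of_nonpos (le_of_lt hneg)
    rw [this] at hspos; exact lt_irrefl 0 hspos
  have hs2 : Real.sqrt (((l : ℝ) - m) ^ 2 + 4 * ((k : ℝ) - m)) ^ 2
      = ((l : ℝ) - m) ^ 2 + 4 * ((k : ℝ) - m) := Real.sq_sqrt hD0
  have hsumR : (ν₂ : ℝ) + ν₃ = (l : ℝ) - m := by rw [hν₂, hν₃]; ring
  have hsum : ν₂ + ν₃ = (l : ℤ) - m := by exact_mod_cast hsumR
  have hprodR : (ν₂ : ℝ) * ν₃ = (m : ℝ) - k := by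
    rw [hν₂, hν₃]
    nlinarith [hs2]
  have hprod : ν₂ * ν₃ = (m : ℤ) - k := by exact_mod_cast hprodR
  have h23' : ν₂ ≠ ν₃ := ne_of_gt h23
  -- cardinality of G
  have hinj : Function.Injective (fun g : G => g • α) := by
    intro p q hab
    simp only at hab
    have h1 : (q⁻¹ * p) • α = α := by rw [mul_smul, hab, inv_smul_smul]
    have h2 := hfree _ _ h1
    rwa [inv_mul_eq_one, eq_comm] at h2
  have hsurj : Function.Surjective (fun g : G => g • α) := fun b => htrans α b
  have hcardG : Fintype.card G = v := by
    rw [Fintype.card_congr (Equiv.ofBijective _ ⟨hinj, hsurj⟩)]; exact h.card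
  -- gcd facts
  have hra : (r : ℤ) ∣ ν₂ * (ν₃ + 1) := by rw [hr]; exact Int.gcd_dvd_left _ _
  have hrb : (r : ℤ) ∣ ν₃ * (ν₂ + 1) := by rw [hr]; exact Int.gcd_dvd_right _ _
  have hrd : (r : ℤ) ∣ (ν₂ - ν₃) := by
    have heq : ν₂ - ν₃ = ν₂ * (ν₃ + 1) - ν₃ * (ν₂ + 1) := by ring
    rw [heq]; exact dvd_sub hra hrb
  have hkν₃ : (k : ℤ) - ν₃ = (m : ℤ) - ν₃ * (ν₂ + 1) := by linear_combination hprod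
  have hkν₂ : (k : ℤ) - ν₂ = (m : ℤ) - ν₂ * (ν₃ + 1) := by linear_combination hprod
  have hcpz : IsCoprime (r : ℤ) (m : ℤ) := by
    rw [Int.isCoprime_iff_gcd_eq_one]
    simpa [Int.gcd_natCast_natCast] using hcop
  -- per-x facts
  have main : ∀ x : G, x ≠ 1 →
      ((1 < r → ({y : G | ∃ g : G, g * x * g⁻¹ = y} ∩
          ({g : G | Γ.Adj (g • α) α} ∪ {1})).Nonempty) ∧
       r ∣ Set.ncard ({y : G | ∃ g : G, g * x * g⁻¹ = y} ∩
          (({g : G | Γ.Adj (g • α) α} ∪ {1}) : Set G)ᶜ)) := by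
    intro x hx
    obtain ⟨hmv, t, hteq⟩ := key_identity Γ v k l m ν₂ ν₃ h hsum hprod h23' hm hpres htrans
      hfree α x hx
    set Δ : Set G := {g : G | Γ.Adj (g • α) α} ∪ {1} with hΔdef
    set xG : Set G := {y : G | ∃ g : G, g * x * g⁻¹ = y} with hxGdef
    set c₀ : ℕ := (Finset.univ.filter (fun g : G => g⁻¹ * x * g = x)).card with hc₀def
    -- counting with T = Δ
    have hfe : ∀ g : G, (g⁻¹ * x * g ∈ Δ) ↔ Γ.Adj ((g⁻¹ * x * g) • α) α := by
      intro g
      simp only [hΔdef, Set.mem_union, Set.mem_setOf_eq, Set.mem_singleton_iff]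
      constructor
      · rintro (h1 | h1)
        · exact h1
        · exfalso
          apply hx
          have : x = g * (g⁻¹ * x * g) * g⁻¹ := by group
          rw [h1] at this
          simpa using this
      · intro h1; exact Or.inl h1
    have hcount1 := conj_count x Δ
    have hfilter1 : Finset.univ.filter (fun g : G => g⁻¹ * x * g ∈ Δ)
        = Finset.univ.filter (fun g : G => Γ.Adj ((g⁻¹ * x * g) • α) α) := by
      apply Finset.filter_congr
      intro g _
      simp [hfe g]
    rw [hfilter1] at hcount1
    have hc1 : (c₀ : ℤ) * (xG ∩ Δ).ncard = (k : ℤ) - ν₃ + t * (ν₂ - ν₃) := by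
      rw [← hteq, hcount1]
      push_cast
      ring
    -- counting with T = univ
    have hcount2 := conj_count x (Set.univ : Set G)
    simp only [Set.mem_univ, Finset.filter_true, Set.inter_univ] at hcount2
    have hGv : (v : ℤ) = (c₀ : ℤ) * (xG).ncard := by
      have : Fintype.card G = c₀ * (xG).ncard := by
        rw [← hcount2]; simp [Finset.card_univ]
      rw [← hcardG]
      exact_mod_cast this
    -- counting with T = Δᶜ
    have hcount3 := conj_count x Δᶜ
    -- partition of the conjugacy class
    have hsplit : (xG ∩ Δ).ncard + (xG ∩ Δᶜ).ncard = (xG).ncard := by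
      have h1 : (xG ∩ Δ) ∪ (xG ∩ Δᶜ) = xG := by
        rw [← Set.inter_union_distrib_left, Set.union_compl_self, Set.inter_univ]
      have h2 : Disjoint (xG ∩ Δ) (xG ∩ Δᶜ) :=
        Set.disjoint_of_subset Set.inter_subset_right Set.inter_subset_right
          disjoint_compl_right
      calc (xG ∩ Δ).ncard + (xG ∩ Δᶜ).ncard
          = ((xG ∩ Δ) ∪ (xG ∩ Δᶜ)).ncard :=
            (Set.ncard_union_eq h2 (Set.toFinite _) (Set.toFinite _)).symm
        _ = (xG).ncard := by rw [h1]
    have hc₀n₂ : (c₀ : ℤ) * (xG ∩ Δᶜ).ncard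
        = (v : ℤ) - ((k : ℤ) - ν₃) - t * (ν₂ - ν₃) := by
      have := hsplit
      have hcast : ((xG ∩ Δᶜ).ncard : ℤ) = (xG).ncard - (xG ∩ Δ).ncard := by
        rw [← this]; push_cast; ring
      rw [hcast, mul_sub, ← hGv, hc1]
      ring
    -- r divides v - m
    have hmv2 : (m : ℤ) * ((v : ℤ) - m)
        = (ν₂ * (ν₃ + 1)) * (ν₃ * (ν₂ + 1)) - m * (ν₂ * (ν₃ + 1) + ν₃ * (ν₂ + 1)) := by
      rw [hkν₂, hkν₃] at hmv
      linear_combination hmv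
    have hrvm : (r : ℤ) ∣ (v : ℤ) - m := by
      have h1 : (r : ℤ) ∣ (ν₂ * (ν₃ + 1)) * (ν₃ * (ν₂ + 1))
          - m * (ν₂ * (ν₃ + 1) + ν₃ * (ν₂ + 1)) :=
        dvd_sub (hra.mul_right _) ((hra.add hrb).mul_left _)
      rw [← hmv2] at h1
      exact hcpz.dvd_of_dvd_mul_left h1
    constructor
    · -- part 1
      intro hr1
      by_contra hne
      rw [Set.not_nonempty_iff_eq_empty] at hne
      rw [hne, Set.ncard_empty] at hc1
      have hmval : (m : ℤ) = ν₃ * (ν₂ + 1) - t * (ν₂ - ν₃) := by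
        have : (0 : ℤ) = (k : ℤ) - ν₃ + t * (ν₂ - ν₃) := by rw [← hc1]; ring
        rw [hkν₃] at this
        linarith
      have hrm : (r : ℤ) ∣ (m : ℤ) := by
        rw [hmval]; exact dvd_sub hrb (hrd.mul_left t)
      have : r ∣ m := by exact_mod_cast hrm
      have : r ∣ Nat.gcd r m := Nat.dvd_gcd dvd_rfl this
      rw [hcop] at this
      have := Nat.le_of_dvd one_pos this
      omega
    · -- part 2
      have hrdvd : (r : ℤ) ∣ (c₀ : ℤ) * (xG ∩ Δᶜ).ncard := by
        rw [hc₀n₂, hkν₃]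
        have : (v : ℤ) - ((m : ℤ) - ν₃ * (ν₂ + 1)) - t * (ν₂ - ν₃)
            = ((v : ℤ) - m) + ν₃ * (ν₂ + 1) - t * (ν₂ - ν₃) := by ring
        rw [this]
        exact dvd_sub (dvd_add hrvm hrb) (hrd.mul_left t)
      have hnat : r ∣ c₀ * (xG ∩ Δᶜ).ncard := by exact_mod_cast hrdvd
      -- coprimality of r and c₀
      have hc₀v : c₀ ∣ v := by
        have : (c₀ : ℤ) ∣ (v : ℤ) := Dvd.intro _ (by rw [hGv])
        exact_mod_cast this
      have hrv : Nat.Coprime r v := by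
        have hgd := Nat.gcd_dvd_left r v
        have hgv := Nat.gcd_dvd_right r v
        have h1 : ((Nat.gcd r v : ℤ)) ∣ (v : ℤ) - m :=
          dvd_trans (by exact_mod_cast hgd) hrvm
        have h2 : ((Nat.gcd r v : ℤ)) ∣ (m : ℤ) := by
          have h3 : ((Nat.gcd r v : ℤ)) ∣ (v : ℤ) := by exact_mod_cast hgv
          have := dvd_sub h3 h1
          simpa using this
        have h4 : Nat.gcd r v ∣ m := by exact_mod_cast h2
        have h5 : Nat.gcd r v ∣ Nat.gcd r m := Nat.dvd_gcd hgd h4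
        rw [hcop] at h5
        exact Nat.eq_one_of_dvd_one h5
      have hrc : Nat.Coprime r c₀ := Nat.Coprime.coprime_dvd_right hc₀v hrv
      exact (Nat.Coprime.dvd_of_dvd_mul_left hrc hnat)
  exact ⟨fun hr1 x hx => (main x hx).1 hr1, fun x hx => (main x hx).2⟩

end MainProof



/-- Let `Γ` be a `(v,k,λ,μ)`-strongly regular graph with integer eigenvalues
`k, ν₂ > ν₃` and `μ > 0`, let `G` act regularly on the vertices of `Γ`, fix a vertex
`α`, and let `Δ = {g : Γ.Adj (g • α) α} ∪ {1}`.  Set `r = gcd(ν₂(ν₃+1), ν₃(ν₂+1))`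
and assume `gcd(r, μ) = 1`.  Then: (1) if `r > 1` then `x^G ∩ Δ ≠ ∅` for every
nontrivial `x`; (2) `|x^G ∩ Δᶜ|` is a multiple of `r` for every nontrivial `x`. -/
theorem regular_action_gcd_restriction {V G : Type*} [Fintype V] [Group G] [Fintype G]
    (Γ : SimpleGraph V) [DecidableRel Γ.Adj] [MulAction G V]
    (v k l m : ℕ) (ν₂ ν₃ : ℤ) (r : ℕ)
    (h : Γ.IsSRGWith v k l m) (hm : 0 < m)
    (hν₂ : (ν₂ : ℝ) = ((l : ℝ) - m + Real.sqrt (((l : ℝ) - m) ^ 2 + 4 * ((k : ℝ) - m))) / 2)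
    (hν₃ : (ν₃ : ℝ) = ((l : ℝ) - m - Real.sqrt (((l : ℝ) - m) ^ 2 + 4 * ((k : ℝ) - m))) / 2)
    (h23 : ν₂ > ν₃)
    (hr : r = Int.gcd (ν₂ * (ν₃ + 1)) (ν₃ * (ν₂ + 1)))
    (hcop : Nat.gcd r m = 1)
    (hpres : ∀ (g : G) (a b : V), Γ.Adj a b ↔ Γ.Adj (g • a) (g • b))
    (htrans : ∀ a b : V, ∃ g : G, g • a = b)
    (hfree : ∀ (g : G) (a : V), g • a = a → g = 1)
    (α : V) :
    (1 < r → ∀ x : G, x ≠ 1 →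
        ({y : G | ∃ g : G, g * x * g⁻¹ = y} ∩
          ({g : G | Γ.Adj (g • α) α} ∪ {1})).Nonempty) ∧
    (∀ x : G, x ≠ 1 →
        r ∣ Set.ncard ({y : G | ∃ g : G, g * x * g⁻¹ = y} ∩
          (({g : G | Γ.Adj (g • α) α} ∪ {1}) : Set G)ᶜ)) := by
  exact regular_action_gcd_restriction' Γ v k l m ν₂ ν₃ r h hm hν₂ hν₃ h23 hr hcop
    hpres htrans hfree α
end

section
/- Let G act regularly on the point set of a partial geometry of order (s,t,α), fix a point O, and let Δ = {g ∈ G : O^g ~ O} ∪ {1}. If s + t − α + 1 does not divide (s+1)(t+1), then x^G ∩ Δ ≠ ∅ for every nontrivial x ∈ G. -/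
/-- A partial geometry `pg(s,t,α)`. -/
structure IsPartialGeometry {P L : Type*} (incid : P → L → Prop) (s t a : ℕ) : Prop where
  point_lines : ∀ p : P, Nat.card {l : L | incid p l} = t + 1
  line_points : ∀ l : L, Nat.card {p : P | incid p l} = s + 1
  unique_line : ∀ p q : P, p ≠ q → Set.Subsingleton {l : L | incid p l ∧ incid q l}
  unique_point : ∀ l l' : L, l ≠ l' → Set.Subsingleton {p : P | incid p l ∧ incid p l'}
  alpha_count : ∀ (p : P) (l : L), ¬ incid p l →
    Nat.card {q : P | incid q l ∧ q ≠ p ∧ ∃ l', incid p l' ∧ incid q l'} = a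

/-- Two points are collinear if they are distinct and lie on a common line. -/
def CollinearPts {P L : Type*} (incid : P → L → Prop) (p q : P) : Prop :=
  p ≠ q ∧ ∃ l, incid p l ∧ incid q l

set_option linter.unusedSectionVars false
set_option linter.unusedVariables false

section Geometry

variable {P L : Type*} [Fintype P] [Fintype L] {incid : P → L → Prop} {s t a : ℕ}

lemma collinearPts_symm {p q : P} (h : CollinearPts incid p q) : CollinearPts incid q p :=
  ⟨h.1.symm, h.2.imp fun _ hl => ⟨hl.2, hl.1⟩⟩

lemma natCard_filter (p : P → Prop) [DecidablePred p] :
    Nat.card {x | p x} = (Finset.univ.filter p).card := by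
  rw [Nat.card_eq_fintype_card]
  exact Fintype.card_subtype p

lemma pg_count_aux (h : IsPartialGeometry incid s t a) (q : P) (Φ : P → Prop) (c : L → ℕ)
    (hc : ∀ l, incid q l → Nat.card {r : P | incid r l ∧ r ≠ q ∧ Φ r} = c l) :
    ∃ T : Finset L, (∀ l, l ∈ T ↔ incid q l) ∧ T.card = t + 1 ∧
      Nat.card {r : P | CollinearPts incid r q ∧ Φ r} = ∑ l ∈ T, c l := by
  classical
  have hL : Nonempty L := by
    have h1 : Nat.card {l : L | incid q l} = t + 1 := h.point_lines q
    have h2 : Nat.card {l : L | incid q l} ≠ 0 := by omega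
    obtain ⟨⟨l, _⟩⟩ := (Nat.card_ne_zero.mp h2).1
    exact ⟨l⟩
  inhabit L
  refine ⟨Finset.univ.filter (incid q ·), by simp, ?_, ?_⟩
  · rw [← natCard_filter]; exact h.point_lines q
  · set T := Finset.univ.filter (incid q ·) with hTdef
    have hT : ∀ l, l ∈ T ↔ incid q l := by simp [hTdef]
    set f : P → L := fun r =>
      if hr : ∃ l, incid r l ∧ incid q l then hr.choose else default with hfdef
    have hf : ∀ r : P, CollinearPts incid r q → incid r (f r) ∧ incid q (f r) := by
      intro r hr
      obtain ⟨hne, hex⟩ := hr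
      simp only [hfdef, dif_pos hex]
      exact ⟨hex.choose_spec.1, hex.choose_spec.2⟩
    have huniq : ∀ r : P, r ≠ q → ∀ l, incid r l → incid q l → f r = l := by
      intro r hne l h1 h2
      have hex : ∃ l, incid r l ∧ incid q l := ⟨l, h1, h2⟩
      have hfr : incid r (f r) ∧ incid q (f r) := hf r ⟨hne, hex⟩
      exact h.unique_line r q hne hfr ⟨h1, h2⟩
    rw [natCard_filter]
    rw [Finset.card_eq_sum_card_fiberwise (f := f) (t := T)
      (fun r hr => by
        simp only [Finset.mem_coe, Finset.mem_filter, Finset.mem_univ, true_and] at hr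
        exact (hT _).mpr (hf r hr.1).2)]
    refine Finset.sum_congr rfl fun l hl => ?_
    rw [← hc l ((hT l).mp hl), natCard_filter, Finset.filter_filter]
    congr 1
    ext r
    simp only [Finset.mem_filter, Finset.mem_univ, true_and]
    constructor
    · rintro ⟨⟨⟨hne, hex⟩, hphi⟩, hfl⟩
      exact ⟨hfl ▸ (hf r ⟨hne, hex⟩).1, hne, hphi⟩
    · rintro ⟨hrl, hne, hphi⟩
      have hql : incid q l := (hT l).mp hl
      exact ⟨⟨⟨hne, ⟨l, hrl, hql⟩⟩, hphi⟩, huniq r hne l hrl hql⟩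

lemma pg_line_ncard (h : IsPartialGeometry incid s t a) (l : L) :
    {r : P | incid r l}.ncard = s + 1 := by
  rw [← Nat.card_coe_set_eq]; exact h.line_points l

lemma pg_count_nbrs (h : IsPartialGeometry incid s t a) (p : P) :
    Nat.card {q : P | CollinearPts incid q p} = s * (t + 1) := by
  have hc : ∀ l, incid p l → Nat.card {r : P | incid r l ∧ r ≠ p ∧ True} = s := by
    intro l hl
    have he : {r : P | incid r l ∧ r ≠ p ∧ True} = {r : P | incid r l} \ {p} := by
      ext r; simp [and_comm]
    rw [he, Nat.card_coe_set_eq,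
      Set.ncard_diff_singleton_of_mem (s := {r : P | incid r l}) hl, pg_line_ncard h l]
    omega
  obtain ⟨T, hT, hTcard, hcount⟩ := pg_count_aux h p (fun _ => True) (fun _ => s) hc
  have he : {r : P | CollinearPts incid r p ∧ True} = {q : P | CollinearPts incid q p} := by
    simp
  rw [he] at hcount
  rw [hcount, Finset.sum_const, hTcard, smul_eq_mul, mul_comm]

lemma pg_count_common_nonadj (h : IsPartialGeometry incid s t a) {p q : P}
    (hne : p ≠ q) (hnc : ¬ CollinearPts incid p q) :
    Nat.card {r : P | CollinearPts incid r p ∧ CollinearPts incid r q} = a * (t + 1) := by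
  have hc : ∀ l, incid q l →
      Nat.card {r : P | incid r l ∧ r ≠ q ∧ CollinearPts incid r p} = a := by
    intro l hl
    have hpl : ¬ incid p l := fun hpl => hnc ⟨hne, l, hpl, hl⟩
    have he : {r : P | incid r l ∧ r ≠ q ∧ CollinearPts incid r p}
        = {r : P | incid r l ∧ r ≠ p ∧ ∃ l', incid p l' ∧ incid r l'} := by
      ext r
      simp only [Set.mem_setOf_eq]
      constructor
      · rintro ⟨hrl, _, hrp, l', h1, h2⟩
        exact ⟨hrl, hrp, l', h2, h1⟩
      · rintro ⟨hrl, hrp, l', h1, h2⟩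
        refine ⟨hrl, fun hrq => ?_, hrp, l', h2, h1⟩
        exact hnc (collinearPts_symm (hrq ▸ (⟨hrp, l', h2, h1⟩ : CollinearPts incid r p)))
    rw [he, h.alpha_count p l hpl]
  obtain ⟨T, hT, hTcard, hcount⟩ := pg_count_aux h q (fun r => CollinearPts incid r p)
    (fun _ => a) hc
  have he : {r : P | CollinearPts incid r q ∧ CollinearPts incid r p}
      = {r : P | CollinearPts incid r p ∧ CollinearPts incid r q} := by
    ext r; exact and_comm
  rw [he] at hcount
  rw [hcount, Finset.sum_const, hTcard, smul_eq_mul, mul_comm]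

lemma pg_count_common_adj (h : IsPartialGeometry incid s t a) (ha : 1 ≤ a) {p q : P}
    (hpq : CollinearPts incid p q) :
    1 ≤ s ∧ Nat.card {r : P | CollinearPts incid r p ∧ CollinearPts incid r q}
      = (s - 1) + t * (a - 1) := by
  classical
  obtain ⟨hne, l0, hpl0, hql0⟩ := hpq
  have hs1 : 1 ≤ s := by
    have hsub : ({p, q} : Set P) ⊆ {r : P | incid r l0} := by
      rintro r (rfl | rfl) <;> simpa
    have h2 : ({p, q} : Set P).ncard ≤ {r : P | incid r l0}.ncard :=
      Set.ncard_le_ncard hsub (Set.toFinite _)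
    rw [Set.ncard_pair hne, pg_line_ncard h l0] at h2
    omega
  refine ⟨hs1, ?_⟩
  have hc : ∀ l, incid q l →
      Nat.card {r : P | incid r l ∧ r ≠ q ∧ CollinearPts incid r p}
        = if l = l0 then s - 1 else a - 1 := by
    intro l hl
    by_cases hll0 : l = l0
    · subst hll0
      rw [if_pos rfl]
      have he : {r : P | incid r l ∧ r ≠ q ∧ CollinearPts incid r p}
          = ({r : P | incid r l} \ {p}) \ {q} := by
        ext r
        simp only [Set.mem_setOf_eq, Set.mem_diff, Set.mem_singleton_iff]
        constructor
        · rintro ⟨hrl, hrq, hrp, _⟩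
          exact ⟨⟨hrl, hrp⟩, hrq⟩
        · rintro ⟨⟨hrl, hrp⟩, hrq⟩
          exact ⟨hrl, hrq, hrp, l, hrl, hpl0⟩
      have hq1 : q ∈ {r : P | incid r l} \ {p} := by
        simp only [Set.mem_diff, Set.mem_singleton_iff, Set.mem_setOf_eq]
        exact ⟨hl, hne.symm⟩
      rw [he, Nat.card_coe_set_eq,
        Set.ncard_diff_singleton_of_mem hq1,
        Set.ncard_diff_singleton_of_mem (s := {r : P | incid r l}) hpl0, pg_line_ncard h l]
      omega
    · rw [if_neg hll0]
      have hpl : ¬ incid p l := fun hpl =>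
        hll0 (h.unique_line p q hne ⟨hpl, hl⟩ ⟨hpl0, hql0⟩)
      have he : {r : P | incid r l ∧ r ≠ q ∧ CollinearPts incid r p}
          = {r : P | incid r l ∧ r ≠ p ∧ ∃ l', incid p l' ∧ incid r l'} \ {q} := by
        ext r
        simp only [Set.mem_setOf_eq, Set.mem_diff, Set.mem_singleton_iff]
        constructor
        · rintro ⟨hrl, hrq, hrp, l', h1, h2⟩
          exact ⟨⟨hrl, hrp, l', h2, h1⟩, hrq⟩
        · rintro ⟨⟨hrl, hrp, l', h1, h2⟩, hrq⟩
          exact ⟨hrl, hrq, hrp, l', h2, h1⟩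
      have hqmem : q ∈ {r : P | incid r l ∧ r ≠ p ∧ ∃ l', incid p l' ∧ incid r l'} :=
        ⟨hl, hne.symm, l0, hpl0, hql0⟩
      rw [he, Nat.card_coe_set_eq,
        Set.ncard_diff_singleton_of_mem hqmem,
        ← Nat.card_coe_set_eq, h.alpha_count p l hpl]
  obtain ⟨T, hT, hTcard, hcount⟩ := pg_count_aux h q (fun r => CollinearPts incid r p)
    (fun l => if l = l0 then s - 1 else a - 1) hc
  have he : {r : P | CollinearPts incid r q ∧ CollinearPts incid r p}
      = {r : P | CollinearPts incid r p ∧ CollinearPts incid r q} := by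
    ext r; exact and_comm
  rw [he] at hcount
  rw [hcount]
  have hl0T : l0 ∈ T := (hT l0).mpr hql0
  rw [← Finset.add_sum_erase T _ hl0T, if_pos rfl]
  congr 1
  rw [Finset.sum_congr rfl (fun l hl => if_neg (Finset.ne_of_mem_erase hl)),
    Finset.sum_const, Finset.card_erase_of_mem hl0T, hTcard, smul_eq_mul]
  simp

end Geometry


open Matrix Polynomial

section MatrixObstruction

variable {G : Type*} [Fintype G] [DecidableEq G] [Nonempty G]

lemma eval_charpoly' (M : Matrix G G ℂ) (z : ℂ) :
    M.charpoly.eval z = (z • (1 : Matrix G G ℂ) - M).det := by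
  rw [Matrix.charpoly, ← Polynomial.coe_evalRingHom, RingHom.map_det]
  congr 1
  ext i j
  by_cases hij : i = j
  · subst hij; simp [charmatrix_apply_eq]
  · simp [charmatrix_apply_ne _ _ _ hij, Matrix.one_apply_ne hij]

lemma multiset_sum_integral (s : Multiset ℂ) (hs : ∀ z ∈ s, IsIntegral ℤ z) :
    IsIntegral ℤ s.sum := by
  induction s using Multiset.induction with
  | empty => simpa using isIntegral_zero
  | cons z s ih =>
    rw [Multiset.sum_cons]
    exact (hs z (by simp)).add (ih fun w hw => hs w (by simp [hw]))

lemma root_unity_integral (m : ℕ) (hm : 1 ≤ m) (z : ℂ) (hz : z ^ (m + 1) = z) :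
    IsIntegral ℤ z := by
  refine ⟨X ^ (m + 1) - X, Polynomial.monic_X_pow_sub ?_, ?_⟩
  · calc degree (X : ℤ[X]) = 1 := Polynomial.degree_X
      _ < (m + 1 : ℕ) := by exact_mod_cast Nat.lt_succ_of_le hm
  · simp [hz]

lemma matrix_obstruction
    (A B : Matrix G G ℂ) (k lam mu rr ss : ℤ) (m : ℕ) (hm : 1 ≤ m)
    (J : Matrix G G ℂ) (hJ : J = Matrix.of fun _ _ => (1 : ℂ))
    (hBm : B ^ m = 1)
    (hA2 : A * A = ((lam : ℂ) - mu) • A + ((k : ℂ) - mu) • 1 + (mu : ℂ) • J)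
    (hrs : (rr : ℂ) + ss = (lam : ℂ) - mu) (hprod : (rr : ℂ) * ss = -((k : ℂ) - mu))
    (hAJ : A * J = (k : ℂ) • J) (hJA : J * A = (k : ℂ) • J)
    (hBA : B * A = A * B) (hBJ : B * J = J) (hJB : J * B = J)
    (htrB : B.trace = 0) (htrBA : (B * A).trace = 0)
    (hd : rr ≠ ss) :
    (rr - ss) ∣ (k - ss) := by
  have hn0 : (Fintype.card G : ℂ) ≠ 0 := Nat.cast_ne_zero.mpr Fintype.card_ne_zero
  set n : ℂ := (Fintype.card G : ℂ) with hn
  have hJJ : J * J = n • J := by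
    subst hJ
    ext i j
    simp [Matrix.mul_apply, hn]
  have htrJ : J.trace = n := by
    subst hJ
    simp [Matrix.trace, Matrix.diag, hn]
  -- scalar identity
  have e0 : (k : ℂ) * k = ((lam : ℂ) - mu) * k + ((k : ℂ) - mu) + (mu : ℂ) * n := by
    have h1 : (A * A) * J = ((k : ℂ) * k) • J := by
      rw [Matrix.mul_assoc, hAJ, Matrix.mul_smul, hAJ, smul_smul]
    have h2 : (A * A) * J
        = (((lam : ℂ) - mu) * k + (((k : ℂ) - mu)) + (mu : ℂ) * n) • J := by
      rw [hA2, Matrix.add_mul, Matrix.add_mul, Matrix.smul_mul, Matrix.smul_mul,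
        Matrix.smul_mul, hAJ, Matrix.one_mul, hJJ, smul_smul, smul_smul,
        ← add_smul, ← add_smul]
    have h3 := h1.symm.trans h2
    have g0 : G := Classical.arbitrary G
    have h4 := congrFun (congrFun h3 g0) g0
    simpa [hJ, Matrix.smul_apply] using h4
  have hdC : ((rr : ℂ) - ss) ≠ 0 := by
    rw [sub_ne_zero]
    exact_mod_cast fun hEq => hd (by exact_mod_cast hEq)
  set d : ℂ := (rr : ℂ) - ss with hdd
  set c : ℂ := ((k : ℂ) - ss) / n with hc
  have hcn : c * n = (k : ℂ) - ss := by
    rw [hc]; field_simp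
  set M : Matrix G G ℂ := A - ((ss : ℂ)) • 1 - c • J with hM
  have hMe : M * M = (((lam : ℂ) - mu) - 2 * ss) • A + (((k : ℂ) - mu) + ss ^ 2) • 1
      + ((mu : ℂ) - 2 * c * k + 2 * ss * c + c * c * n) • J := by
    rw [hM]
    simp only [Matrix.sub_mul, Matrix.mul_sub, Matrix.smul_mul, Matrix.mul_smul,
      hA2, hAJ, hJA, hJJ, Matrix.mul_one, Matrix.one_mul, smul_smul]
    module
  have ec1 : ((lam : ℂ) - mu) - 2 * ss = d := by rw [hdd]; linear_combination -hrs
  have ec2 : ((k : ℂ) - mu) + ss ^ 2 = -(d * ss) := by rw [hdd]; linear_combination hprod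
  have hmun : (mu : ℂ) * n = ((k : ℂ) - ss) * ((k : ℂ) - rr) := by
    linear_combination (-1 : ℂ) * e0 + (k : ℂ) * hrs - hprod
  have ec3 : (mu : ℂ) - 2 * c * k + 2 * ss * c + c * c * n = -(d * c) := by
    have hccnn : c * c * n * n = ((k : ℂ) - ss) * ((k : ℂ) - ss) := by
      rw [show c * c * n * n = (c * n) * (c * n) by ring, hcn]
    apply mul_right_cancel₀ hn0
    rw [hdd]
    linear_combination hmun + (-2 * (k : ℂ) + 2 * (ss : ℂ) + ((rr : ℂ) - ss)) * hcn + hccnn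
  have hM2 : M * M = d • M := by
    rw [hMe, ec1, ec2, ec3, hM]
    module
  set E : Matrix G G ℂ := d⁻¹ • M with hE
  have hE2 : E * E = E := by
    rw [hE, Matrix.smul_mul, Matrix.mul_smul, hM2, smul_smul, smul_smul]
    congr 1
    field_simp
  have hBM : B * M = M * B := by
    rw [hM]
    simp only [Matrix.mul_sub, Matrix.sub_mul, Matrix.mul_smul, Matrix.smul_mul,
      hBA, hBJ, hJB, Matrix.mul_one, Matrix.one_mul]
  have hBE : B * E = E * B := by
    rw [hE, Matrix.mul_smul, Matrix.smul_mul, hBM]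
  set C : Matrix G G ℂ := B * E with hCdef
  have hCj : ∀ j : ℕ, C ^ (j + 1) = B ^ (j + 1) * E := by
    intro j
    induction j with
    | zero => simp [hCdef]
    | succ j ih =>
      rw [pow_succ, ih, hCdef, pow_succ]
      calc B ^ (j + 1) * E * (B * E) = B ^ (j + 1) * (E * B) * E := by
            rw [Matrix.mul_assoc, Matrix.mul_assoc, Matrix.mul_assoc]
        _ = B ^ (j + 1) * B * (E * E) := by
            rw [← hBE]
            rw [Matrix.mul_assoc, Matrix.mul_assoc, Matrix.mul_assoc]
        _ = B ^ (j + 1) * B * E := by rw [hE2]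
  have hCm : C ^ (m + 1) = C := by
    rw [hCj m, pow_succ, hBm, Matrix.one_mul, hCdef]
  -- trace of C
  have htrC : C.trace = -(((k : ℂ) - ss) / d) := by
    have hBMe : B * M = B * A - (ss : ℂ) • B - c • J := by
      rw [hM]
      simp only [Matrix.mul_sub, Matrix.mul_smul, Matrix.mul_one, hBJ]
    have h6 : C = d⁻¹ • (B * M) := by rw [hCdef, hE, Matrix.mul_smul]
    rw [h6, Matrix.trace_smul, hBMe, Matrix.trace_sub, Matrix.trace_sub,
      Matrix.trace_smul, Matrix.trace_smul, htrBA, htrB, htrJ]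
    rw [smul_eq_mul, smul_eq_mul, smul_eq_mul, hcn]
    field_simp
    ring
  -- every eigenvalue of C is integral
  have hroots : ∀ z ∈ C.charpoly.roots, IsIntegral ℤ z := by
    intro z hz
    have hz0 : C.charpoly.eval z = 0 := by
      have := Polynomial.isRoot_of_mem_roots hz
      exact this
    rw [eval_charpoly'] at hz0
    obtain ⟨v, hv0, hv⟩ := (Matrix.exists_mulVec_eq_zero_iff).2 hz0
    have hCv : C.mulVec v = z • v := by
      rw [Matrix.sub_mulVec, Matrix.smul_mulVec, Matrix.one_mulVec] at hv
      rw [sub_eq_zero] at hv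
      exact hv.symm
    have hpowv : ∀ j : ℕ, (C ^ (j + 1)).mulVec v = z ^ (j + 1) • v := by
      intro j
      induction j with
      | zero => simpa using hCv
      | succ j ih =>
        rw [pow_succ, ← Matrix.mulVec_mulVec, hCv]
        rw [Matrix.mulVec_smul, ih, smul_smul, pow_succ]
        ring_nf
    have h7 : z ^ (m + 1) • v = z • v := by
      rw [← hpowv m, hCm, hCv]
    obtain ⟨i, hi⟩ := Function.ne_iff.mp hv0
    have h8 : z ^ (m + 1) * v i = z * v i := by
      have := congrFun h7 i
      simpa [Pi.smul_apply, smul_eq_mul] using this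
    have h9 : z ^ (m + 1) = z := by
      exact mul_right_cancel₀ hi h8
    exact root_unity_integral m hm z h9
  have hint : IsIntegral ℤ C.trace := by
    rw [Matrix.trace_eq_sum_roots_charpoly]
    exact multiset_sum_integral _ hroots
  -- conclude divisibility
  rw [htrC] at hint
  have hqq : ((-(((k : ℚ) - ss) / ((rr : ℚ) - ss)) : ℚ) : ℂ)
      = -(((k : ℂ) - ss) / d) := by
    rw [hdd]
    push_cast
    ring
  have hq2 : IsIntegral ℤ (-(((k : ℚ) - ss) / ((rr : ℚ) - ss)) : ℚ) := by
    rw [← isIntegral_algebraMap_iff (algebraMap ℚ ℂ).injective]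
    have : algebraMap ℚ ℂ (-(((k : ℚ) - ss) / ((rr : ℚ) - ss)) : ℚ)
        = ((-(((k : ℚ) - ss) / ((rr : ℚ) - ss)) : ℚ) : ℂ) := by norm_num
    rw [this, hqq]
    exact hint
  obtain ⟨y, hy⟩ := IsIntegrallyClosed.isIntegral_iff.mp hq2
  have hdQ : ((rr : ℚ) - ss) ≠ 0 := by
    rw [sub_ne_zero]
    exact_mod_cast fun hEq => hd (by exact_mod_cast hEq)
  have hy2 : (y : ℚ) * ((rr : ℚ) - ss) = -((k : ℚ) - ss) := by
    have hy' : (y : ℚ) = -(((k : ℚ) - ss) / ((rr : ℚ) - ss)) := by exact_mod_cast hy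
    rw [hy']
    field_simp
  have hy3 : y * (rr - ss) = -(k - ss) := by exact_mod_cast hy2
  exact ⟨-y, by linarith⟩

end MatrixObstruction

/-- Let `G` act regularly on the point set of a partial geometry of order `(s,t,α)`,
fix a point `O`, and let `Δ = {g : O^g ~ O} ∪ {1}`.  If `s + t - α + 1` does not
divide `(s+1)(t+1)`, then `x^G ∩ Δ ≠ ∅` for every nontrivial `x ∈ G`. -/
theorem partialGeometry_class_meets_delta {P L G : Type*} [Fintype P] [Fintype L]
    [Group G] [Fintype G] [MulAction G P] [MulAction G L]
    (incid : P → L → Prop) (s t a : ℕ) (ha : 1 ≤ a)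
    (h : IsPartialGeometry incid s t a)
    (hpres : ∀ (g : G) (p : P) (l : L), incid p l ↔ incid (g • p) (g • l))
    (htrans : ∀ p q : P, ∃ g : G, g • p = q)
    (hfree : ∀ (g : G) (p : P), g • p = p → g = 1)
    (O : P)
    (hdvd : ¬ (((s : ℤ) + t - a + 1) ∣ ((s : ℤ) + 1) * ((t : ℤ) + 1)))
    (x : G) (hx : x ≠ 1) :
    ({y : G | ∃ g : G, g * x * g⁻¹ = y} ∩
      ({g : G | CollinearPts incid (g • O) O} ∪ {1})).Nonempty := by
  classical
  by_contra hcon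
  rw [Set.not_nonempty_iff_eq_empty] at hcon
  have hmiss : ∀ g : G, ¬ CollinearPts incid ((g * x * g⁻¹) • O) O ∧ g * x * g⁻¹ ≠ 1 := by
    intro g
    have hnotin : (g * x * g⁻¹) ∉ ({g : G | CollinearPts incid (g • O) O} ∪ {1} : Set G) :=
      fun hin => Set.eq_empty_iff_forall_notMem.mp hcon _ ⟨⟨g, rfl⟩, hin⟩
    exact ⟨fun hc => hnotin (Or.inl hc), fun hc => hnotin (Or.inr hc)⟩
  have hfree' : ∀ g : G, g ≠ 1 → g • O ≠ O := fun g hg hO => hg (hfree g O hO)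
  have hinj : Function.Injective (fun g : G => g • O) := by
    intro g w hgw
    simp only at hgw
    have h1 : (w⁻¹ * g) • O = O := by rw [mul_smul, hgw, inv_smul_smul]
    exact (inv_mul_eq_one.mp (hfree _ _ h1)).symm
  have hLne : Nonempty L := by
    have h1 : Nat.card {l : L | incid O l} = t + 1 := h.point_lines O
    have h2 : Nat.card {l : L | incid O l} ≠ 0 := by omega
    obtain ⟨⟨l, _⟩⟩ := (Nat.card_ne_zero.mp h2).1
    exact ⟨l⟩
  by_cases hall : ∀ (p : P) (l : L), incid p l
  · obtain ⟨l⟩ := hLne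
    have hcoll : CollinearPts incid (x • O) O := ⟨hfree' x hx, l, hall _ l, hall _ l⟩
    have := (hmiss 1).1
    simp only [one_mul, inv_one, mul_one] at this
    exact this hcoll
  push_neg at hall
  obtain ⟨p0, l0, hp0l0⟩ := hall
  -- α ≤ s + 1
  have ha_le_s : a ≤ s + 1 := by
    have h1 := h.alpha_count p0 l0 hp0l0
    have h2 : {q : P | incid q l0 ∧ q ≠ p0 ∧ ∃ l', incid p0 l' ∧ incid q l'}
        ⊆ {q : P | incid q l0} := fun q hq => hq.1
    have h3 := Set.ncard_le_ncard h2 (Set.toFinite _)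
    rw [← Nat.card_coe_set_eq, ← Nat.card_coe_set_eq, h1, h.line_points l0] at h3
    omega
  -- α ≤ t + 1
  have ha_le_t : a ≤ t + 1 := by
    have h1 := h.alpha_count p0 l0 hp0l0
    set S : Set P := {q : P | incid q l0 ∧ q ≠ p0 ∧ ∃ l', incid p0 l' ∧ incid q l'} with hS
    set T : Set L := {l : L | incid p0 l} with hT
    have hf : ∀ q : S, ∃ l : L, incid p0 l ∧ incid (q : P) l := fun q => q.2.2.2
    have hfi : Function.Injective (fun q : S => (⟨(hf q).choose, (hf q).choose_spec.1⟩ : T)) := by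
      intro q1 q2 heq
      have hl1 := (hf q1).choose_spec
      have hl2 := (hf q2).choose_spec
      simp only [Subtype.mk.injEq] at heq
      rw [heq] at hl1
      have hne : l0 ≠ (hf q2).choose := fun hEq => hp0l0 (hEq ▸ hl2.1)
      have := h.unique_point l0 ((hf q2).choose) hne ⟨q1.2.1, hl1.2⟩ ⟨q2.2.1, hl2.2⟩
      exact Subtype.ext this
    have h3 : Nat.card S ≤ Nat.card T := Nat.card_le_card_of_injective _ hfi
    rw [h1] at h3
    rw [hT] at h3
    have h4 : Nat.card {l : L | incid p0 l} = t + 1 := h.point_lines p0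
    omega
  by_cases hd0 : (s : ℤ) + t - a + 1 = 0
  · -- degenerate case: s = 0, t = 0, a = 1
    have hstz : s = 0 ∧ t = 0 ∧ a = 1 := by
      have h1 : (a : ℤ) = s + t + 1 := by linarith
      have h2 : a = s + t + 1 := by exact_mod_cast h1
      omega
    obtain ⟨hsz, htz, haz⟩ := hstz
    have h1 := h.alpha_count p0 l0 hp0l0
    rw [haz] at h1
    have h2 : Nat.card {q : P | incid q l0 ∧ q ≠ p0 ∧ ∃ l', incid p0 l' ∧ incid q l'} ≠ 0 := by
      omega
    obtain ⟨⟨q, hql0, hqp0, l', hp0l', hql'⟩⟩ := (Nat.card_ne_zero.mp h2).1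
    have h3 : Nat.card {p : P | incid p l'} = 1 := by rw [h.line_points l', hsz]
    have h4 : ({p0, q} : Set P) ⊆ {p : P | incid p l'} := by
      rintro r (rfl | rfl) <;> simpa
    have h5 := Set.ncard_le_ncard h4 (Set.toFinite _)
    rw [Set.ncard_pair (Ne.symm hqp0), ← Nat.card_coe_set_eq, h3] at h5
    omega
  -- main case
  haveI : Nonempty G := ⟨1⟩
  have hcsm : ∀ (g : G) (p q : P), CollinearPts incid p q ↔ CollinearPts incid (g • p) (g • q) := by
    intro g p q
    constructor
    · rintro ⟨hne, l, h1, h2⟩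
      exact ⟨fun hEq => hne (smul_left_cancel_iff g |>.mp hEq), g • l,
        (hpres g p l).mp h1, (hpres g q l).mp h2⟩
    · rintro ⟨hne, l, h1, h2⟩
      refine ⟨fun hEq => hne (hEq ▸ rfl), g⁻¹ • l, ?_, ?_⟩
      · have := (hpres g⁻¹ (g • p) l).mp h1
        rwa [inv_smul_smul] at this
      · have := (hpres g⁻¹ (g • q) l).mp h2
        rwa [inv_smul_smul] at this
  set D : Set G := {g : G | CollinearPts incid (g • O) O} with hD
  have key : ∀ g w : G, (w⁻¹ * g ∈ D) ↔ CollinearPts incid (g • O) (w • O) := by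
    intro g w
    rw [hD, Set.mem_setOf_eq]
    rw [hcsm w ((w⁻¹ * g) • O) O]
    rw [← mul_smul, mul_inv_cancel_left]
  have hDinv : ∀ g : G, g ∈ D ↔ g⁻¹ ∈ D := by
    intro g
    constructor
    · intro hg
      have h1 : CollinearPts incid (g • O) O := hg
      have h2 := (hcsm g⁻¹ (g • O) O).mp h1
      rw [inv_smul_smul] at h2
      exact collinearPts_symm h2
    · intro hg
      have h1 : CollinearPts incid (g⁻¹ • O) O := hg
      have h2 := (hcsm g (g⁻¹ • O) O).mp h1
      rw [smul_inv_smul] at h2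
      exact collinearPts_symm h2
  have hD1 : (1 : G) ∉ D := by
    intro h1
    have : CollinearPts incid ((1 : G) • O) O := h1
    rw [one_smul] at this
    exact this.1 rfl
  have hcardT : ∀ S : Set P, Nat.card {g : G | (g • O) ∈ S} = Nat.card S := by
    intro S
    exact Nat.card_congr
      (Equiv.subtypeEquiv (Equiv.ofBijective _ ⟨hinj, fun p => htrans O p⟩) (fun g => Iff.rfl))
  have hcardD : Nat.card D = s * (t + 1) := by
    have h1 : D = {g : G | (g • O) ∈ {r : P | CollinearPts incid r O}} := rfl
    rw [h1, hcardT]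
    exact pg_count_nbrs h O
  -- scalar parameters
  set kZ : ℤ := (s : ℤ) * (t + 1) with hkZ
  set muZ : ℤ := (a : ℤ) * (t + 1) with hmuZ
  set lamZ : ℤ := (s : ℤ) - 1 + t * ((a : ℤ) - 1) with hlamZ
  set rrZ : ℤ := (s : ℤ) - a with hrrZ
  set ssZ : ℤ := -(t : ℤ) - 1 with hssZ
  set A : Matrix G G ℂ := Matrix.of fun g w => if w⁻¹ * g ∈ D then 1 else 0 with hA
  set B : Matrix G G ℂ := Matrix.of fun g w => if g = x * w then 1 else 0 with hB
  set J : Matrix G G ℂ := Matrix.of fun _ _ => (1 : ℂ) with hJ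
  have hm1 : 1 ≤ orderOf x := orderOf_pos x
  have hBpow : ∀ j : ℕ, B ^ j = Matrix.of fun g w => if g = x ^ j * w then 1 else 0 := by
    intro j
    induction j with
    | zero =>
      ext g w
      simp [Matrix.one_apply, pow_zero]
    | succ j ih =>
      ext g w
      rw [pow_succ, Matrix.mul_apply, ih]
      simp only [Matrix.of_apply, hB]
      rw [Fintype.sum_eq_single (x * w) (fun b hb => by
        rw [if_neg hb, mul_zero])]
      have hxw : (x : G) ^ j * (x * w) = x ^ (j + 1) * w := by
        rw [← mul_assoc, ← pow_succ]
      simp [hxw]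
  have hBm : B ^ (orderOf x) = 1 := by
    rw [hBpow]
    ext g w
    simp [pow_orderOf_eq_one, Matrix.one_apply]
  have hAJ : A * J = ((kZ : ℤ) : ℂ) • J := by
    ext g w
    rw [Matrix.mul_apply]
    simp only [hA, hJ, Matrix.of_apply, mul_one, Matrix.smul_apply, smul_eq_mul]
    rw [Finset.sum_boole]
    have hc1 : (Finset.univ.filter fun u : G => u⁻¹ * g ∈ D).card = Nat.card D := by
      rw [← natCard_filter]
      exact Nat.card_congr
        (Equiv.subtypeEquiv ((Equiv.inv G).trans (Equiv.mulRight g)) (fun u => Iff.rfl))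
    rw [hc1, hcardD, hkZ]
    push_cast
    ring
  have hJA : J * A = ((kZ : ℤ) : ℂ) • J := by
    ext g w
    rw [Matrix.mul_apply]
    simp only [hA, hJ, Matrix.of_apply, one_mul, Matrix.smul_apply, smul_eq_mul]
    rw [Finset.sum_boole]
    have hc1 : (Finset.univ.filter fun u : G => w⁻¹ * u ∈ D).card = Nat.card D := by
      rw [← natCard_filter]
      exact Nat.card_congr
        (Equiv.subtypeEquiv (Equiv.mulLeft (w⁻¹ : G)) (fun u => Iff.rfl))
    rw [hc1, hcardD, hkZ]
    push_cast
    ring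
  have hA2 : A * A = ((lamZ : ℂ) - muZ) • A + ((kZ : ℂ) - muZ) • 1 + (muZ : ℂ) • J := by
    ext g w
    rw [Matrix.mul_apply]
    have hterm : ∀ u : G, A g u * A u w
        = if (u⁻¹ * g ∈ D ∧ w⁻¹ * u ∈ D) then (1 : ℂ) else 0 := by
      intro u
      simp only [hA, Matrix.of_apply, ite_and, ite_mul, one_mul, zero_mul]
    rw [Finset.sum_congr rfl (fun u _ => hterm u), Finset.sum_boole]
    have hset : ((Finset.univ.filter fun u : G => u⁻¹ * g ∈ D ∧ w⁻¹ * u ∈ D).card : ℂ)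
        = (Nat.card {r : P | CollinearPts incid r (g • O) ∧ CollinearPts incid r (w • O)} : ℂ) := by
      congr 1
      rw [← natCard_filter]
      have hEq : {u : G | u⁻¹ * g ∈ D ∧ w⁻¹ * u ∈ D}
          = {u : G | (u • O) ∈
              {r : P | CollinearPts incid r (g • O) ∧ CollinearPts incid r (w • O)}} := by
        ext u
        simp only [Set.mem_setOf_eq]
        rw [key g u, key u w]
        exact ⟨fun ⟨h1, h2⟩ => ⟨collinearPts_symm h1, h2⟩,
          fun ⟨h1, h2⟩ => ⟨collinearPts_symm h1, h2⟩⟩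
      rw [hEq, hcardT]
    rw [hset]
    simp only [Matrix.add_apply, Matrix.smul_apply, Matrix.one_apply, hA, hJ,
      Matrix.of_apply, smul_eq_mul]
    by_cases hgw : g = w
    · subst hgw
      have h1D : g⁻¹ * g ∉ D := by
        rw [inv_mul_cancel]
        exact hD1
      have hEq2 : {r : P | CollinearPts incid r (g • O) ∧ CollinearPts incid r (g • O)}
          = {r : P | CollinearPts incid r (g • O)} := by
        ext r; simp [and_self]
      rw [hEq2, pg_count_nbrs h (g • O), if_neg h1D, if_pos rfl]
      rw [hkZ, hmuZ, hlamZ]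
      push_cast
      ring
    by_cases hadj : w⁻¹ * g ∈ D
    · have hco : CollinearPts incid (g • O) (w • O) := (key g w).mp hadj
      obtain ⟨hs1, hcnt⟩ := pg_count_common_adj h ha hco
      rw [hcnt, if_pos hadj, if_neg hgw]
      rw [hkZ, hmuZ, hlamZ]
      push_cast [Nat.cast_sub hs1, Nat.cast_sub ha]
      ring
    · have hnco : ¬ CollinearPts incid (g • O) (w • O) := fun hc => hadj ((key g w).mpr hc)
      have hpne : g • O ≠ w • O := fun hEq => hgw (hinj hEq)
      rw [pg_count_common_nonadj h hpne hnco, if_neg hadj, if_neg hgw]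
      rw [hkZ, hmuZ, hlamZ]
      push_cast
      ring
  have hBA : B * A = A * B := by
    ext g w
    rw [Matrix.mul_apply, Matrix.mul_apply]
    rw [Fintype.sum_eq_single (x⁻¹ * g) (fun b hb => by
      have : g ≠ x * b := fun hEq => hb (by rw [hEq]; group)
      simp only [hB, Matrix.of_apply, if_neg this, zero_mul])]
    rw [Fintype.sum_eq_single (x * w) (fun b hb => by
      simp only [hB, Matrix.of_apply, if_neg hb, mul_zero])]
    have h1 : g = x * (x⁻¹ * g) := by group
    simp only [hB, hA, Matrix.of_apply, if_pos h1, if_pos rfl, one_mul, mul_one]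
    have h2 : w⁻¹ * (x⁻¹ * g) = (x * w)⁻¹ * g := by group
    rw [h2]
    simp
  have hBJ : B * J = J := by
    ext g w
    rw [Matrix.mul_apply]
    rw [Fintype.sum_eq_single (x⁻¹ * g) (fun b hb => by
      have : g ≠ x * b := fun hEq => hb (by rw [hEq]; group)
      simp only [hB, hJ, Matrix.of_apply, if_neg this, zero_mul])]
    have h1 : g = x * (x⁻¹ * g) := by group
    simp only [hB, hJ, Matrix.of_apply, if_pos h1, one_mul, mul_one]
  have hJB : J * B = J := by
    ext g w
    rw [Matrix.mul_apply]
    rw [Fintype.sum_eq_single (x * w) (fun b hb => by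
      simp only [hB, hJ, Matrix.of_apply, if_neg hb, mul_zero])]
    simp only [hB, hJ, Matrix.of_apply, eq_self_iff_true, if_true, one_mul]
  have htrB : B.trace = 0 := by
    have : ∀ g : G, B g g = 0 := by
      intro g
      have : g ≠ x * g := by
        intro hEq
        exact hx (right_eq_mul.mp hEq)
      simp [hB, this]
    simp [Matrix.trace, Matrix.diag, this]
  have hnotD : ∀ g : G, g⁻¹ * (x⁻¹ * g) ∉ D := by
    intro g hmem
    have h2 : (g⁻¹ * (x⁻¹ * g))⁻¹ ∈ D := (hDinv _).mp hmem
    have h3 : (g⁻¹ * (x⁻¹ * g))⁻¹ = g⁻¹ * x * g⁻¹⁻¹ := by group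
    rw [h3] at h2
    exact (hmiss g⁻¹).1 h2
  have htrBA : (B * A).trace = 0 := by
    have hdiag : ∀ g : G, (B * A) g g = 0 := by
      intro g
      rw [Matrix.mul_apply]
      rw [Fintype.sum_eq_single (x⁻¹ * g) (fun b hb => by
        have : g ≠ x * b := fun hEq => hb (by rw [hEq]; group)
        simp only [hB, Matrix.of_apply, if_neg this, zero_mul])]
      have h1 : g = x * (x⁻¹ * g) := by group
      simp only [hB, hA, Matrix.of_apply, if_pos h1, one_mul]
      rw [if_neg (hnotD g)]
    simp [Matrix.trace, Matrix.diag, hdiag]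
  have hrsC : (rrZ : ℂ) + ssZ = (lamZ : ℂ) - muZ := by
    rw [hrrZ, hssZ, hlamZ, hmuZ]
    push_cast
    ring
  have hprodC : (rrZ : ℂ) * ssZ = -((kZ : ℂ) - muZ) := by
    rw [hrrZ, hssZ, hkZ, hmuZ]
    push_cast
    ring
  have hdne : rrZ ≠ ssZ := by
    rw [hrrZ, hssZ]
    intro hEq
    apply hd0
    linarith
  have hdvd2 := matrix_obstruction A B kZ lamZ muZ rrZ ssZ (orderOf x) hm1 J hJ
    hBm hA2 hrsC hprodC hAJ hJA hBA hBJ hJB htrB htrBA hdne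
  obtain ⟨z, hz⟩ := hdvd2
  rw [hkZ, hrrZ, hssZ] at hz
  exact hdvd ⟨z, by linear_combination hz⟩
end

section
/- Let Γ be a non-conference (v,k,λ,μ)-strongly regular graph with integer eigenvalues k, ν₂ > ν₃, and let the group G act regularly on the vertices of Γ; fix a vertex α and let Δ = {g ∈ G : α^g ~ α} ∪ {1}, Δᶜ = G \ Δ. If ν₂ − ν₃ divides neither μ − ν₃(ν₂+1) nor v − 2k + λ − ν₃(ν₂+1), then for every nontrivial x ∈ G, both x^G ∩ Δ ≠ ∅ and x^G ∩ Δᶜ ≠ ∅. -/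
set_option maxHeartbeats 1000000

open Polynomial Matrix

lemma charpoly_eval {V : Type*} [Fintype V] [DecidableEq V] {R : Type*} [CommRing R]
    (M : Matrix V V R) (t : R) :
    M.charpoly.eval t = (Matrix.scalar V t - M).det := by
  rw [Matrix.charpoly, eval_det, Matrix.matPolyEquiv_charmatrix]
  simp

lemma eig_pow {V : Type*} [Fintype V] [DecidableEq V] {R : Type*} [CommRing R]
    (C : Matrix V V R) (lam : R) (u : V → R) (hu : C.mulVec u = lam • u) (j : ℕ) :
    (C ^ j).mulVec u = lam ^ j • u := by
  induction j with
  | zero => simp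
  | succ j ih =>
      rw [pow_succ, ← Matrix.mulVec_mulVec, hu, Matrix.mulVec_smul, ih, smul_smul, pow_succ]
      ring_nf

lemma trace_int_multiple {V : Type*} [Fintype V] [DecidableEq V]
    (B : Matrix V V ℚ) (s : ℚ) (hs : s ≠ 0) (n : ℕ) (hn : 1 ≤ n)
    (hB : B ^ (n + 1) = s ^ n • B) :
    ∃ z : ℤ, B.trace = s * z := by
  set f : ℚ →+* ℂ := algebraMap ℚ ℂ with hf
  set C : Matrix V V ℂ := B.map f with hCdef
  have hCB : C = f.mapMatrix B := rfl
  have hC : C ^ (n + 1) = (f s) ^ n • C := by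
    rw [hCB, ← map_pow, hB]
    ext i j
    simp [Matrix.smul_apply, Matrix.map_apply, smul_eq_mul, _root_.map_mul]
  have hfs : f s ≠ 0 := by
    simpa using hs
  -- every root of charpoly of C, divided by f s, is integral over ℤ
  have hroot : ∀ lam ∈ C.charpoly.roots, IsIntegral ℤ (lam / f s) := by
    intro lam hlam
    have h0 : C.charpoly.eval lam = 0 := by
      exact (Polynomial.mem_roots (p := C.charpoly)
        (Matrix.charpoly_monic C).ne_zero).mp hlam
    rw [charpoly_eval] at h0
    obtain ⟨u, hu0, hu⟩ := (Matrix.exists_mulVec_eq_zero_iff).mpr h0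
    have hev : C.mulVec u = lam • u := by
      have : (Matrix.scalar V lam).mulVec u - C.mulVec u = 0 := by
        rw [← Matrix.sub_mulVec]; exact hu
      have h2 : (Matrix.scalar V lam).mulVec u = lam • u := by
        simp [Matrix.scalar, Matrix.mulVec_smul]
        ext i
        simp [Matrix.mulVec, dotProduct, Matrix.diagonal_apply, Finset.sum_ite_eq,
          Pi.smul_apply, smul_eq_mul]
      rw [h2] at this
      linear_combination (norm := module) -this
    have hpow : lam ^ (n+1) = (f s) ^ n * lam := by
      have e1 := eig_pow C lam u hev (n+1)
      rw [hC] at e1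
      have e2 : ((f s) ^ n • C).mulVec u = ((f s) ^ n * lam) • u := by
        rw [Matrix.smul_mulVec, hev, smul_smul]
      rw [e2] at e1
      obtain ⟨i, hi⟩ := Function.ne_iff.mp hu0
      have := congrFun e1 i
      simp only [Pi.smul_apply, smul_eq_mul] at this
      exact (mul_right_cancel₀ hi this).symm
    -- (lam / f s) is a root of X^(n+1) - X
    have hdeg : (X : ℤ[X]).degree < ((n + 1 : ℕ) : WithBot ℕ) := by
      refine lt_of_le_of_lt Polynomial.degree_X_le ?_
      simp only [Nat.cast_withBot]
      simpa using WithBot.coe_lt_coe.mpr (Nat.lt_succ_of_le hn)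
    refine ⟨X ^ (n + 1) - X, Polynomial.monic_X_pow_sub hdeg, ?_⟩
    · have hls : (lam / f s) ^ (n + 1) = lam / f s := by
        rw [div_pow, hpow, pow_succ]
        exact mul_div_mul_left lam (f s) (pow_ne_zero n hfs)
      simp only [eval₂_sub, eval₂_X_pow, eval₂_X]
      exact sub_eq_zero_of_eq hls
  have htr : C.trace = C.charpoly.roots.sum := Matrix.trace_eq_sum_roots_charpoly C
  have htrB : C.trace = f B.trace := by
    simp [Matrix.trace, hCdef, Matrix.map_apply, Matrix.diag, map_sum]
  have hsum : (C.charpoly.roots.map (fun lam => lam / f s)).sum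
      = C.charpoly.roots.sum / f s := by
    simp only [div_eq_mul_inv]
    rw [Multiset.sum_map_mul_right, Multiset.map_id']
  have hint : IsIntegral ℤ (f B.trace / f s) := by
    rw [← htrB, htr, ← hsum]
    have : (C.charpoly.roots.map (fun lam => lam / f s)).sum ∈ integralClosure ℤ ℂ := by
      apply Subalgebra.multiset_sum_mem
      intro y hy
      obtain ⟨lam, hlam, rfl⟩ := Multiset.mem_map.mp hy
      exact (mem_integralClosure_iff ℤ ℂ).mpr (hroot lam hlam)
    exact (mem_integralClosure_iff ℤ ℂ).mp this
  have hq : IsIntegral ℤ (B.trace / s) := by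
    have hmap : f (B.trace / s) = f B.trace / f s := map_div₀ f _ _
    rw [← hmap] at hint
    exact (isIntegral_algebraMap_iff
      (RingHom.injective (algebraMap ℚ ℂ))).mp hint
  obtain ⟨z, hz⟩ := IsIntegrallyClosed.isIntegral_iff.mp hq
  refine ⟨z, ?_⟩
  have : (z : ℚ) = B.trace / s := hz
  field_simp at this
  linarith [this]

/-- Let `Γ` be a non-conference `(v,k,λ,μ)`-strongly regular graph with integer
eigenvalues `k, ν₂ > ν₃`, and let `G` act regularly on the vertices of `Γ`; fix a
vertex `α` and let `Δ = {g : Γ.Adj (g • α) α} ∪ {1}`, `Δᶜ = G \ Δ`.  If `ν₂ - ν₃`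
divides neither `μ - ν₃(ν₂+1)` nor `v - 2k + λ - ν₃(ν₂+1)`, then for every
nontrivial `x ∈ G`, both `x^G ∩ Δ ≠ ∅` and `x^G ∩ Δᶜ ≠ ∅`. -/
theorem regular_action_both_nonempty {V G : Type*} [Fintype V] [Group G] [Fintype G]
    (Γ : SimpleGraph V) [DecidableRel Γ.Adj] [MulAction G V]
    (v k l m : ℕ) (ν₂ ν₃ : ℤ)
    (h : Γ.IsSRGWith v k l m)
    (hconf : ¬ (2 * (k : ℤ) = (v : ℤ) - 1 ∧ 4 * (l : ℤ) = (v : ℤ) - 5 ∧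
      4 * (m : ℤ) = (v : ℤ) - 1))
    (hν₂ : (ν₂ : ℝ) = ((l : ℝ) - m + Real.sqrt (((l : ℝ) - m) ^ 2 + 4 * ((k : ℝ) - m))) / 2)
    (hν₃ : (ν₃ : ℝ) = ((l : ℝ) - m - Real.sqrt (((l : ℝ) - m) ^ 2 + 4 * ((k : ℝ) - m))) / 2)
    (h23 : ν₂ > ν₃)
    (hd1 : ¬ (ν₂ - ν₃ ∣ (m : ℤ) - ν₃ * (ν₂ + 1)))
    (hd2 : ¬ (ν₂ - ν₃ ∣ (v : ℤ) - 2 * k + l - ν₃ * (ν₂ + 1)))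
    (hpres : ∀ (g : G) (a b : V), Γ.Adj a b ↔ Γ.Adj (g • a) (g • b))
    (htrans : ∀ a b : V, ∃ g : G, g • a = b)
    (hfree : ∀ (g : G) (a : V), g • a = a → g = 1)
    (α : V) (x : G) (hx : x ≠ 1) :
    ({y : G | ∃ g : G, g * x * g⁻¹ = y} ∩
        ({g : G | Γ.Adj (g • α) α} ∪ {1})).Nonempty ∧
    ({y : G | ∃ g : G, g * x * g⁻¹ = y} ∩
        (({g : G | Γ.Adj (g • α) α} ∪ {1}) : Set G)ᶜ).Nonempty := by
  classical
  have hcardV : Fintype.card V = v := h.card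
  have hvpos : 0 < v := hcardV ▸ Fintype.card_pos_iff.mpr ⟨α⟩
  have hvQ : (v : ℚ) ≠ 0 := Nat.cast_ne_zero.mpr hvpos.ne'
  -- eigenvalue relations
  have hsumR : (ν₂ : ℝ) + ν₃ = (l : ℝ) - m := by rw [hν₂, hν₃]; ring
  have hdiffR : (ν₂ : ℝ) - ν₃ =
      Real.sqrt (((l : ℝ) - m) ^ 2 + 4 * ((k : ℝ) - m)) := by rw [hν₂, hν₃]; ring
  have hdpos : (0 : ℝ) < (ν₂ : ℝ) - ν₃ := by
    have : (ν₃ : ℝ) < ν₂ := by exact_mod_cast h23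
    linarith
  have hradpos : (0 : ℝ) < ((l : ℝ) - m) ^ 2 + 4 * ((k : ℝ) - m) :=
    Real.sqrt_pos.mp (hdiffR ▸ hdpos)
  have hsq : ((ν₂ : ℝ) - ν₃) ^ 2 = ((l : ℝ) - m) ^ 2 + 4 * ((k : ℝ) - m) := by
    rw [hdiffR]; exact Real.sq_sqrt hradpos.le
  have hprodR : (ν₂ : ℝ) * ν₃ = (m : ℝ) - k := by nlinarith [hsumR, hsq]
  have hsum : ν₂ + ν₃ = (l : ℤ) - m := by exact_mod_cast hsumR
  have hprod : ν₂ * ν₃ = (m : ℤ) - k := by exact_mod_cast hprodR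
  -- matrices
  set A : Matrix V V ℚ := Γ.adjMatrix ℚ with hAdef
  set J : Matrix V V ℚ := Matrix.of (fun _ _ => (1 : ℚ)) with hJdef
  set a : ℚ := (ν₃ : ℚ) with hadef
  set sq : ℚ := ((ν₂ : ℚ) - (ν₃ : ℚ)) with hsqdef
  set c : ℚ := ((k : ℚ) - a) / v with hcdef
  have hsqne : sq ≠ 0 := by
    have : (ν₃ : ℚ) < (ν₂ : ℚ) := by exact_mod_cast h23
    simp only [hsqdef]; linarith
  have hJc : Γᶜ.adjMatrix ℚ = J - 1 - A := by
    ext i j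
    by_cases hij : i = j
    · subst hij
      simp [hJdef, hAdef, Matrix.one_apply]
    · by_cases ha : Γ.Adj i j <;>
        simp [hJdef, hAdef, Matrix.one_apply, hij, ha, Ne.symm hij]
  have hA2 : A * A = (k : ℚ) • 1 + (l : ℚ) • A + (m : ℚ) • (J - 1 - A) := by
    have hm := h.matrix_eq (α := ℚ)
    rw [pow_two] at hm
    rw [hAdef, hm, hJc]
    rw [Nat.cast_smul_eq_nsmul ℚ k, Nat.cast_smul_eq_nsmul ℚ l, Nat.cast_smul_eq_nsmul ℚ m]
  have hAJ : A * J = (k : ℚ) • J := by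
    ext i j
    simp only [Matrix.mul_apply, hAdef, hJdef, SimpleGraph.adjMatrix_apply, Matrix.of_apply,
      mul_one, Matrix.smul_apply, smul_eq_mul]
    rw [Finset.sum_boole]
    have : Finset.univ.filter (fun t => Γ.Adj i t) = Γ.neighborFinset i := by
      ext t; simp [SimpleGraph.mem_neighborFinset]
    rw [this]
    have := h.regular i
    rw [SimpleGraph.degree] at this
    simp [this]
  have hJA : J * A = (k : ℚ) • J := by
    ext i j
    simp only [Matrix.mul_apply, hAdef, hJdef, SimpleGraph.adjMatrix_apply, Matrix.of_apply,
      one_mul, Matrix.smul_apply, smul_eq_mul]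
    rw [Finset.sum_boole]
    have : Finset.univ.filter (fun t => Γ.Adj t j) = Γ.neighborFinset j := by
      ext t; simp [SimpleGraph.mem_neighborFinset, Γ.adj_comm]
    rw [this]
    have := h.regular j
    rw [SimpleGraph.degree] at this
    simp [this]
  have hJJ : J * J = (v : ℚ) • J := by
    ext i j
    simp [Matrix.mul_apply, hJdef, hcardV]
  -- parameter identity
  have hparam : (k : ℚ) ^ 2 = k + l * k + m * ((v : ℚ) - 1 - k) := by
    have e1 : (A * A) * J = ((k : ℚ) ^ 2) • J := by
      rw [Matrix.mul_assoc, hAJ, Matrix.mul_smul, hAJ, smul_smul, pow_two]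
    have e2 : (A * A) * J = ((k : ℚ) + l * k + m * ((v : ℚ) - 1 - k)) • J := by
      rw [hA2]
      rw [Matrix.add_mul, Matrix.add_mul, Matrix.smul_mul, Matrix.smul_mul, Matrix.smul_mul,
        Matrix.sub_mul, Matrix.sub_mul, Matrix.one_mul, hAJ, hJJ]
      module
    have := e1.symm.trans e2
    have h3 := congrFun (congrFun this α) α
    simpa [hJdef, Matrix.smul_apply] using h3
  -- the idempotent-like matrix
  set M : Matrix V V ℚ := A - a • (1 : Matrix V V ℚ) - c • J with hMdef
  have expand : M * M = ((l : ℚ) - m - 2 * a) • A + ((k : ℚ) - m + a ^ 2) • (1 : Matrix V V ℚ)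
      + ((m : ℚ) - 2 * c * k + 2 * a * c + c ^ 2 * v) • J := by
    rw [hMdef]
    simp only [sub_mul, mul_sub, smul_mul_assoc, mul_smul_comm, Matrix.one_mul, Matrix.mul_one,
      hA2, hAJ, hJA, hJJ]
    module
  have cA : (l : ℚ) - m - 2 * a = sq := by
    have : ((ν₂ : ℚ) + ν₃) = (l : ℚ) - m := by exact_mod_cast hsum
    rw [hsqdef, hadef]; linarith
  have cI : (k : ℚ) - m + a ^ 2 = -(sq * a) := by
    have : ((ν₂ : ℚ) * ν₃) = (m : ℚ) - k := by exact_mod_cast hprod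
    rw [hsqdef, hadef]; nlinarith [this]
  have cJ : (m : ℚ) - 2 * c * k + 2 * a * c + c ^ 2 * v = -(sq * c) := by
    have hp : ((ν₂ : ℚ) * ν₃) = (m : ℚ) - k := by exact_mod_cast hprod
    have hsu : ((ν₂ : ℚ) + ν₃) = (l : ℚ) - m := by exact_mod_cast hsum
    have hkk : ((k : ℚ) - ν₂) * ((k : ℚ) - ν₃) = (m : ℚ) * v := by
      linear_combination hparam - (k : ℚ) * hsu + hp
    have hcv : c * (v : ℚ) = (k : ℚ) - (ν₃ : ℚ) := by
      rw [hcdef, hadef]; field_simp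
    rw [hsqdef, hadef]
    apply mul_right_cancel₀ hvQ
    linear_combination (c * (v : ℚ) - ((k : ℚ) - (ν₂ : ℚ))) * hcv - hkk
  have hMM : M * M = sq • M := by
    rw [expand, cA, cI, cJ, hMdef]
    module
  -- the permutation matrix
  set σ : Equiv.Perm V := MulAction.toPerm x with hσdef
  set P : Matrix V V ℚ := σ.toPEquiv.toMatrix with hPdef
  have hPmul : ∀ N : Matrix V V ℚ, P * N = N.submatrix σ id :=
    fun N => PEquiv.toMatrix_toPEquiv_mul σ N
  have hmulP : ∀ N : Matrix V V ℚ, N * P = N.submatrix id σ.symm :=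
    fun N => PEquiv.mul_toMatrix_toPEquiv N σ
  have hσap : ∀ i : V, σ i = x • i := fun i => rfl
  have hPA : P * A = A * P := by
    rw [hPmul, hmulP]
    ext i j
    simp only [Matrix.submatrix_apply, id_eq, hAdef, SimpleGraph.adjMatrix_apply]
    have hiff : Γ.Adj (σ i) j ↔ Γ.Adj i (σ.symm j) := by
      have h1 := hpres x⁻¹ (σ i) j
      have e1 : x⁻¹ • (σ i) = i := by rw [hσap, smul_smul, inv_mul_cancel, one_smul]
      have e2 : x⁻¹ • j = σ.symm j := by
        apply σ.injective
        rw [Equiv.apply_symm_apply, hσap, smul_smul, mul_inv_cancel, one_smul]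
      rw [e1, e2] at h1
      exact h1
    simp [hiff]
  have hPJ : P * J = J := by
    rw [hPmul]; ext i j; rfl
  have hJP : J * P = J := by
    rw [hmulP]; ext i j; rfl
  have hPM : P * M = M * P := by
    rw [hMdef]
    simp only [mul_sub, sub_mul, mul_smul_comm, smul_mul_assoc, Matrix.mul_one, Matrix.one_mul,
      hPA, hPJ, hJP]
  -- powers of P
  have hPpowj : ∀ j : ℕ, P ^ j = (MulAction.toPerm (x ^ j) : Equiv.Perm V).toPEquiv.toMatrix := by
    intro j
    induction j with
    | zero =>
        have : (MulAction.toPerm ((x : G) ^ 0) : Equiv.Perm V) = Equiv.refl V := by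
          ext i; simp [MulAction.toPerm]
        rw [pow_zero, this, Equiv.toPEquiv_refl, PEquiv.toMatrix_refl]
    | succ j ih =>
        have htr : (MulAction.toPerm (x ^ j) : Equiv.Perm V).trans σ
            = MulAction.toPerm (x ^ (j + 1)) := by
          ext i
          simp only [Equiv.trans_apply, hσap]
          show x • ((x ^ j) • i) = (x ^ (j+1)) • i
          rw [smul_smul, ← pow_succ']
        rw [pow_succ, ih, hPdef, ← PEquiv.toMatrix_trans, ← Equiv.toPEquiv_trans, htr]
  set n : ℕ := Fintype.card G with hndef
  have hn1 : 1 ≤ n := Fintype.card_pos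
  have hPn : P ^ n = 1 := by
    rw [hPpowj n, pow_card_eq_one]
    have : (MulAction.toPerm (1 : G) : Equiv.Perm V) = Equiv.refl V := by
      ext i; simp [MulAction.toPerm]
    rw [this, Equiv.toPEquiv_refl, PEquiv.toMatrix_refl]
  -- powers of M
  have hMpowj : ∀ j : ℕ, M ^ (j + 1) = sq ^ j • M := by
    intro j
    induction j with
    | zero => simp
    | succ j ih =>
        rw [pow_succ, ih, Matrix.smul_mul, hMM, smul_smul, ← pow_succ]
  set B : Matrix V V ℚ := P * M with hBdef
  have hBpow : B ^ (n + 1) = sq ^ n • B := by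
    have hc : Commute P M := hPM
    rw [hBdef, hc.mul_pow, hMpowj n, pow_succ, hPn, one_mul, Matrix.mul_smul]
  obtain ⟨z, hz⟩ := trace_int_multiple B sq hsqne n hn1 hBpow
  -- traces
  have htrP : Matrix.trace P = 0 := by
    rw [Matrix.trace]
    apply Finset.sum_eq_zero
    intro i _
    have : σ i ≠ i := by
      rw [hσap]
      intro hfix
      exact hx (hfree x i hfix)
    simp [Matrix.diag, hPdef, PEquiv.toMatrix_apply, Equiv.toPEquiv_apply,
      Option.mem_some_iff, this]
  have htrPJ : Matrix.trace (P * J) = v := by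
    rw [hPJ, Matrix.trace]
    simp [Matrix.diag, hJdef, hcardV]
  have htrPA : Matrix.trace (P * A) =
      ∑ i : V, (if Γ.Adj (x • i) i then (1 : ℚ) else 0) := by
    rw [hPmul, Matrix.trace]
    apply Finset.sum_congr rfl
    intro i _
    simp [Matrix.diag, Matrix.submatrix_apply, hAdef, hσap]
  have htrB : Matrix.trace B = Matrix.trace (P * A) - ((k : ℚ) - a) := by
    have expB : B = P * A - a • P - c • (P * J) := by
      rw [hBdef, hMdef]
      simp only [mul_sub, mul_smul_comm, Matrix.mul_one]
    rw [expB, Matrix.trace_sub, Matrix.trace_sub, Matrix.trace_smul, Matrix.trace_smul,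
      htrP, htrPJ]
    have hcv2 : c * v = (k : ℚ) - a := by
      rw [hcdef]; field_simp
    simp only [smul_eq_mul, mul_zero, sub_zero]
    linarith [hcv2]
  -- the two parts
  constructor
  · by_contra hcon
    have hnone : ∀ g : G, ¬ Γ.Adj ((g * x * g⁻¹) • α) α := by
      intro g hadj
      exact hcon ⟨g * x * g⁻¹, ⟨g, rfl⟩, Or.inl hadj⟩
    have hallnot : ∀ β : V, ¬ Γ.Adj (x • β) β := by
      intro β hadj
      obtain ⟨g, hg⟩ := htrans β α
      apply hnone g
      have e1 : (g * x * g⁻¹) • α = g • (x • β) := by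
        rw [mul_smul, mul_smul]
        congr 1
        congr 1
        rw [← hg, inv_smul_smul]
      rw [e1, ← hg]
      exact (hpres g (x • β) β).mp hadj
    have htr0 : Matrix.trace (P * A) = 0 := by
      rw [htrPA]
      apply Finset.sum_eq_zero
      intro i _
      simp [hallnot i]
    rw [htrB, htr0] at hz
    -- 0 - (k - a) = sq * z
    have hZ : (k : ℤ) - ν₃ = (ν₂ - ν₃) * (-z) := by
      have : ((k : ℚ) - (ν₃ : ℚ)) = ((ν₂ : ℚ) - (ν₃ : ℚ)) * (-z) := by
        rw [hsqdef, hadef] at hz; linarith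
      exact_mod_cast this
    apply hd1
    refine ⟨-z, ?_⟩
    have : (m : ℤ) - ν₃ * (ν₂ + 1) = (k : ℤ) - ν₃ := by linear_combination -hprod
    rw [this, hZ]
  · by_contra hcon
    have hall : ∀ g : G, Γ.Adj ((g * x * g⁻¹) • α) α := by
      intro g
      have hmem : (g * x * g⁻¹) ∈ ({g : G | Γ.Adj (g • α) α} ∪ {1} : Set G) := by
        by_contra hnm
        exact hcon ⟨g * x * g⁻¹, ⟨g, rfl⟩, hnm⟩
      rcases hmem with hadj | hone
      · exact hadj
      · exfalso
        apply hx
        have h1 : g * x * g⁻¹ = 1 := hone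
        have h2 := congrArg (fun y => g⁻¹ * y * g) h1
        simpa [mul_assoc] using h2
    have hallβ : ∀ β : V, Γ.Adj (x • β) β := by
      intro β
      obtain ⟨g, hg⟩ := htrans β α
      have e1 : (g * x * g⁻¹) • α = g • (x • β) := by
        rw [mul_smul, mul_smul]
        congr 1
        congr 1
        rw [← hg, inv_smul_smul]
      have := hall g
      rw [e1, ← hg] at this
      exact (hpres g (x • β) β).mpr this
    have htrv : Matrix.trace (P * A) = v := by
      rw [htrPA]
      rw [Finset.sum_congr rfl (fun i _ => if_pos (hallβ i))]
      simp [hcardV]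
    rw [htrB, htrv] at hz
    have hZ : (v : ℤ) - k + ν₃ = (ν₂ - ν₃) * z := by
      have : ((v : ℚ) - k + ν₃) = ((ν₂ : ℚ) - (ν₃ : ℚ)) * z := by
        rw [hsqdef, hadef] at hz; linarith
      exact_mod_cast this
    apply hd2
    refine ⟨z + 1, ?_⟩
    have : (v : ℤ) - 2 * k + l - ν₃ * (ν₂ + 1) = ((v : ℤ) - k + ν₃) + (ν₂ - ν₃) := by
      linear_combination -hsum - hprod
    rw [this, hZ]
    ring
end
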